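/- arXiv:2104.03690 — 4 statements merged into one kernel-verified Lean document; each statement's English description precedes it below -/
import Mathlib

section
/- Let Σ be a finite alphabet and L a timed language over Σ. For all finite subsets S, S', S'' ⊆ ℝ≥0, if L is S-invariant and S'-invariant and fract(S'') = fract(S) ∩ fract(S'), then L is S''-invariant. -/
/-- A timed automorphism: a strictly monotone bijection `ℝ → ℝ`
preserving integer differences, i.e. `f (t + 1) = f t + 1`. -/
def IsTimedAut (f : ℝ → ℝ) : Prop :=
  Function.Bijective f ∧ StrictMono f ∧ ∀ t : ℝ, f (t + 1) = f t + 1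

/-- A timed word over alphabet `Γ`: a finite sequence of letters with
nonnegative, monotonically nondecreasing timestamps. -/
def IsTimedWord {Γ : Type*} (w : List (Γ × ℝ)) : Prop :=
  (∀ p ∈ w, 0 ≤ p.2) ∧ w.Chain' (fun p q => p.2 ≤ q.2)

/-- Pointwise action of a function `f : ℝ → ℝ` on a timed word. -/
def actWord {Γ : Type*} (f : ℝ → ℝ) (w : List (Γ × ℝ)) : List (Γ × ℝ) :=
  w.map (fun p => (p.1, f p.2))

/-- A timed language `L` is `S`-invariant if for every `S`-timed automorphism
`π` and every timed word `w` such that `π(w)` is again a timed word,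
`w ∈ L ↔ π(w) ∈ L`. -/
def SInvariant {Γ : Type*} (S : Set ℝ) (L : Set (List (Γ × ℝ))) : Prop :=
  ∀ f : ℝ → ℝ, IsTimedAut f → (∀ t ∈ S, f t = t) →
    ∀ w : List (Γ × ℝ), IsTimedWord w → IsTimedWord (actWord f w) →
      (w ∈ L ↔ actWord f w ∈ L)

open Function Filter

namespace TA

lemma aut_int {f : ℝ → ℝ} (hf : IsTimedAut f) : ∀ (k : ℤ) (x : ℝ), f (x + k) = f x + k := by
  have h1 := hf.2.2
  intro k
  induction k using Int.induction_on with
  | zero => simp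
  | succ n ih =>
      intro x
      have : x + ((n : ℤ) + 1 : ℤ) = (x + (n:ℤ)) + 1 := by push_cast; ring
      rw [this, h1, ih]; push_cast; ring
  | pred n ih =>
      intro x
      have h2 : x + (-(n : ℤ) - 1 : ℤ) = (x - 1) + (-(n):ℤ) := by push_cast; ring
      have h3 : f x = f (x - 1) + 1 := by
        have := h1 (x - 1); rw [sub_add_cancel] at this; rw [this]
      rw [h2, ih, h3]; push_cast; ring

lemma aut_fract {f : ℝ → ℝ} (hf : IsTimedAut f) (x : ℝ) :
    f x = f (Int.fract x) + ⌊x⌋ := by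
  conv_lhs => rw [← Int.fract_add_floor x]
  exact aut_int hf ⌊x⌋ (Int.fract x)

lemma aut_bound {f : ℝ → ℝ} (hf : IsTimedAut f) (x : ℝ) :
    |f x - x| < |f 0| + 1 := by
  have h := aut_fract hf x
  have hy0 : (0:ℝ) ≤ Int.fract x := Int.fract_nonneg x
  have hy1 : Int.fract x < 1 := Int.fract_lt_one x
  have hlow : f 0 ≤ f (Int.fract x) := hf.2.1.monotone hy0
  have hhigh : f (Int.fract x) < f 0 + 1 := by
    have : f (Int.fract x) < f 1 := hf.2.1 hy1
    have h1 : f 1 = f 0 + 1 := by have := hf.2.2 0; simpa using this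
    linarith
  have hfr : f x - x = f (Int.fract x) - Int.fract x := by
    rw [h]; have := Int.fract_add_floor x; linarith
  rw [hfr]
  rw [abs_lt]
  constructor
  · have := neg_abs_le (f 0); nlinarith [abs_nonneg (f 0)]
  · have := le_abs_self (f 0); nlinarith

lemma aut_comp {f g : ℝ → ℝ} (hf : IsTimedAut f) (hg : IsTimedAut g) :
    IsTimedAut (f ∘ g) :=
  ⟨hf.1.comp hg.1, hf.2.1.comp hg.2.1, fun t => by simp [comp, hg.2.2, hf.2.2]⟩

lemma aut_inv {f : ℝ → ℝ} (hf : IsTimedAut f) : IsTimedAut (invFun f) := by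
  have hli : LeftInverse (invFun f) f := leftInverse_invFun hf.1.1
  have hri : Function.RightInverse (invFun f) f := rightInverse_invFun hf.1.2
  refine ⟨⟨hri.injective, hli.surjective⟩, ?_, ?_⟩
  · intro a b hab
    by_contra h
    push_neg at h
    rcases lt_or_eq_of_le h with h' | h'
    · have := hf.2.1 h'
      rw [hri a, hri b] at this; linarith
    · rw [← hri a, ← hri b, h'] at hab; exact lt_irrefl _ hab
  · intro t
    apply hf.1.1
    rw [hri, hf.2.2, hri]

lemma aut_cont {f : ℝ → ℝ} (hf : IsTimedAut f) : Continuous f :=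
  ((StrictMono.orderIsoOfSurjective f hf.2.1 hf.1.2).toHomeomorph).continuous

/-- the straight-line interpolation between the identity and `f` -/
noncomputable def Fmix (f : ℝ → ℝ) (θ : ℝ) : ℝ → ℝ := fun t => (1 - θ) * t + θ * f t

lemma Fmix_zero (f : ℝ → ℝ) : Fmix f 0 = id := by
  funext t; simp [Fmix]

lemma Fmix_one (f : ℝ → ℝ) : Fmix f 1 = f := by
  funext t; simp [Fmix]

lemma Fmix_mono {f : ℝ → ℝ} (hf : IsTimedAut f) {θ : ℝ} (h0 : 0 ≤ θ) (h1 : θ ≤ 1) :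
    StrictMono (Fmix f θ) := by
  intro a b hab
  have hm : f a < f b := hf.2.1 hab
  simp only [Fmix]
  rcases eq_or_lt_of_le h0 with h | h
  · nlinarith
  · nlinarith

lemma Fmix_int {f : ℝ → ℝ} (hf : IsTimedAut f) (θ : ℝ) (k : ℤ) (x : ℝ) :
    Fmix f θ (x + k) = Fmix f θ x + k := by
  simp only [Fmix, aut_int hf k x]; ring

lemma Fmix_add_one {f : ℝ → ℝ} (hf : IsTimedAut f) (θ : ℝ) (x : ℝ) :
    Fmix f θ (x + 1) = Fmix f θ x + 1 := by
  have := Fmix_int hf θ 1 x; push_cast at this; simpa using this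

lemma Fmix_between {f : ℝ → ℝ} {θ : ℝ} (h0 : 0 ≤ θ) (h1 : θ ≤ 1) (t : ℝ) :
    min t (f t) ≤ Fmix f θ t ∧ Fmix f θ t ≤ max t (f t) := by
  constructor
  · rcases le_total t (f t) with h | h
    · simp only [Fmix, min_eq_left h]; nlinarith
    · simp only [Fmix, min_eq_right h]; nlinarith
  · rcases le_total t (f t) with h | h
    · simp only [Fmix, max_eq_right h]; nlinarith
    · simp only [Fmix, max_eq_left h]; nlinarith

lemma Fmix_sub {f : ℝ → ℝ} (θ₁ θ₂ x : ℝ) :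
    Fmix f θ₂ x - Fmix f θ₁ x = (θ₂ - θ₁) * (f x - x) := by
  simp only [Fmix]; ring

lemma Fmix_aut {f : ℝ → ℝ} (hf : IsTimedAut f) {θ : ℝ} (h0 : 0 ≤ θ) (h1 : θ ≤ 1) :
    IsTimedAut (Fmix f θ) := by
  have hmono := Fmix_mono hf h0 h1
  have hcont : Continuous (Fmix f θ) := by
    have := aut_cont hf
    unfold Fmix
    fun_prop
  have hsurj : Surjective (Fmix f θ) := by
    apply Continuous.surjective hcont
    · apply tendsto_atTop_mono (f := fun t : ℝ => t + min 0 (f 0 - 1))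
      · intro t
        have h1' : min t (f t) ≤ Fmix f θ t := (Fmix_between h0 h1 t).1
        have h2' : f 0 + ⌊t⌋ ≤ f t := by
          rw [aut_fract hf t]
          have : f 0 ≤ f (Int.fract t) := hf.2.1.monotone (Int.fract_nonneg t)
          linarith
        have h3' : (⌊t⌋ : ℝ) > t - 1 := by
          have := Int.lt_floor_add_one t; linarith
        rcases le_total 0 (f 0 - 1) with h | h
        · have : t + min 0 (f 0 - 1) = t := by simp [min_eq_left h]
          rw [this]
          calc t = min t t := (min_self t).symm
          _ ≤ min t (f t) := by
              apply min_le_min le_rfl; nlinarith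
          _ ≤ _ := h1'
        · have : t + min 0 (f 0 - 1) = t + (f 0 - 1) := by rw [min_eq_right h]
          rw [this]
          calc t + (f 0 - 1) ≤ min t (f t) := by
                apply le_min <;> nlinarith
          _ ≤ _ := h1'
      · exact tendsto_atTop_add_const_right _ _ tendsto_id
    · apply tendsto_atBot_mono (f := fun t : ℝ => t + max 0 (f 0 + 1))
      · intro t
        have h1' : Fmix f θ t ≤ max t (f t) := (Fmix_between h0 h1 t).2
        have h2' : f t ≤ f 0 + 1 + ⌊t⌋ := by
          rw [aut_fract hf t]
          have : f (Int.fract t) < f 1 := hf.2.1 (Int.fract_lt_one t)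
          have h1'' : f 1 = f 0 + 1 := by have := hf.2.2 0; simpa using this
          linarith
        have h3' : (⌊t⌋ : ℝ) ≤ t := Int.floor_le t
        rcases le_total (f 0 + 1) 0 with h | h
        · have : t + max 0 (f 0 + 1) = t := by simp [max_eq_left h]
          rw [this]
          refine h1'.trans (max_le le_rfl (by nlinarith))
        · have : t + max 0 (f 0 + 1) = t + (f 0 + 1) := by rw [max_eq_right h]
          rw [this]
          refine h1'.trans (max_le (by nlinarith) (by nlinarith))
      · exact tendsto_atBot_add_const_right _ _ tendsto_id
  exact ⟨⟨hmono.injective, hsurj⟩, hmono, fun t => Fmix_add_one hf θ t⟩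



section Interp

variable (P : Finset ℝ) (hP : P.Nonempty) (q : ℝ → ℝ)

noncomputable def lpt (t : ℝ) : ℝ :=
  (P.image (fun c => c + ((⌊t - c⌋ : ℤ) : ℝ))).max' (hP.image _)

noncomputable def rpt (t : ℝ) : ℝ :=
  (P.image (fun c => c + ((⌊t - c⌋ : ℤ) : ℝ) + 1)).min' (hP.image _)

noncomputable def Qe (x : ℝ) : ℝ := q (Int.fract x) + ⌊x⌋

noncomputable def interp (t : ℝ) : ℝ :=
  Qe q (lpt P hP t) +
    (t - lpt P hP t) * (Qe q (rpt P hP t) - Qe q (lpt P hP t)) / (rpt P hP t - lpt P hP t)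

lemma fract_self_of_mem (hP01 : ∀ p ∈ P, p ∈ Set.Ico (0:ℝ) 1) {c : ℝ} (hc : c ∈ P) :
    Int.fract c = c :=
  Int.fract_eq_self.2 (hP01 c hc)

lemma fract_shift_mem (hP01 : ∀ p ∈ P, p ∈ Set.Ico (0:ℝ) 1) {c : ℝ} (hc : c ∈ P) (k : ℤ) :
    Int.fract (c + k) ∈ P := by
  rw [Int.fract_add_intCast, fract_self_of_mem P hP01 hc]; exact hc

lemma lpt_mem (hP01 : ∀ p ∈ P, p ∈ Set.Ico (0:ℝ) 1) (t : ℝ) : Int.fract (lpt P hP t) ∈ P := by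
  have h := Finset.max'_mem _ (hP.image (fun c => c + ((⌊t - c⌋ : ℤ) : ℝ)))
  rw [Finset.mem_image] at h
  obtain ⟨c, hc, hceq⟩ := h
  rw [lpt, ← hceq]
  exact fract_shift_mem P hP01 hc _

lemma rpt_mem (hP01 : ∀ p ∈ P, p ∈ Set.Ico (0:ℝ) 1) (t : ℝ) : Int.fract (rpt P hP t) ∈ P := by
  have h := Finset.min'_mem _ (hP.image (fun c => c + ((⌊t - c⌋ : ℤ) : ℝ) + 1))
  rw [Finset.mem_image] at h
  obtain ⟨c, hc, hceq⟩ := h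
  rw [rpt, ← hceq]
  have : c + ((⌊t - c⌋ : ℤ) : ℝ) + 1 = c + ((⌊t - c⌋ + 1 : ℤ) : ℝ) := by push_cast; ring
  rw [this]
  exact fract_shift_mem P hP01 hc _

lemma lpt_le (t : ℝ) : lpt P hP t ≤ t := by
  apply Finset.max'_le
  intro y hy
  rw [Finset.mem_image] at hy
  obtain ⟨c, _, rfl⟩ := hy
  have := Int.floor_le (t - c)
  linarith

lemma lt_rpt (t : ℝ) : t < rpt P hP t := by
  rw [rpt, Finset.lt_min'_iff]
  intro y hy
  rw [Finset.mem_image] at hy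
  obtain ⟨c, _, rfl⟩ := hy
  have := Int.lt_floor_add_one (t - c)
  linarith

lemma le_lpt {d t : ℝ} (hd : Int.fract d ∈ P) (hdt : d ≤ t) : d ≤ lpt P hP t := by
  have hsplit : d = Int.fract d + (⌊d⌋ : ℝ) := (Int.fract_add_floor d).symm
  have h1 : (⌊d⌋ : ℝ) ≤ t - Int.fract d := by linarith [hsplit ▸ hdt]
  have h2 : ⌊d⌋ ≤ ⌊t - Int.fract d⌋ := Int.le_floor.2 h1
  calc d = Int.fract d + (⌊d⌋ : ℝ) := hsplit
  _ ≤ Int.fract d + (⌊t - Int.fract d⌋ : ℝ) := by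
        have : ((⌊d⌋:ℤ):ℝ) ≤ ((⌊t - Int.fract d⌋:ℤ):ℝ) := by exact_mod_cast h2
        linarith
  _ ≤ lpt P hP t :=
      Finset.le_max' _ _ (Finset.mem_image_of_mem (fun c => c + ((⌊t - c⌋ : ℤ) : ℝ)) hd)

lemma rpt_le {d t : ℝ} (hd : Int.fract d ∈ P) (hdt : t < d) : rpt P hP t ≤ d := by
  have hsplit : d = Int.fract d + (⌊d⌋ : ℝ) := (Int.fract_add_floor d).symm
  have h1 : (⌊t - Int.fract d⌋ : ℝ) ≤ t - Int.fract d := Int.floor_le _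
  have h2 : ⌊t - Int.fract d⌋ < ⌊d⌋ := by
    have : ((⌊t - Int.fract d⌋ : ℤ) : ℝ) < (⌊d⌋ : ℝ) := by linarith [hsplit ▸ hdt]
    exact_mod_cast this
  calc rpt P hP t ≤ Int.fract d + (⌊t - Int.fract d⌋ : ℝ) + 1 :=
        Finset.min'_le _ _ (Finset.mem_image_of_mem (fun c => c + ((⌊t - c⌋ : ℤ) : ℝ) + 1) hd)
  _ ≤ Int.fract d + (⌊d⌋ : ℝ) := by
      have : (⌊t - Int.fract d⌋ : ℝ) + 1 ≤ (⌊d⌋ : ℝ) := by exact_mod_cast h2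
      linarith
  _ = d := hsplit.symm

lemma lpt_lt_rpt (t : ℝ) : lpt P hP t < rpt P hP t :=
  lt_of_le_of_lt (lpt_le P hP t) (lt_rpt P hP t)

lemma Qe_add_one (x : ℝ) : Qe q (x + 1) = Qe q x + 1 := by
  rw [Qe, Qe, Int.fract_add_one]
  have : ⌊x + 1⌋ = ⌊x⌋ + 1 := by exact_mod_cast Int.floor_add_intCast x 1
  rw [this]; push_cast; ring

lemma lpt_add_one (t : ℝ) : lpt P hP (t + 1) = lpt P hP t + 1 := by
  apply le_antisymm
  · apply Finset.max'_le
    intro y hy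
    rw [Finset.mem_image] at hy
    obtain ⟨c, hc, rfl⟩ := hy
    have h1 : ⌊t + 1 - c⌋ = ⌊t - c⌋ + 1 := by
      have : t + 1 - c = (t - c) + (1 : ℤ) := by push_cast; ring
      rw [this, Int.floor_add_intCast]
    rw [h1]
    have : c + ((⌊t - c⌋ : ℤ) : ℝ) ≤ lpt P hP t :=
      Finset.le_max' _ _ (Finset.mem_image_of_mem (fun c => c + ((⌊t - c⌋ : ℤ) : ℝ)) hc)
    push_cast
    linarith
  · have h := Finset.max'_mem _ (hP.image (fun c => c + ((⌊t - c⌋ : ℤ) : ℝ)))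
    rw [Finset.mem_image] at h
    obtain ⟨c, hc, hceq⟩ := h
    rw [lpt, ← hceq]
    have h1 : ⌊t + 1 - c⌋ = ⌊t - c⌋ + 1 := by
      have : t + 1 - c = (t - c) + (1 : ℤ) := by push_cast; ring
      rw [this, Int.floor_add_intCast]
    have : c + ((⌊t + 1 - c⌋ : ℤ) : ℝ) ≤ lpt P hP (t+1) :=
      Finset.le_max' _ _ (Finset.mem_image_of_mem (fun c => c + ((⌊t + 1 - c⌋ : ℤ) : ℝ)) hc)
    rw [h1] at this
    push_cast at this
    linarith

lemma rpt_add_one (t : ℝ) : rpt P hP (t + 1) = rpt P hP t + 1 := by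
  have key : ∀ c : ℝ, ⌊t + 1 - c⌋ = ⌊t - c⌋ + 1 := by
    intro c
    have : t + 1 - c = (t - c) + (1 : ℤ) := by push_cast; ring
    rw [this, Int.floor_add_intCast]
  apply le_antisymm
  · have h := Finset.min'_mem _ (hP.image (fun c => c + ((⌊t - c⌋ : ℤ) : ℝ) + 1))
    rw [Finset.mem_image] at h
    obtain ⟨c, hc, hceq⟩ := h
    have hr : rpt P hP t = c + ((⌊t - c⌋ : ℤ) : ℝ) + 1 := hceq.symm
    have h2 : rpt P hP (t+1) ≤ c + ((⌊t + 1 - c⌋ : ℤ) : ℝ) + 1 :=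
      Finset.min'_le _ _ (Finset.mem_image_of_mem (fun c => c + ((⌊t + 1 - c⌋ : ℤ) : ℝ) + 1) hc)
    rw [key c] at h2
    push_cast at h2
    rw [hr]
    linarith
  · conv_rhs => rw [rpt]
    apply Finset.le_min'
    intro y hy
    rw [Finset.mem_image] at hy
    obtain ⟨c, hc, rfl⟩ := hy
    rw [key c]
    have : rpt P hP t ≤ c + ((⌊t - c⌋ : ℤ) : ℝ) + 1 :=
      Finset.min'_le _ _ (Finset.mem_image_of_mem (fun c => c + ((⌊t - c⌋ : ℤ) : ℝ) + 1) hc)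
    push_cast
    linarith

lemma interp_add_one (t : ℝ) : interp P hP q (t + 1) = interp P hP q t + 1 := by
  rw [interp, interp, lpt_add_one P hP, rpt_add_one P hP, Qe_add_one, Qe_add_one]
  ring

lemma interp_at {t : ℝ} (ht : Int.fract t ∈ P) : interp P hP q t = Qe q t := by
  have h1 : lpt P hP t = t := le_antisymm (lpt_le P hP t) (le_lpt P hP ht le_rfl)
  rw [interp, h1, sub_self, zero_mul, zero_div, add_zero]

end Interp

section InterpMain

variable (P : Finset ℝ) (hP : P.Nonempty) (q : ℝ → ℝ)
  (hP01 : ∀ p ∈ P, p ∈ Set.Ico (0:ℝ) 1)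
  (HQ : ∀ ⦃d d' : ℝ⦄, Int.fract d ∈ P → Int.fract d' ∈ P → d < d' → Qe q d < Qe q d')

include hP01 HQ

lemma interp_bounds (t : ℝ) :
    Qe q (lpt P hP t) ≤ interp P hP q t ∧ interp P hP q t < Qe q (rpt P hP t) := by
  have hlr := lpt_lt_rpt P hP t
  have hlt := lpt_le P hP t
  have hrt := lt_rpt P hP t
  have hd : (0:ℝ) < rpt P hP t - lpt P hP t := by linarith
  have hQ : Qe q (lpt P hP t) < Qe q (rpt P hP t) :=
    HQ (lpt_mem P hP hP01 t) (rpt_mem P hP hP01 t) hlr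
  constructor
  · rw [interp]
    have : 0 ≤ (t - lpt P hP t) * (Qe q (rpt P hP t) - Qe q (lpt P hP t)) / (rpt P hP t - lpt P hP t) :=
      div_nonneg (mul_nonneg (by linarith) (by linarith)) hd.le
    linarith
  · rw [interp]
    have : (t - lpt P hP t) * (Qe q (rpt P hP t) - Qe q (lpt P hP t)) / (rpt P hP t - lpt P hP t)
        < Qe q (rpt P hP t) - Qe q (lpt P hP t) := by
      rw [div_lt_iff₀ hd]
      nlinarith
    linarith

lemma interp_strictMono : StrictMono (interp P hP q) := by
  intro t t' htt
  rcases le_or_gt (rpt P hP t) t' with hc | hc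
  · have h1 : interp P hP q t < Qe q (rpt P hP t) := (interp_bounds P hP q hP01 HQ t).2
    have h2 : Qe q (lpt P hP t') ≤ interp P hP q t' := (interp_bounds P hP q hP01 HQ t').1
    have h3 : rpt P hP t ≤ lpt P hP t' := le_lpt P hP (rpt_mem P hP hP01 t) hc
    rcases eq_or_lt_of_le h3 with h4 | h4
    · rw [h4] at h1; linarith
    · have := HQ (rpt_mem P hP hP01 t) (lpt_mem P hP hP01 t') h4
      linarith
  · have hl : lpt P hP t' = lpt P hP t := by
      apply le_antisymm
      · apply le_lpt P hP (lpt_mem P hP hP01 t')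
        by_contra hcon
        push_neg at hcon
        have := rpt_le P hP (lpt_mem P hP hP01 t') hcon
        have := lpt_le P hP t'
        linarith
      · exact le_lpt P hP (lpt_mem P hP hP01 t) ((lpt_le P hP t).trans htt.le)
    have hr : rpt P hP t' = rpt P hP t := by
      apply le_antisymm
      · exact rpt_le P hP (rpt_mem P hP hP01 t) hc
      · exact rpt_le P hP (rpt_mem P hP hP01 t') (htt.trans (lt_rpt P hP t'))
    have hlr := lpt_lt_rpt P hP t
    have hd : (0:ℝ) < rpt P hP t - lpt P hP t := by linarith
    have hQ : Qe q (lpt P hP t) < Qe q (rpt P hP t) :=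
      HQ (lpt_mem P hP hP01 t) (rpt_mem P hP hP01 t) hlr
    rw [interp, interp, hl, hr]
    have key : (t - lpt P hP t) * (Qe q (rpt P hP t) - Qe q (lpt P hP t)) / (rpt P hP t - lpt P hP t)
        < (t' - lpt P hP t) * (Qe q (rpt P hP t) - Qe q (lpt P hP t)) / (rpt P hP t - lpt P hP t) := by
      rw [div_lt_div_iff₀ hd hd]
      nlinarith [mul_pos (mul_pos (show (0:ℝ) < t' - t by linarith)
        (show (0:ℝ) < Qe q (rpt P hP t) - Qe q (lpt P hP t) by linarith)) hd]
    linarith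

lemma interp_surjective : Function.Surjective (interp P hP q) := by
  intro z
  set g : ℝ → ℝ := fun c => c + ((⌊z - q c⌋ : ℤ) : ℝ) with hg
  have hne : (P.image g).Nonempty := hP.image g
  set lz := (P.image g).max' hne with hlz
  obtain ⟨c₀, hc₀, hceq⟩ : ∃ c₀ ∈ P, g c₀ = lz := by
    have := Finset.max'_mem _ hne
    rw [Finset.mem_image] at this
    exact this
  have hlzfr : Int.fract lz ∈ P := by
    rw [← hceq, hg]
    exact fract_shift_mem P hP01 hc₀ _
  have hlzQ : Qe q lz ≤ z := by
    rw [← hceq, hg, Qe]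
    simp only []
    rw [Int.fract_add_intCast, fract_self_of_mem P hP01 hc₀]
    have h1 : ⌊c₀ + ((⌊z - q c₀⌋ : ℤ) : ℝ)⌋ = ⌊c₀⌋ + ⌊z - q c₀⌋ := by
      rw [Int.floor_add_intCast]
    have h2 : ⌊c₀⌋ = 0 := by
      have := hP01 c₀ hc₀
      exact Int.floor_eq_zero_iff.2 (by exact_mod_cast this)
    rw [h1, h2]
    push_cast
    have := Int.floor_le (z - q c₀)
    linarith
  have hmaxd : ∀ d : ℝ, Int.fract d ∈ P → Qe q d ≤ z → d ≤ lz := by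
    intro d hd hQd
    have hsplit : d = Int.fract d + (⌊d⌋ : ℝ) := (Int.fract_add_floor d).symm
    rw [Qe] at hQd
    have h1 : (⌊d⌋ : ℝ) ≤ z - q (Int.fract d) := by linarith
    have h2 : ⌊d⌋ ≤ ⌊z - q (Int.fract d)⌋ := Int.le_floor.2 h1
    calc d = Int.fract d + (⌊d⌋ : ℝ) := hsplit
    _ ≤ Int.fract d + ((⌊z - q (Int.fract d)⌋ : ℤ) : ℝ) := by
        have : ((⌊d⌋:ℤ):ℝ) ≤ ((⌊z - q (Int.fract d)⌋ : ℤ) : ℝ) := by exact_mod_cast h2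
        linarith
    _ ≤ lz := Finset.le_max' _ _ (Finset.mem_image_of_mem g hd)
  set rz := rpt P hP lz with hrz
  have hrzfr : Int.fract rz ∈ P := rpt_mem P hP hP01 lz
  have hlzrz : lz < rz := lt_rpt P hP lz
  have hrzQ : z < Qe q rz := by
    by_contra hcon
    push_neg at hcon
    have := hmaxd rz hrzfr hcon
    linarith
  have hQQ : Qe q lz < Qe q rz := HQ hlzfr hrzfr hlzrz
  set t := lz + (z - Qe q lz) * (rz - lz) / (Qe q rz - Qe q lz) with ht
  have ht1 : lz ≤ t := by
    rw [ht]
    have : 0 ≤ (z - Qe q lz) * (rz - lz) / (Qe q rz - Qe q lz) :=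
      div_nonneg (mul_nonneg (by linarith) (by linarith)) (by linarith)
    linarith
  have ht2 : t < rz := by
    rw [ht]
    have : (z - Qe q lz) * (rz - lz) / (Qe q rz - Qe q lz) < rz - lz := by
      rw [div_lt_iff₀ (by linarith : (0:ℝ) < Qe q rz - Qe q lz)]
      nlinarith
    linarith
  have hlpt : lpt P hP t = lz := by
    apply le_antisymm
    · by_contra hcon
      push_neg at hcon
      have h5 := rpt_le P hP (lpt_mem P hP hP01 t) hcon
      have := lpt_le P hP t
      rw [← hrz] at h5
      linarith
    · exact le_lpt P hP hlzfr ht1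
  have hrpt : rpt P hP t = rz := by
    apply le_antisymm
    · exact rpt_le P hP hrzfr ht2
    · rw [hrz]
      apply rpt_le P hP (rpt_mem P hP hP01 t)
      · exact lt_of_le_of_lt ht1 (lt_rpt P hP t)
  refine ⟨t, ?_⟩
  rw [interp, hlpt, hrpt]
  have h6 : t - lz = (z - Qe q lz) * (rz - lz) / (Qe q rz - Qe q lz) := by rw [ht]; ring
  rw [h6]
  have hne1 : Qe q rz - Qe q lz ≠ 0 := by linarith
  have hne2 : rz - lz ≠ 0 := by linarith
  field_simp
  ring

end InterpMain


lemma Fmix_const {f : ℝ → ℝ} {t : ℝ} (h : f t = t) (θ : ℝ) : Fmix f θ t = t := by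
  simp [Fmix, h]; ring

lemma noroot_side {f : ℝ → ℝ} {θa θb t' e : ℝ} (hab : θa ≤ θb)
    (hnr : ∀ θ, θa ≤ θ → θ ≤ θb → Fmix f θ t' ≠ e) :
    (Fmix f θa t' < e ↔ Fmix f θb t' < e) := by
  have hcont : ContinuousOn (fun θ => Fmix f θ t') (Set.Icc θa θb) := by
    apply Continuous.continuousOn
    unfold Fmix
    fun_prop
  constructor
  · intro h
    by_contra hcon
    push_neg at hcon
    have hne : Fmix f θb t' ≠ e := hnr θb hab le_rfl
    have hgt : e < Fmix f θb t' := lt_of_le_of_ne hcon (Ne.symm hne)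
    have hmem : e ∈ Set.Icc (Fmix f θa t') (Fmix f θb t') := ⟨h.le, hgt.le⟩
    obtain ⟨θ₀, hθ₀, hθ₀e⟩ := intermediate_value_Icc hab hcont hmem
    exact hnr θ₀ hθ₀.1 hθ₀.2 hθ₀e
  · intro h
    by_contra hcon
    push_neg at hcon
    have hne : Fmix f θa t' ≠ e := hnr θa le_rfl hab
    have hgt : e < Fmix f θa t' := lt_of_le_of_ne hcon (Ne.symm hne)
    have hmem : e ∈ Set.Icc (Fmix f θb t') (Fmix f θa t') := ⟨h.le, hgt.le⟩
    obtain ⟨θ₀, hθ₀, hθ₀e⟩ := intermediate_value_Icc' hab hcont hmem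
    exact hnr θ₀ hθ₀.1 hθ₀.2 hθ₀e

lemma step_exists
    (A B : Finset ℝ) (hA : A.Nonempty)
    (hA01 : ∀ p ∈ A, p ∈ Set.Ico (0:ℝ) 1) (hB01 : ∀ p ∈ B, p ∈ Set.Ico (0:ℝ) 1)
    (W : Finset ℝ)
    {f : ℝ → ℝ} (hf : IsTimedAut f)
    (hC : ∀ c ∈ A, c ∈ B → f c = c)
    {θ₁ θ₂ : ℝ} (h0 : 0 ≤ θ₁) (h12 : θ₁ < θ₂) (h1 : θ₂ ≤ 1)
    (Hsep : ∀ x : ℝ, ∀ a ∈ A, ∀ b ∈ B, a ≠ b → ∀ k : ℤ,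
      |Fmix f θ₂ x - Fmix f θ₁ x| < |a - b + k|)
    (Hnoev : ∀ t ∈ W, f t ≠ t → ∀ θ, θ₁ < θ → θ < θ₂ → ∀ p, (p ∈ A ∨ p ∈ B) → ∀ k : ℤ,
      Fmix f θ t ≠ p + k) :
    ∃ u v : ℝ → ℝ, IsTimedAut u ∧ IsTimedAut v ∧
      (∀ b ∈ B, ∀ k : ℤ, u (b + k) = b + k) ∧
      (∀ a ∈ A, ∀ k : ℤ, v (a + k) = a + k) ∧
      (∀ x, u (v (Fmix f θ₁ x)) = Fmix f θ₂ x) ∧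
      (∀ t ∈ W, ∃ θ', 0 ≤ θ' ∧ θ' ≤ 1 ∧ v (Fmix f θ₁ t) = Fmix f θ' t) := by
  classical
  set θs := (θ₁ + θ₂)/2 with hθsdef
  have hθs1 : θ₁ < θs := by rw [hθsdef]; linarith
  have hθs2 : θs < θ₂ := by rw [hθsdef]; linarith
  have h1' : θ₁ ≤ 1 := by linarith
  have h0' : 0 ≤ θ₂ := by linarith
  have h0s : 0 ≤ θs := by linarith
  have h1s : θs ≤ 1 := by linarith
  have hF1aut : IsTimedAut (Fmix f θ₁) := Fmix_aut hf h0 h1'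
  have hF2aut : IsTimedAut (Fmix f θ₂) := Fmix_aut hf h0' h1
  have hFsaut : IsTimedAut (Fmix f θs) := Fmix_aut hf h0s h1s
  set F1 := Fmix f θ₁ with hF1def
  set F2 := Fmix f θ₂ with hF2def
  set Fs := Fmix f θs with hFsdef
  set G := Function.invFun F1 with hGdef
  have hGF : ∀ x, G (F1 x) = x := Function.leftInverse_invFun hF1aut.1.1
  have hFG : ∀ x, F1 (G x) = x := Function.rightInverse_invFun hF1aut.1.2
  set s : ℝ → ℝ := fun x => F2 (G x) with hsdef
  have hsaut : IsTimedAut s := aut_comp hF2aut (aut_inv hF1aut)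
  have hs_int : ∀ (k : ℤ) (x : ℝ), s (x + k) = s x + k := aut_int hsaut
  have hsF1 : ∀ x, s (F1 x) = F2 x := fun x => by rw [hsdef]; simp [hGF]
  have hCfix : ∀ c ∈ A, c ∈ B → ∀ θ, Fmix f θ c = c := by
    intro c hcA hcB θ
    exact Fmix_const (hC c hcA hcB) θ
  -- fixed-level helper
  have hsfix : ∀ c, f c = c → ∀ (k : ℤ), s (c + k) = c + k := by
    intro c hc k
    have h1c : F1 c = c := Fmix_const hc θ₁
    have h2c : F2 c = c := Fmix_const hc θ₂
    have : G c = c := by conv_lhs => rw [← h1c, hGF]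
    rw [hs_int]
    rw [hsdef]
    simp only []
    rw [this, h2c]
  -- keep predicate
  set keep : ℝ → Prop := fun t =>
    (∀ a ∈ A, ∀ k : ℤ, F1 t ≠ a + k) ∧ (∀ b ∈ B, ∀ k : ℤ, F2 t ≠ b + k) with hkeepdef
  set Mid : Finset ℝ := (W.filter keep).image (fun t => Int.fract (Fs t)) with hMiddef
  set P : Finset ℝ := A ∪ B ∪ Mid with hPdef
  have hPne : P.Nonempty := by
    obtain ⟨a, ha⟩ := hA
    exact ⟨a, by rw [hPdef]; simp [ha]⟩
  have hP01 : ∀ p ∈ P, p ∈ Set.Ico (0:ℝ) 1 := by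
    intro p hp
    rw [hPdef] at hp
    simp only [Finset.mem_union] at hp
    rcases hp with (hp | hp) | hp
    · exact hA01 p hp
    · exact hB01 p hp
    · rw [hMiddef] at hp
      rw [Finset.mem_image] at hp
      obtain ⟨t, _, rfl⟩ := hp
      exact ⟨Int.fract_nonneg _, Int.fract_lt_one _⟩
  set q : ℝ → ℝ := fun p =>
    if p ∈ A then s p else if p ∈ B then p
    else if h : ∃ t, (t ∈ W ∧ keep t) ∧ Int.fract (Fs t) = p then
      F2 h.choose - (⌊Fs h.choose⌋ : ℝ) else p with hqdef
  have hF1_int : ∀ (k : ℤ) (x : ℝ), F1 (x + k) = F1 x + k := aut_int hF1aut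
  have hF2_int : ∀ (k : ℤ) (x : ℝ), F2 (x + k) = F2 x + k := aut_int hF2aut
  have hFs_int : ∀ (k : ℤ) (x : ℝ), Fs (x + k) = Fs x + k := aut_int hFsaut
  -- value lemmas for Qe q
  have hQA : ∀ d : ℝ, Int.fract d ∈ A → Qe q d = s d := by
    intro d hd
    simp only [Qe, hqdef]
    rw [if_pos hd]
    conv_rhs => rw [← Int.fract_add_floor d]
    rw [hs_int]
  have hQB : ∀ d : ℝ, Int.fract d ∉ A → Int.fract d ∈ B → Qe q d = d := by
    intro d hdA hdB
    simp only [Qe, hqdef]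
    rw [if_neg hdA, if_pos hdB]
    exact Int.fract_add_floor d
  have hQM : ∀ d : ℝ, Int.fract d ∉ A → Int.fract d ∉ B → Int.fract d ∈ Mid →
      ∃ t' : ℝ, Qe q d = F2 t' ∧ d = Fs t' ∧
        (∀ a ∈ A, ∀ k : ℤ, F1 t' ≠ a + k) ∧ (∀ b ∈ B, ∀ k : ℤ, F2 t' ≠ b + k) ∧
        (f t' ≠ t' → ∀ θ, θ₁ < θ → θ < θ₂ → ∀ p, (p ∈ A ∨ p ∈ B) → ∀ k : ℤ,
          Fmix f θ t' ≠ p + k) := by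
    intro d hdA hdB hdM
    have hex : ∃ t, (t ∈ W ∧ keep t) ∧ Int.fract (Fs t) = Int.fract d := by
      rw [hMiddef, Finset.mem_image] at hdM
      obtain ⟨t, ht, hteq⟩ := hdM
      rw [Finset.mem_filter] at ht
      exact ⟨t, ⟨ht.1, ht.2⟩, hteq⟩
    have hqv : q (Int.fract d) = F2 hex.choose - (⌊Fs hex.choose⌋ : ℝ) := by
      simp only [hqdef]
      rw [if_neg hdA, if_neg hdB, dif_pos hex]
    obtain ⟨⟨htW, htkeep⟩, hteq⟩ := hex.choose_spec
    set t₀ := hex.choose with ht₀def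
    set m : ℤ := ⌊d⌋ - ⌊Fs t₀⌋ with hmdef
    have hdm : d = Fs t₀ + (m : ℝ) := by
      have h1 := Int.fract_add_floor d
      have h2 := Int.fract_add_floor (Fs t₀)
      rw [hmdef]
      push_cast
      linarith [hteq]
    obtain ⟨htkA, htkB⟩ := htkeep
    refine ⟨t₀ + (m:ℝ), ?_, ?_, ?_, ?_, ?_⟩
    · simp only [Qe]
      rw [hqv, hF2_int m t₀, hmdef]
      push_cast
      ring
    · rw [hFs_int m t₀]; exact hdm
    · intro a ha k hcon
      rw [hF1_int m t₀] at hcon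
      exact htkA a ha (k - m) (by push_cast; linarith)
    · intro b hb k hcon
      rw [hF2_int m t₀] at hcon
      exact htkB b hb (k - m) (by push_cast; linarith)
    · intro hne θ hθ1 hθ2 p hp k hcon
      have hfm : f (t₀ + (m:ℝ)) = f t₀ + m := aut_int hf m t₀
      have hne0 : f t₀ ≠ t₀ := by
        intro h; apply hne; rw [hfm, h]
      rw [Fmix_int hf θ m t₀] at hcon
      exact Hnoev t₀ htW hne0 θ hθ1 hθ2 p hp (k - m) (by push_cast; linarith)
  -- comparison lemma: A-level vs mid point
  have hAM : ∀ (d t' : ℝ), Int.fract d ∈ A →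
      (∀ a ∈ A, ∀ k : ℤ, F1 t' ≠ a + k) →
      (f t' ≠ t' → ∀ θ, θ₁ < θ → θ < θ₂ → ∀ p, (p ∈ A ∨ p ∈ B) → ∀ k : ℤ,
        Fmix f θ t' ≠ p + k) →
      ((Fs t' < d → F2 t' < s d) ∧ (d < Fs t' → s d < F2 t')) := by
    intro d t' hdA hkA hnoev
    have hF1ne : F1 t' ≠ d := by
      have := hkA (Int.fract d) hdA ⌊d⌋
      rwa [Int.fract_add_floor d] at this
    have hside : (F1 t' < d ↔ Fs t' < d) := by
      apply noroot_side (le_of_lt hθs1)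
      intro θ hθa hθb
      by_cases hfe : f t' = t'
      · have hxc : Fmix f θ t' = t' := Fmix_const hfe θ
        have hxc1 : F1 t' = t' := Fmix_const hfe θ₁
        rw [hxc]
        intro hcon
        exact hF1ne (by rw [hxc1, hcon])
      · rcases eq_or_lt_of_le hθa with heq | hθa'
        · rw [← heq]; exact hF1ne
        · have := hnoev hfe θ hθa' (lt_of_le_of_lt hθb hθs2) (Int.fract d) (Or.inl hdA) ⌊d⌋
          rwa [Int.fract_add_floor d] at this
    have hF1x : F1 (G d) = d := hFG d
    have hsd : s d = F2 (G d) := rfl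
    constructor
    · intro h
      have h1t : F1 t' < d := hside.2 h
      have htx : t' < G d := hF1aut.2.1.lt_iff_lt.mp (by rw [hF1x]; exact h1t)
      rw [hsd]
      exact hF2aut.2.1 htx
    · intro h
      have h1t : d < F1 t' := by
        rcases lt_trichotomy (F1 t') d with hlt | heq | hgt
        · exact absurd (hside.1 hlt) (lt_asymm h)
        · exact absurd heq hF1ne
        · exact hgt
      have htx : G d < t' := hF1aut.2.1.lt_iff_lt.mp (by rw [hF1x]; exact h1t)
      rw [hsd]
      exact hF2aut.2.1 htx
  -- comparison lemma: B-level vs mid point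
  have hBM : ∀ (d t' : ℝ), Int.fract d ∈ B → d ≠ Fs t' →
      (∀ b ∈ B, ∀ k : ℤ, F2 t' ≠ b + k) →
      (f t' ≠ t' → ∀ θ, θ₁ < θ → θ < θ₂ → ∀ p, (p ∈ A ∨ p ∈ B) → ∀ k : ℤ,
        Fmix f θ t' ≠ p + k) →
      ((Fs t' < d → F2 t' < d) ∧ (d < Fs t' → d < F2 t')) := by
    intro d t' hdB hdne hkB hnoev
    have hF2ne : F2 t' ≠ d := by
      have := hkB (Int.fract d) hdB ⌊d⌋
      rwa [Int.fract_add_floor d] at this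
    have hside : (Fs t' < d ↔ F2 t' < d) := by
      apply noroot_side (le_of_lt hθs2)
      intro θ hθa hθb
      by_cases hfe : f t' = t'
      · have hxc : Fmix f θ t' = t' := Fmix_const hfe θ
        have hxc2 : F2 t' = t' := Fmix_const hfe θ₂
        rw [hxc]
        intro hcon
        exact hF2ne (by rw [hxc2, hcon])
      · rcases eq_or_lt_of_le hθb with heq | hθb'
        · rw [heq]; exact hF2ne
        · have := hnoev hfe θ (lt_of_lt_of_le hθs1 hθa) hθb' (Int.fract d) (Or.inr hdB) ⌊d⌋
          rwa [Int.fract_add_floor d] at this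
    constructor
    · intro h; exact hside.1 h
    · intro h
      rcases lt_trichotomy (F2 t') d with hlt | heq | hgt
      · exact absurd (hside.2 hlt) (lt_asymm h)
      · exact absurd heq hF2ne
      · exact hgt
  -- comparison lemma: A-level vs B-level
  have hAB : ∀ d d' : ℝ, Int.fract d ∈ A → Int.fract d' ∈ B → Int.fract d' ∉ A →
      ((d < d' → s d < d') ∧ (d' < d → d' < s d)) := by
    intro d d' hdA hd'B hd'A
    have hne : Int.fract d ≠ Int.fract d' := fun h => hd'A (h ▸ hdA)
    have h1 := Hsep (G d) (Int.fract d) hdA (Int.fract d') hd'B hne (⌊d⌋ - ⌊d'⌋)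
    have e1 : s d = F2 (G d) := rfl
    have e2 : F1 (G d) = d := hFG d
    have e3 : Int.fract d - Int.fract d' + ((⌊d⌋ - ⌊d'⌋ : ℤ) : ℝ) = d - d' := by
      have h4 := Int.fract_add_floor d
      have h5 := Int.fract_add_floor d'
      push_cast
      linarith
    rw [e2, e3, ← e1] at h1
    rw [abs_lt] at h1
    rcases abs_cases (d - d') with ⟨hc1, _⟩ | ⟨hc1, _⟩ <;>
      constructor <;> intro h <;> nlinarith [h1.1, h1.2]
  -- the strict monotonicity hypothesis for interp
  have HQ : ∀ ⦃d d' : ℝ⦄, Int.fract d ∈ P → Int.fract d' ∈ P → d < d' → Qe q d < Qe q d' := by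
    have hclass : ∀ e : ℝ, Int.fract e ∈ P → Int.fract e ∈ A ∨ (Int.fract e ∉ A ∧ Int.fract e ∈ B) ∨
        (Int.fract e ∉ A ∧ Int.fract e ∉ B ∧ Int.fract e ∈ Mid) := by
      intro e he
      by_cases h1 : Int.fract e ∈ A
      · exact Or.inl h1
      by_cases h2 : Int.fract e ∈ B
      · exact Or.inr (Or.inl ⟨h1, h2⟩)
      · refine Or.inr (Or.inr ⟨h1, h2, ?_⟩)
        rw [hPdef] at he
        simp only [Finset.mem_union, h1, h2, false_or] at he
        exact he
    intro d d' hd hd' hdd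
    rcases hclass d hd with hdA | ⟨hdA, hdB⟩ | ⟨hdA, hdB, hdM⟩ <;>
      rcases hclass d' hd' with hd'A | ⟨hd'A, hd'B⟩ | ⟨hd'A, hd'B, hd'M⟩
    · rw [hQA d hdA, hQA d' hd'A]
      exact hsaut.2.1 hdd
    · rw [hQA d hdA, hQB d' hd'A hd'B]
      exact (hAB d d' hdA hd'B hd'A).1 hdd
    · obtain ⟨t', hv, hd'eq, hk1, _, hnv⟩ := hQM d' hd'A hd'B hd'M
      rw [hQA d hdA, hv]
      exact (hAM d t' hdA hk1 hnv).2 (hd'eq ▸ hdd)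
    · rw [hQB d hdA hdB, hQA d' hd'A]
      exact (hAB d' d hd'A hdB hdA).2 hdd
    · rw [hQB d hdA hdB, hQB d' hd'A hd'B]
      exact hdd
    · obtain ⟨t', hv, hd'eq, _, hk2, hnv⟩ := hQM d' hd'A hd'B hd'M
      rw [hQB d hdA hdB, hv]
      exact (hBM d t' hdB (fun h => (ne_of_lt hdd) (h.trans hd'eq.symm)) hk2 hnv).2 (hd'eq ▸ hdd)
    · obtain ⟨t', hv, hdeq, hk1, _, hnv⟩ := hQM d hdA hdB hdM
      rw [hQA d' hd'A, hv]
      exact (hAM d' t' hd'A hk1 hnv).1 (hdeq ▸ hdd)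
    · obtain ⟨t', hv, hdeq, _, hk2, hnv⟩ := hQM d hdA hdB hdM
      rw [hQB d' hd'A hd'B, hv]
      exact (hBM d' t' hd'B (fun h => (ne_of_lt hdd) (hdeq.trans h.symm)) hk2 hnv).1 (hdeq ▸ hdd)
    · obtain ⟨t₁, hv1, hdeq1, _, _, _⟩ := hQM d hdA hdB hdM
      obtain ⟨t₂, hv2, hdeq2, _, _, _⟩ := hQM d' hd'A hd'B hd'M
      rw [hv1, hv2]
      have : t₁ < t₂ := hFsaut.2.1.lt_iff_lt.mp (by rw [← hdeq1, ← hdeq2]; exact hdd)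
      exact hF2aut.2.1 this
  -- construct u
  set u := interp P hPne q with hudef
  have humono : StrictMono u := interp_strictMono P hPne q hP01 HQ
  have hu_aut : IsTimedAut u :=
    ⟨⟨humono.injective, interp_surjective P hPne q hP01 HQ⟩, humono,
      fun t => interp_add_one P hPne q t⟩
  have hu_at : ∀ d : ℝ, Int.fract d ∈ P → u d = Qe q d := fun d hd => interp_at P hPne q hd
  have hfrA : ∀ a ∈ A, ∀ k : ℤ, Int.fract (a + (k:ℝ)) = a := by
    intro a ha k
    rw [Int.fract_add_intCast]
    exact Int.fract_eq_self.2 (hA01 a ha)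
  have hfrB : ∀ b ∈ B, ∀ k : ℤ, Int.fract (b + (k:ℝ)) = b := by
    intro b hb k
    rw [Int.fract_add_intCast]
    exact Int.fract_eq_self.2 (hB01 b hb)
  have hmemPA : ∀ a ∈ A, a ∈ P := by
    intro a ha; rw [hPdef]; simp [Finset.mem_union, ha]
  have hmemPB : ∀ b ∈ B, b ∈ P := by
    intro b hb; rw [hPdef]; simp [Finset.mem_union, hb]
  have hufixB : ∀ b ∈ B, ∀ k : ℤ, u (b + (k:ℝ)) = b + k := by
    intro b hb k
    have hfr := hfrB b hb k
    have hPm : Int.fract (b + (k:ℝ)) ∈ P := by rw [hfr]; exact hmemPB b hb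
    rw [hu_at _ hPm]
    by_cases hbA : b ∈ A
    · rw [hQA _ (by rw [hfr]; exact hbA)]
      exact hsfix b (hC b hbA hb) k
    · exact hQB _ (by rw [hfr]; exact hbA) (by rw [hfr]; exact hb)
  have huA : ∀ a ∈ A, ∀ k : ℤ, u (a + (k:ℝ)) = s (a + (k:ℝ)) := by
    intro a ha k
    have hfr := hfrA a ha k
    have hPm : Int.fract (a + (k:ℝ)) ∈ P := by rw [hfr]; exact hmemPA a ha
    rw [hu_at _ hPm]
    exact hQA _ (by rw [hfr]; exact ha)
  set v := fun xx : ℝ => Function.invFun u (s xx) with hvdef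
  have huinv1 : ∀ z, u (Function.invFun u z) = z := fun z =>
    Function.rightInverse_invFun hu_aut.1.2 z
  have huinv2 : ∀ z, Function.invFun u (u z) = z := fun z =>
    Function.leftInverse_invFun hu_aut.1.1 z
  have hv_aut : IsTimedAut v := aut_comp (aut_inv hu_aut) hsaut
  have hvfixA : ∀ a ∈ A, ∀ k : ℤ, v (a + (k:ℝ)) = a + k := by
    intro a ha k
    show Function.invFun u (s (a + (k:ℝ))) = a + k
    rw [← huA a ha k, huinv2]
  have hsplit : ∀ x, u (v (F1 x)) = F2 x := by
    intro x
    show u (Function.invFun u (s (F1 x))) = F2 x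
    rw [huinv1, hsF1]
  refine ⟨u, v, hu_aut, hv_aut, hufixB, hvfixA, hsplit, ?_⟩
  intro t htW
  by_cases hk : keep t
  · obtain ⟨hkA, hkB⟩ := hk
    have hfrP : Int.fract (Fs t) ∈ P := by
      rw [hPdef]
      simp only [Finset.mem_union]
      right
      rw [hMiddef]
      exact Finset.mem_image_of_mem _ (Finset.mem_filter.2 ⟨htW, hkA, hkB⟩)
    have huFs : u (Fs t) = F2 t := by
      rw [hu_at _ hfrP]
      by_cases hfA : Int.fract (Fs t) ∈ A
      · exfalso
        by_cases hfe : f t = t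
        · have h3 : Fs t = t := Fmix_const hfe θs
          have h4 : F1 t = t := Fmix_const hfe θ₁
          apply hkA _ hfA ⌊Fs t⌋
          rw [Int.fract_add_floor (Fs t), h4, h3]
        · exact Hnoev t htW hfe θs hθs1 hθs2 (Int.fract (Fs t)) (Or.inl hfA) ⌊Fs t⌋
            (Int.fract_add_floor (Fs t)).symm
      by_cases hfB : Int.fract (Fs t) ∈ B
      · exfalso
        by_cases hfe : f t = t
        · have h3 : Fs t = t := Fmix_const hfe θs
          have h4 : F2 t = t := Fmix_const hfe θ₂
          apply hkB _ hfB ⌊Fs t⌋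
          rw [Int.fract_add_floor (Fs t), h4, h3]
        · exact Hnoev t htW hfe θs hθs1 hθs2 (Int.fract (Fs t)) (Or.inr hfB) ⌊Fs t⌋
            (Int.fract_add_floor (Fs t)).symm
      · obtain ⟨t', hv', hdeq, _, _, _⟩ := hQM (Fs t) hfA hfB (by
          have := hfrP
          rw [hPdef] at this
          simp only [Finset.mem_union, hfA, hfB, false_or] at this
          exact this)
        have htt' : t = t' := hFsaut.1.1 hdeq
        rw [hv', ← htt']
    refine ⟨θs, h0s, h1s, ?_⟩
    show Function.invFun u (s (F1 t)) = Fs t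
    rw [hsF1, ← huFs, huinv2]
  · by_cases hkA : ∀ a ∈ A, ∀ k : ℤ, F1 t ≠ a + k
    · have hkB : ¬ (∀ b ∈ B, ∀ k : ℤ, F2 t ≠ b + k) := fun h => hk ⟨hkA, h⟩
      push_neg at hkB
      obtain ⟨b, hb, k, hbk⟩ := hkB
      refine ⟨θ₂, h0', h1, ?_⟩
      show Function.invFun u (s (F1 t)) = F2 t
      rw [hsF1]
      conv_lhs => rw [hbk]
      rw [← hufixB b hb k, huinv2, ← hbk]
    · push_neg at hkA
      obtain ⟨a, ha, k, hak⟩ := hkA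
      refine ⟨θ₁, h0, h1', ?_⟩
      show Function.invFun u (s (F1 t)) = F1 t
      rw [hsF1]
      have hval : u (F1 t) = F2 t := by
        rw [hak, huA a ha k, ← hak, hsF1]
      rw [← hval, huinv2]


end TA

set_option maxHeartbeats 1000000 in
/-- if a timed language `L` is both `S`-invariant and
`S'`-invariant, and `fract S'' = fract S ∩ fract S'`, then `L` is
`S''`-invariant. -/
theorem sInvariant_of_fract_inter {Γ : Type*} [Fintype Γ]
    (L : Set (List (Γ × ℝ))) (hL : ∀ w ∈ L, IsTimedWord w)
    (S S' S'' : Set ℝ)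
    (hSfin : S.Finite) (hS'fin : S'.Finite) (hS''fin : S''.Finite)
    (hSpos : ∀ t ∈ S, 0 ≤ t) (hS'pos : ∀ t ∈ S', 0 ≤ t) (hS''pos : ∀ t ∈ S'', 0 ≤ t)
    (hS : SInvariant S L) (hS' : SInvariant S' L)
    (hfr : Int.fract '' S'' = Int.fract '' S ∩ Int.fract '' S') :
    SInvariant S'' L := by
  classical
  rcases Set.eq_empty_or_nonempty S with hSe | hSne
  · intro g hg hgfix w hw hgw
    exact hS g hg (by simp [hSe]) w hw hgw
  rcases Set.eq_empty_or_nonempty S' with hS'e | hS'ne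
  · intro g hg hgfix w hw hgw
    exact hS' g hg (by simp [hS'e]) w hw hgw
  intro f hf hfix w hw hfw
  set A : Finset ℝ := (hSfin.image Int.fract).toFinset with hAdef
  set B : Finset ℝ := (hS'fin.image Int.fract).toFinset with hBdef
  have hAmem : ∀ c : ℝ, c ∈ A ↔ c ∈ Int.fract '' S := fun c => Set.Finite.mem_toFinset _
  have hBmem : ∀ c : ℝ, c ∈ B ↔ c ∈ Int.fract '' S' := fun c => Set.Finite.mem_toFinset _
  have hAne : A.Nonempty := by
    obtain ⟨s₀, hs₀⟩ := hSne
    exact ⟨Int.fract s₀, (hAmem _).2 ⟨s₀, hs₀, rfl⟩⟩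
  have hA01 : ∀ p ∈ A, p ∈ Set.Ico (0:ℝ) 1 := by
    intro p hp
    obtain ⟨x, _, rfl⟩ := (hAmem p).1 hp
    exact ⟨Int.fract_nonneg x, Int.fract_lt_one x⟩
  have hB01 : ∀ p ∈ B, p ∈ Set.Ico (0:ℝ) 1 := by
    intro p hp
    obtain ⟨x, _, rfl⟩ := (hBmem p).1 hp
    exact ⟨Int.fract_nonneg x, Int.fract_lt_one x⟩
  have hkey : ∀ x : ℝ, f x = x → f (Int.fract x) = Int.fract x := by
    intro x hx
    have h4 := TA.aut_int hf (-⌊x⌋) x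
    have h5 : x + ((-⌊x⌋ : ℤ) : ℝ) = Int.fract x := by
      rw [Int.fract]; push_cast; ring
    rw [h5] at h4
    rw [hx] at h4
    rw [h5] at h4
    exact h4
  have hC : ∀ c ∈ A, c ∈ B → f c = c := by
    intro c hcA hcB
    have hmem : c ∈ Int.fract '' S'' := by
      rw [hfr]
      exact ⟨(hAmem c).1 hcA, (hBmem c).1 hcB⟩
    obtain ⟨s'', hs'', rfl⟩ := hmem
    exact hkey s'' (hfix s'' hs'')
  set M0 : ℝ := |f 0| + 1 with hM0def
  have hM0pos : 0 < M0 := by rw [hM0def]; positivity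
  have hbd : ∀ x, |f x - x| < M0 := fun x => TA.aut_bound hf x
  set pairs : Finset ℝ := ((A ×ˢ B).filter (fun p : ℝ × ℝ => p.1 ≠ p.2)).image
    (fun p : ℝ × ℝ => min |p.1 - p.2| (1 - |p.1 - p.2|)) with hpairsdef
  set δ : ℝ := (insert (1:ℝ) pairs).min' (Finset.insert_nonempty _ _) with hδdef
  have hδpos : 0 < δ := by
    rw [hδdef, Finset.lt_min'_iff]
    intro y hy
    rcases Finset.mem_insert.1 hy with rfl | hy
    · norm_num
    · rw [hpairsdef, Finset.mem_image] at hy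
      obtain ⟨p, hp, rfl⟩ := hy
      rw [Finset.mem_filter] at hp
      obtain ⟨hpm, hpne⟩ := hp
      rw [Finset.mem_product] at hpm
      have h1 := hA01 _ hpm.1
      have h2 := hB01 _ hpm.2
      have habs : |p.1 - p.2| < 1 := by
        rw [abs_lt]
        constructor
        · have := h1.1; have := h2.2; linarith [h1.1, h2.2]
        · linarith [h1.2, h2.1]
      have h0 : 0 < |p.1 - p.2| := abs_pos.2 (sub_ne_zero.2 hpne)
      exact lt_min h0 (by linarith)
  have hδ1 : δ ≤ 1 := Finset.min'_le _ _ (Finset.mem_insert_self _ _)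
  have hδle : ∀ a ∈ A, ∀ b ∈ B, a ≠ b → ∀ k : ℤ, δ ≤ |a - b + k| := by
    intro a ha b hb hne k
    have hmem : min |a - b| (1 - |a - b|) ∈ insert (1:ℝ) pairs := by
      apply Finset.mem_insert_of_mem
      rw [hpairsdef]
      exact Finset.mem_image_of_mem (fun p : ℝ × ℝ => min |p.1 - p.2| (1 - |p.1 - p.2|))
        ((Finset.mem_filter (a := (a, b))).2 ⟨Finset.mem_product.2 ⟨ha, hb⟩, hne⟩)
    have h1 : δ ≤ min |a - b| (1 - |a - b|) := by
      rw [hδdef]; exact Finset.min'_le _ _ hmem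
    have key : min |a - b| (1 - |a - b|) ≤ |a - b + k| := by
      rcases eq_or_ne k 0 with rfl | hk
      · simpa using min_le_left |a - b| (1 - |a - b|)
      · have h2 : (1:ℝ) ≤ |(k:ℝ)| := by
          rw [← Int.cast_abs]
          exact_mod_cast Int.one_le_abs hk
        have h4 := abs_add_le (a - b + (k:ℝ)) (b - a)
        have h5 : a - b + (k:ℝ) + (b - a) = k := by ring
        rw [h5] at h4
        have h6 : |b - a| = |a - b| := abs_sub_comm b a
        rw [h6] at h4
        exact le_trans (min_le_right _ _) (by linarith)
    linarith
  set n : ℕ := ⌈M0 / δ⌉₊ + 1 with hndef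
  have hnR : (0:ℝ) < n := by
    have : 0 < n := Nat.succ_pos _
    exact_mod_cast this
  have hgap : M0 / n < δ := by
    rw [div_lt_iff₀ hnR]
    have h1 : M0 / δ < (n:ℝ) := by
      calc M0/δ ≤ (⌈M0/δ⌉₊ : ℝ) := Nat.le_ceil _
      _ < n := by rw [hndef]; push_cast; linarith
    calc M0 = (M0 / δ) * δ := by field_simp
    _ < (n:ℝ) * δ := by exact mul_lt_mul_of_pos_right h1 hδpos
    _ = δ * n := mul_comm _ _
  set W : Finset ℝ := (w.map Prod.snd).toFinset with hWdef
  have hWpos : ∀ t ∈ W, 0 ≤ t ∧ 0 ≤ f t := by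
    intro t ht
    rw [hWdef, List.mem_toFinset, List.mem_map] at ht
    obtain ⟨p, hp, rfl⟩ := ht
    refine ⟨hw.1 p hp, ?_⟩
    exact hfw.1 (p.1, f p.2) (List.mem_map.2 ⟨p, hp, rfl⟩)
  set kb : ℝ → ℤ := fun t => ⌈|t| + M0 + 1⌉ with hkbdef
  set Efin : Finset ℝ := W.biUnion (fun t =>
    ((A ∪ B) ×ˢ (Finset.Icc (-(kb t)) (kb t))).image
      (fun pk => (pk.1 + (pk.2:ℝ) - t) / (f t - t))) with hEdef
  have hcover : ∀ t ∈ W, f t ≠ t → ∀ θ : ℝ, 0 < θ → θ < 1 → ∀ p, (p ∈ A ∨ p ∈ B) →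
      ∀ k : ℤ, TA.Fmix f θ t = p + k → θ ∈ Efin := by
    intro t ht hne θ hθ0 hθ1 p hp k heq
    have hpb : (0:ℝ) ≤ p ∧ p < 1 := by
      rcases hp with hp | hp
      · exact ⟨(hA01 p hp).1, (hA01 p hp).2⟩
      · exact ⟨(hB01 p hp).1, (hB01 p hp).2⟩
    rw [hEdef]
    apply Finset.mem_biUnion.2
    refine ⟨t, ht, ?_⟩
    apply Finset.mem_image.2
    refine ⟨(p, k), ?_, ?_⟩
    · rw [Finset.mem_product]
      constructor
      · rw [Finset.mem_union]; exact hp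
      · rw [Finset.mem_Icc]
        have h1 : TA.Fmix f θ t - t = θ * (f t - t) := by
          simp [TA.Fmix]; ring
        have h2 : |TA.Fmix f θ t - t| ≤ |f t - t| := by
          rw [h1, abs_mul, abs_of_pos hθ0]
          nlinarith [abs_nonneg (f t - t)]
        have h3 : |(k:ℝ)| ≤ |t| + M0 + 1 := by
          have h4 : (k:ℝ) = (TA.Fmix f θ t - t) + (t - p) := by rw [heq]; ring
          have h5 : |t - p| ≤ |t| + |p| := by
            calc |t - p| = |t + (-p)| := by ring_nf
            _ ≤ |t| + |(-p)| := abs_add_le _ _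
            _ = |t| + |p| := by rw [abs_neg]
          have h6 : |p| = p := abs_of_nonneg hpb.1
          calc |(k:ℝ)| = |(TA.Fmix f θ t - t) + (t - p)| := by rw [h4]
          _ ≤ |TA.Fmix f θ t - t| + |t - p| := abs_add_le _ _
          _ ≤ |t| + M0 + 1 := by
              have := hbd t
              rw [h6] at h5
              linarith [hpb.2]
        have h7 : ((kb t : ℤ) : ℝ) ≥ |t| + M0 + 1 := by
          rw [hkbdef]
          exact Int.le_ceil _
        constructor
        · have : -((kb t : ℤ) : ℝ) ≤ (k:ℝ) := by
            have := neg_abs_le (k:ℝ)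
            linarith
          exact_mod_cast this
        · have : (k:ℝ) ≤ ((kb t : ℤ) : ℝ) := by
            have := le_abs_self (k:ℝ)
            linarith
          exact_mod_cast this
    · have hd : f t - t ≠ 0 := sub_ne_zero.2 hne
      rw [div_eq_iff hd]
      have h2 : (1 - θ) * t + θ * f t = p + k := heq
      ring_nf at h2 ⊢
      linarith [h2]
  set U : Finset ℝ := (Finset.range (n+1)).image (fun i : ℕ => (i:ℝ)/(n:ℝ)) with hUdef
  set pool : Finset ℝ := insert 0 (U ∪ Efin) with hpooldef
  have h0pool : (0:ℝ) ∈ pool := by rw [hpooldef]; exact Finset.mem_insert_self _ _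
  clear_value A B M0 pairs δ n W kb Efin U pool
  have htimed : ∀ g : ℝ → ℝ, StrictMono g → (∀ t ∈ W, 0 ≤ g t) → IsTimedWord (actWord g w) := by
    intro g hm h0
    constructor
    · intro p hp
      simp only [actWord, List.mem_map] at hp
      obtain ⟨p₀, hp₀, rfl⟩ := hp
      exact h0 p₀.2 (by rw [hWdef, List.mem_toFinset, List.mem_map]; exact ⟨p₀, hp₀, rfl⟩)
    · simp only [actWord]
      unfold List.Chain'
      rw [List.isChain_map]
      exact List.IsChain.imp (fun a b hab => hm.monotone hab) hw.2
  have hnonnegF : ∀ t ∈ W, ∀ θ' : ℝ, 0 ≤ θ' → θ' ≤ 1 → 0 ≤ TA.Fmix f θ' t := by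
    intro t ht θ' h0' h1'
    have h2 := hWpos t ht
    have h3 := (TA.Fmix_between (f := f) h0' h1' t).1
    have h4 : (0:ℝ) ≤ min t (f t) := le_min h2.1 h2.2
    linarith
  have hacts : ∀ g h : ℝ → ℝ, actWord g (actWord h w) = actWord (fun x => g (h x)) w := by
    intro g h
    simp only [actWord, List.map_map]
    rfl
  have hact0 : actWord (TA.Fmix f 0) w = w := by
    rw [TA.Fmix_zero]
    simp [actWord]
  have main : ∀ m : ℕ, ∀ θ₂ : ℝ, 0 ≤ θ₂ → θ₂ ≤ 1 →
      (pool.filter (fun x => x < θ₂)).card ≤ m →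
      (w ∈ L ↔ actWord (TA.Fmix f θ₂) w ∈ L) := by
    intro m
    induction m with
    | zero =>
        intro θ₂ hθ0 hθ1 hcard
        have hze : θ₂ = 0 := by
          by_contra hne
          have hθpos : 0 < θ₂ := lt_of_le_of_ne hθ0 (Ne.symm hne)
          have hmem : (0:ℝ) ∈ pool.filter (fun x => x < θ₂) :=
            Finset.mem_filter.2 ⟨h0pool, hθpos⟩
          have := Finset.card_pos.2 ⟨0, hmem⟩
          omega
        rw [hze, hact0]
    | succ m ih =>
        intro θ₂ hθ0 hθ1 hcard
        rcases eq_or_lt_of_le hθ0 with hze | hθpos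
        · rw [← hze, hact0]
        · have hfil_ne : (pool.filter (fun x => x < θ₂)).Nonempty :=
            ⟨0, Finset.mem_filter.2 ⟨h0pool, hθpos⟩⟩
          set θ₁ := (pool.filter (fun x => x < θ₂)).max' hfil_ne with hθ₁def
          clear_value θ₁
          have hθ₁mem : θ₁ ∈ pool ∧ θ₁ < θ₂ := by
            have h := Finset.max'_mem _ hfil_ne
            rw [← hθ₁def, Finset.mem_filter] at h
            exact h
          have hθ₁lt : θ₁ < θ₂ := hθ₁mem.2
          have hle_θ₁ : ∀ x : ℝ, x ∈ pool → x < θ₂ → x ≤ θ₁ := by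
            intro x hx1 hx2
            rw [hθ₁def]
            apply Finset.le_max'
            exact Finset.mem_filter.2 ⟨hx1, hx2⟩
          have hθ₁0 : 0 ≤ θ₁ := hle_θ₁ 0 h0pool hθpos
          have hθ₁1 : θ₁ ≤ 1 := le_of_lt (lt_of_lt_of_le hθ₁lt hθ1)
          have hgapb : θ₂ - θ₁ ≤ 1 / n := by
            set j : ℤ := ⌈θ₂ * n⌉ - 1 with hjdef
            clear_value j
            have hcl := Int.le_ceil (θ₂ * n)
            have hcu := Int.ceil_lt_add_one (θ₂ * n)
            have hj1 : (j:ℝ) < θ₂ * n := by rw [hjdef]; push_cast; linarith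
            have hj2 : θ₂ * n ≤ (j:ℝ) + 1 := by rw [hjdef]; push_cast; linarith
            have hj0 : 0 ≤ j := by
              have hpos : (0:ℝ) < θ₂ * n := mul_pos hθpos hnR
              have : 0 < ⌈θ₂ * n⌉ := Int.ceil_pos.2 hpos
              omega
            have hjn : j ≤ n := by
              have h8 : (j:ℝ) < (n:ℝ) := by nlinarith [hj1, hnR]
              have h9 : j < (n:ℤ) := by exact_mod_cast h8
              omega
            have hjU : ((j:ℝ))/n ∈ U := by
              rw [hUdef]
              apply Finset.mem_image.2
              have hr : j.toNat < n + 1 := by omega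
              refine ⟨j.toNat, Finset.mem_range.2 hr, ?_⟩
              have hcast : ((j.toNat : ℕ) : ℝ) = (j : ℝ) := by
                exact_mod_cast Int.toNat_of_nonneg hj0
              rw [hcast]
            have hjlt : (j:ℝ)/n < θ₂ := by rw [div_lt_iff₀ hnR]; linarith
            have hjle : (j:ℝ)/n ≤ θ₁ := by
              apply hle_θ₁ _ ?_ hjlt
              rw [hpooldef]
              exact Finset.mem_insert_of_mem (Finset.mem_union_left _ hjU)
            have h6 : θ₂ ≤ ((j:ℝ)+1)/n := by rw [le_div_iff₀ hnR]; linarith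
            have h7 : ((j:ℝ)+1)/n - (j:ℝ)/n = 1/n := by field_simp; ring
            linarith
          have Hsep : ∀ x : ℝ, ∀ a ∈ A, ∀ b ∈ B, a ≠ b → ∀ k : ℤ,
              |TA.Fmix f θ₂ x - TA.Fmix f θ₁ x| < |a - b + k| := by
            intro x a ha b hb hne k
            rw [TA.Fmix_sub, abs_mul]
            have h1 : |θ₂ - θ₁| = θ₂ - θ₁ := abs_of_pos (by linarith)
            have h3 := hδle a ha b hb hne k
            have h4 : |θ₂ - θ₁| * |f x - x| < (1/n) * M0 := by
              calc |θ₂-θ₁| * |f x - x| ≤ (1/(n:ℝ)) * |f x - x| := by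
                    rw [h1]
                    apply mul_le_mul_of_nonneg_right (by linarith) (abs_nonneg _)
              _ < (1/(n:ℝ)) * M0 := by
                    apply mul_lt_mul_of_pos_left (hbd x) (by positivity)
            have h5 : (1/(n:ℝ)) * M0 = M0 / n := by ring
            linarith
          have Hnoev : ∀ t ∈ W, f t ≠ t → ∀ θ, θ₁ < θ → θ < θ₂ → ∀ p,
              (p ∈ A ∨ p ∈ B) → ∀ k : ℤ, TA.Fmix f θ t ≠ p + k := by
            intro t ht hne θ ha hb p hp k heq
            have hθ0' : 0 < θ := lt_of_le_of_lt hθ₁0 ha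
            have hθ1' : θ < 1 := lt_of_lt_of_le hb hθ1
            have hEmem := hcover t ht hne θ hθ0' hθ1' p hp k heq
            have hmem : θ ∈ pool := by
              rw [hpooldef]
              exact Finset.mem_insert_of_mem (Finset.mem_union_right _ hEmem)
            have := hle_θ₁ θ hmem hb
            linarith
          obtain ⟨u, v, hu_aut, hv_aut, hufixB, hvfixA, hsplit, hts⟩ :=
            TA.step_exists A B hAne hA01 hB01 W hf hC hθ₁0 hθ₁lt hθ1 Hsep Hnoev
          have hcard1 : (pool.filter (fun x => x < θ₁)).card ≤ m := by
            have hss : pool.filter (fun x => x < θ₁) ⊂ pool.filter (fun x => x < θ₂) := by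
              constructor
              · intro x hx
                rw [Finset.mem_filter] at hx ⊢
                exact ⟨hx.1, lt_trans hx.2 hθ₁lt⟩
              · intro hsub
                have hmem2 : θ₁ ∈ pool.filter (fun x => x < θ₂) :=
                  Finset.mem_filter.2 ⟨hθ₁mem.1, hθ₁lt⟩
                have := hsub hmem2
                rw [Finset.mem_filter] at this
                exact lt_irrefl _ this.2
            have := Finset.card_lt_card hss
            omega
          have ih1 := ih θ₁ hθ₁0 hθ₁1 hcard1
          -- the three timed words
          have hmono1 : StrictMono (TA.Fmix f θ₁) := TA.Fmix_mono hf hθ₁0 hθ₁1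
          have hmono2 : StrictMono (TA.Fmix f θ₂) := TA.Fmix_mono hf (le_of_lt hθpos) hθ1
          have htw1 : IsTimedWord (actWord (TA.Fmix f θ₁) w) :=
            htimed _ hmono1 (fun t ht => hnonnegF t ht θ₁ hθ₁0 hθ₁1)
          have htw2 : IsTimedWord (actWord (fun x => v (TA.Fmix f θ₁ x)) w) := by
            apply htimed _ (hv_aut.2.1.comp hmono1)
            intro t ht
            obtain ⟨θ', h0', h1', heq⟩ := hts t ht
            show 0 ≤ v (TA.Fmix f θ₁ t)
            rw [heq]
            exact hnonnegF t ht θ' h0' h1'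
          have htw3 : IsTimedWord (actWord (TA.Fmix f θ₂) w) :=
            htimed _ hmono2 (fun t ht => hnonnegF t ht θ₂ (le_of_lt hθpos) hθ1)
          -- S-fixing facts
          have hvfixS : ∀ t ∈ S, v t = t := by
            intro t ht
            have hmemA : Int.fract t ∈ A := (hAmem _).2 ⟨t, ht, rfl⟩
            have := hvfixA (Int.fract t) hmemA ⌊t⌋
            rwa [Int.fract_add_floor t] at this
          have hufixS' : ∀ t ∈ S', u t = t := by
            intro t ht
            have hmemB : Int.fract t ∈ B := (hBmem _).2 ⟨t, ht, rfl⟩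
            have := hufixB (Int.fract t) hmemB ⌊t⌋
            rwa [Int.fract_add_floor t] at this
          -- word equalities
          have heqv : actWord v (actWord (TA.Fmix f θ₁) w) =
              actWord (fun x => v (TA.Fmix f θ₁ x)) w := hacts v _
          have hequ : actWord u (actWord (fun x => v (TA.Fmix f θ₁ x)) w) =
              actWord (TA.Fmix f θ₂) w := by
            rw [hacts]
            have : (fun x => u (v (TA.Fmix f θ₁ x))) = TA.Fmix f θ₂ := funext hsplit
            rw [this]
          have step1 : (actWord (TA.Fmix f θ₁) w ∈ L ↔
              actWord (fun x => v (TA.Fmix f θ₁ x)) w ∈ L) := by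
            rw [← heqv]
            exact hS v hv_aut hvfixS (actWord (TA.Fmix f θ₁) w) htw1 (by rw [heqv]; exact htw2)
          have step2 : (actWord (fun x => v (TA.Fmix f θ₁ x)) w ∈ L ↔
              actWord (TA.Fmix f θ₂) w ∈ L) := by
            rw [← hequ]
            exact hS' u hu_aut hufixS' _ htw2 (by rw [hequ]; exact htw3)
          rw [ih1, step1, step2]
  have hfinal := main pool.card 1 zero_le_one le_rfl
    (Finset.card_le_card (Finset.filter_subset _ _))
  rw [TA.Fmix_one] at hfinal
  exact hfinal
end

section
/- For every timed language L over a finite alphabet Σ, the family of sets { fract(S) : S is a finite subset of ℝ≥0 and L is S-invariant }, if nonempty, has a least element with respect to set inclusion. -/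
/-- The family `{ fract S : S ⊆ ℝ≥0 finite, L is S-invariant }`. -/
def FractSupports {Γ : Type*} (L : Set (List (Γ × ℝ))) : Set (Set ℝ) :=
  {T | ∃ S : Set ℝ, S.Finite ∧ (∀ t ∈ S, 0 ≤ t) ∧ SInvariant S L ∧ T = Int.fract '' S}

namespace TAux

open Function Set

lemma taut_add_int {f : ℝ → ℝ} (hf : IsTimedAut f) (x : ℝ) (n : ℤ) :
    f (x + n) = f x + n := by
  induction n using Int.induction_on with
  | zero => simp
  | succ k ih =>
      have h1 : x + ((k : ℤ) + 1 : ℤ) = (x + (k : ℤ)) + 1 := by push_cast; ring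
      rw [h1, hf.2.2, ih]; push_cast; ring
  | pred k ih =>
      have h1 : x + ((-(k : ℤ) - 1 : ℤ)) + 1 = x + (-(k:ℤ) : ℤ) := by push_cast; ring
      have h2 := hf.2.2 (x + ((-(k : ℤ) - 1 : ℤ)))
      rw [h1, ih] at h2
      push_cast at h2 ⊢
      linarith

lemma taut_fix_int {f : ℝ → ℝ} (hf : IsTimedAut f) {x : ℝ} (hx : f x = x) (n : ℤ) :
    f (x + n) = x + n := by rw [taut_add_int hf, hx]

lemma taut_comp {f g : ℝ → ℝ} (hf : IsTimedAut f) (hg : IsTimedAut g) :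
    IsTimedAut (f ∘ g) :=
  ⟨hf.1.comp hg.1, hf.2.1.comp hg.2.1, fun t => by
    simp only [Function.comp_apply, hg.2.2, hf.2.2]⟩

lemma taut_invFun {f : ℝ → ℝ} (hf : IsTimedAut f) : IsTimedAut (Function.invFun f) := by
  have hli : Function.LeftInverse (Function.invFun f) f := Function.leftInverse_invFun hf.1.1
  have hri : Function.RightInverse (Function.invFun f) f := Function.rightInverse_invFun hf.1.2
  have hbij : Function.Bijective (Function.invFun f) :=
    ⟨hri.injective, hli.surjective⟩
  refine ⟨hbij, ?_, ?_⟩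
  · intro a b hab
    by_contra h
    have h2 : Function.invFun f b ≤ Function.invFun f a := not_lt.mp h
    have := hf.2.1.monotone h2
    rw [hri a, hri b] at this
    exact absurd hab (not_lt.mpr this)
  · intro t
    apply hf.1.1
    rw [hri, hf.2.2, hri]

end TAux

namespace TAux

open Function Set

/-! ### Elementary moves -/

noncomputable def emCore (l r p q s : ℝ) : ℝ :=
  if r ≤ s then s
  else if s ≤ p then l + (s - l) * (q - l) / (p - l)
  else r - (r - s) * (r - q) / (r - p)

noncomputable def em (l r p q t : ℝ) : ℝ :=
  (⌊t - l⌋ : ℝ) + emCore l r p q (t - ⌊t - l⌋)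

section EmCore

variable {l r p q : ℝ}

lemma emCore_of_ge {s : ℝ} (hs : r ≤ s) : emCore l r p q s = s := if_pos hs

lemma emCore_of_le {s : ℝ} (hs : s ≤ p) (hsr : s < r) :
    emCore l r p q s = l + (s - l) * (q - l) / (p - l) := by
  rw [emCore, if_neg (by push_neg; linarith), if_pos hs]

lemma emCore_of_mid {s : ℝ} (hps : p < s) (hsr : s < r) :
    emCore l r p q s = r - (r - s) * (r - q) / (r - p) := by
  rw [emCore, if_neg (by push_neg; linarith), if_neg (by push_neg; linarith)]

lemma emCore_left (hlp : l < p) (hpr : p < r) : emCore l r p q l = l := by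
  rw [emCore_of_le hlp.le (by linarith)]; simp

lemma emCore_p (hlp : l < p) (hpr : p < r) : emCore l r p q p = q := by
  rw [emCore_of_le le_rfl hpr]
  have h : p - l ≠ 0 := sub_ne_zero.mpr hlp.ne'
  field_simp
  ring

lemma emCore_mem (hlp : l < p) (hpr : p < r) (hlq : l < q) (hqr : q < r)
    {s : ℝ} (hls : l ≤ s) (hsr : s < r) :
    emCore l r p q s ∈ Set.Ico l r := by
  rcases le_or_gt s p with h | h
  · rw [emCore_of_le h hsr]
    have hd : (0:ℝ) < p - l := by linarith
    have hq : (0:ℝ) < q - l := by linarith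
    constructor
    · have h0 : 0 ≤ (s - l) * (q - l) / (p - l) :=
        div_nonneg (mul_nonneg (by linarith) (by linarith)) hd.le
      linarith
    · have key : (l + (s - l) * (q - l) / (p - l)) - q = ((s - p) * (q - l)) / (p - l) := by
        field_simp; ring
      have h2 : ((s - p) * (q - l)) / (p - l) ≤ 0 :=
        div_nonpos_of_nonpos_of_nonneg (by nlinarith) hd.le
      linarith
  · rw [emCore_of_mid h hsr]
    have hd : (0:ℝ) < r - p := by linarith
    have hq : (0:ℝ) < r - q := by linarith
    constructor
    · have key : (r - (r - s) * (r - q) / (r - p)) - q = ((s - p) * (r - q)) / (r - p) := by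
        field_simp; ring
      have h2 : 0 ≤ ((s - p) * (r - q)) / (r - p) := div_nonneg (by nlinarith) hd.le
      linarith
    · have h3 : 0 < (r - s) * (r - q) / (r - p) := div_pos (by nlinarith) hd
      linarith

lemma emCore_stricton (hlp : l < p) (hpr : p < r) (hlq : l < q) (hqr : q < r)
    {s s' : ℝ} (hls : l ≤ s) (hss' : s < s') (hs' : s' < l + 1) :
    emCore l r p q s < emCore l r p q s' := by
  have hd : (0:ℝ) < p - l := by linarith
  have hq : (0:ℝ) < q - l := by linarith
  have hd2 : (0:ℝ) < r - p := by linarith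
  have hq2 : (0:ℝ) < r - q := by linarith
  rcases le_or_gt r s with h1 | h1
  · rw [emCore_of_ge h1, emCore_of_ge (by linarith)]; exact hss'
  rcases le_or_gt r s' with h2 | h2
  · rw [emCore_of_ge h2]
    have := emCore_mem hlp hpr hlq hqr hls h1
    linarith [this.2]
  -- both < r
  rcases le_or_gt s p with h3 | h3
  · rcases le_or_gt s' p with h4 | h4
    · rw [emCore_of_le h3 h1, emCore_of_le h4 h2]
      have key : (l + (s' - l) * (q - l) / (p - l)) - (l + (s - l) * (q - l) / (p - l))
          = (s' - s) * ((q - l) / (p - l)) := by field_simp; ring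
      nlinarith [mul_pos (show (0:ℝ) < s' - s by linarith) (div_pos hq hd)]
    · rw [emCore_of_le h3 h1, emCore_of_mid h4 h2]
      have k1 : (l + (s - l) * (q - l) / (p - l)) - q = ((s - p) * (q - l)) / (p - l) := by
        field_simp; ring
      have k2 : (r - (r - s') * (r - q) / (r - p)) - q = ((s' - p) * (r - q)) / (r - p) := by
        field_simp; ring
      have h5 : ((s - p) * (q - l)) / (p - l) ≤ 0 :=
        div_nonpos_of_nonpos_of_nonneg (by nlinarith) hd.le
      have h6 : 0 < ((s' - p) * (r - q)) / (r - p) := div_pos (by nlinarith) hd2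
      linarith
  · rw [emCore_of_mid h3 h1, emCore_of_mid (by linarith) h2]
    have key : (r - (r - s') * (r - q) / (r - p)) - (r - (r - s) * (r - q) / (r - p))
        = (s' - s) * ((r - q) / (r - p)) := by field_simp; ring
    nlinarith [mul_pos (show (0:ℝ) < s' - s by linarith) (div_pos hq2 hd2)]

lemma emCore_inv (hlp : l < p) (hpr : p < r) (hlq : l < q) (hqr : q < r)
    {s : ℝ} (hls : l ≤ s) :
    emCore l r q p (emCore l r p q s) = s := by
  have hd : (0:ℝ) < p - l := by linarith
  have hq : (0:ℝ) < q - l := by linarith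
  have hd2 : (0:ℝ) < r - p := by linarith
  have hq2 : (0:ℝ) < r - q := by linarith
  rcases le_or_gt r s with h1 | h1
  · rw [emCore_of_ge h1, emCore_of_ge h1]
  rcases le_or_gt s p with h3 | h3
  · rw [emCore_of_le h3 h1]
    have hy : l + (s - l) * (q - l) / (p - l) ≤ q := by
      have key : (l + (s - l) * (q - l) / (p - l)) - q = ((s - p) * (q - l)) / (p - l) := by
        field_simp; ring
      have h2 : ((s - p) * (q - l)) / (p - l) ≤ 0 :=
        div_nonpos_of_nonpos_of_nonneg (by nlinarith) hd.le
      linarith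
    rw [emCore_of_le hy (by linarith)]
    field_simp
    try ring
  · rw [emCore_of_mid h3 h1]
    have hy : q < r - (r - s) * (r - q) / (r - p) := by
      have k2 : (r - (r - s) * (r - q) / (r - p)) - q = ((s - p) * (r - q)) / (r - p) := by
        field_simp; ring
      have h6 : 0 < ((s - p) * (r - q)) / (r - p) := div_pos (by nlinarith) hd2
      linarith
    have hy2 : r - (r - s) * (r - q) / (r - p) < r := by
      have h3' : 0 < (r - s) * (r - q) / (r - p) := div_pos (by nlinarith) hd2
      linarith
    rw [emCore_of_mid hy hy2]
    field_simp
    try ring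

lemma emCore_le_self (hlp : l < p) (hpr : p < r) (hlq : l < q) (hqr : q < r)
    (hqp : q ≤ p) {s : ℝ} (hls : l ≤ s) : emCore l r p q s ≤ s := by
  have hd : (0:ℝ) < p - l := by linarith
  have hd2 : (0:ℝ) < r - p := by linarith
  rcases le_or_gt r s with h1 | h1
  · rw [emCore_of_ge h1]
  rcases le_or_gt s p with h3 | h3
  · rw [emCore_of_le h3 h1]
    have key : (l + (s - l) * (q - l) / (p - l)) - s = ((s - l) * (q - p)) / (p - l) := by
      field_simp; ring
    have h2 : ((s - l) * (q - p)) / (p - l) ≤ 0 :=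
      div_nonpos_of_nonpos_of_nonneg (by nlinarith) hd.le
    linarith
  · rw [emCore_of_mid h3 h1]
    have key : (r - (r - s) * (r - q) / (r - p)) - s = ((r - s) * (q - p)) / (r - p) := by
      field_simp; ring
    have h2 : ((r - s) * (q - p)) / (r - p) ≤ 0 :=
      div_nonpos_of_nonpos_of_nonneg (by nlinarith) hd2.le
    linarith

lemma emCore_ge_self (hlp : l < p) (hpr : p < r) (hlq : l < q) (hqr : q < r)
    (hpq : p ≤ q) {s : ℝ} (hls : l ≤ s) : s ≤ emCore l r p q s := by
  have hd : (0:ℝ) < p - l := by linarith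
  have hd2 : (0:ℝ) < r - p := by linarith
  rcases le_or_gt r s with h1 | h1
  · rw [emCore_of_ge h1]
  rcases le_or_gt s p with h3 | h3
  · rw [emCore_of_le h3 h1]
    have key : (l + (s - l) * (q - l) / (p - l)) - s = ((s - l) * (q - p)) / (p - l) := by
      field_simp; ring
    have h2 : 0 ≤ ((s - l) * (q - p)) / (p - l) := div_nonneg (by nlinarith) hd.le
    linarith
  · rw [emCore_of_mid h3 h1]
    have key : (r - (r - s) * (r - q) / (r - p)) - s = ((r - s) * (q - p)) / (r - p) := by
      field_simp; ring
    have h2 : 0 ≤ ((r - s) * (q - p)) / (r - p) := div_nonneg (by nlinarith) hd2.le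
    linarith

end EmCore
end TAux

namespace TAux
open Function Set

section Em

variable {l r p q : ℝ} 

lemma sub_floor_mem (l t : ℝ) : t - (⌊t - l⌋ : ℝ) ∈ Set.Ico l (l + 1) := by
  have h1 := Int.floor_le (t - l)
  have h2 := Int.lt_floor_add_one (t - l)
  constructor <;> [linarith; linarith]

lemma em_floor_eq (hlp : l < p) (hpr : p < r) (hlq : l < q) (hqr : q < r) (hr1 : r < l + 1)
    (t : ℝ) : ⌊em l r p q t - l⌋ = ⌊t - l⌋ := by
  have hm := sub_floor_mem l t
  have hcore : emCore l r p q (t - ⌊t - l⌋) ∈ Set.Ico l (l + 1) := by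
    rcases le_or_gt r (t - ⌊t - l⌋) with h | h
    · rw [emCore_of_ge h]; exact hm
    · have := emCore_mem hlp hpr hlq hqr hm.1 h
      exact ⟨this.1, by linarith [this.2]⟩
  rw [em]
  have : (⌊t - l⌋ : ℝ) + emCore l r p q (t - ⌊t - l⌋) - l
      = emCore l r p q (t - ⌊t - l⌋) - l + ⌊t - l⌋ := by ring
  rw [this, Int.floor_add_intCast]
  have : ⌊emCore l r p q (t - ⌊t - l⌋) - l⌋ = 0 :=
    Int.floor_eq_zero_iff.mpr (Set.mem_Ico.mpr ⟨by linarith [hcore.1], by linarith [hcore.2]⟩)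
  omega

lemma em_strictMono (hlp : l < p) (hpr : p < r) (hlq : l < q) (hqr : q < r) (hr1 : r < l + 1) :
    StrictMono (em l r p q) := by
  intro t t' htt'
  have hm := sub_floor_mem l t
  have hm' := sub_floor_mem l t'
  have hn : ⌊t - l⌋ ≤ ⌊t' - l⌋ := Int.floor_le_floor (by linarith)
  rcases eq_or_lt_of_le hn with he | hlt
  · rw [em, em, ← he]
    have : t - (⌊t - l⌋ : ℝ) < t' - (⌊t - l⌋ : ℝ) := by linarith
    have hstep : emCore l r p q (t - ⌊t - l⌋) < emCore l r p q (t' - ⌊t' - l⌋) := by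
      rw [← he]
      exact emCore_stricton hlp hpr hlq hqr hm.1 this (by rw [he]; exact hm'.2)
    rw [← he] at hstep
    linarith
  · rw [em, em]
    have hc : emCore l r p q (t - ⌊t - l⌋) ∈ Set.Ico l (l + 1) := by
      rcases le_or_gt r (t - ⌊t - l⌋) with h | h
      · rw [emCore_of_ge h]; exact hm
      · have := emCore_mem hlp hpr hlq hqr hm.1 h
        exact ⟨this.1, by linarith [this.2]⟩
    have hc' : emCore l r p q (t' - ⌊t' - l⌋) ∈ Set.Ico l (l + 1) := by
      rcases le_or_gt r (t' - ⌊t' - l⌋) with h | h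
      · rw [emCore_of_ge h]; exact hm'
      · have := emCore_mem hlp hpr hlq hqr hm'.1 h
        exact ⟨this.1, by linarith [this.2]⟩
    have : ((⌊t - l⌋ : ℤ) : ℝ) + 1 ≤ ((⌊t' - l⌋ : ℤ) : ℝ) := by exact_mod_cast hlt
    linarith [hc.2, hc'.1]

lemma em_add_one (t : ℝ) : em l r p q (t + 1) = em l r p q t + 1 := by
  have : t + 1 - l = (t - l) + 1 := by ring
  rw [em, em, this, Int.floor_add_one]
  push_cast
  have : t + 1 - (⌊t - l⌋ + 1 : ℝ) = t - ⌊t - l⌋ := by ring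
  rw [this]
  ring

lemma em_left_inv (hlp : l < p) (hpr : p < r) (hlq : l < q) (hqr : q < r) (hr1 : r < l + 1)
    (t : ℝ) : em l r q p (em l r p q t) = t := by
  conv_lhs => rw [em]
  rw [em_floor_eq hlp hpr hlq hqr hr1]
  have hm := sub_floor_mem l t
  have h2 : em l r p q t - (⌊t - l⌋ : ℝ) = emCore l r p q (t - ⌊t - l⌋) := by
    rw [em]; ring
  rw [h2, emCore_inv hlp hpr hlq hqr hm.1]
  ring

lemma em_taut (hlp : l < p) (hpr : p < r) (hlq : l < q) (hqr : q < r) (hr1 : r < l + 1) :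
    IsTimedAut (em l r p q) := by
  refine ⟨⟨?_, ?_⟩, em_strictMono hlp hpr hlq hqr hr1, em_add_one⟩
  · intro a b hab
    have := congrArg (em l r q p) hab
    rwa [em_left_inv hlp hpr hlq hqr hr1, em_left_inv hlp hpr hlq hqr hr1] at this
  · intro y
    exact ⟨em l r q p y, em_left_inv hlq hqr hlp hpr hr1 y⟩

lemma em_map (hlp : l < p) (hpr : p < r) (hlq : l < q) (hqr : q < r) (hr1 : r < l + 1)
    (n : ℤ) : em l r p q (p + n) = q + n := by
  have hfl : ⌊p + (n:ℝ) - l⌋ = n := by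
    have : p + (n:ℝ) - l = (p - l) + n := by ring
    rw [this, Int.floor_add_intCast]
    have : ⌊p - l⌋ = 0 :=
      Int.floor_eq_zero_iff.mpr (Set.mem_Ico.mpr ⟨by linarith, by linarith⟩)
    omega
  rw [em, hfl]
  have : p + (n:ℝ) - n = p := by ring
  rw [this, emCore_p hlp hpr]
  ring

lemma em_fix (hlp : l < p) (hpr : p < r) (hlq : l < q) (hqr : q < r) (hr1 : r < l + 1)
    {t : ℝ} (h : ∀ n : ℤ, t - n ∉ Set.Ioo l r) : em l r p q t = t := by
  have hm := sub_floor_mem l t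
  have hni := h ⌊t - l⌋
  rw [em]
  rcases le_or_gt r (t - ⌊t - l⌋) with h1 | h1
  · rw [emCore_of_ge h1]; ring
  · have hle : t - (⌊t - l⌋:ℝ) ≤ l := by
      by_contra hcon
      exact hni ⟨by push_neg at hcon; exact hcon, h1⟩
    have heq : t - (⌊t - l⌋:ℝ) = l := le_antisymm hle hm.1
    rw [heq, emCore_left hlp hpr]
    linarith

lemma em_mem_Ioo (hlp : l < p) (hpr : p < r) (hlq : l < q) (hqr : q < r) (hr1 : r < l + 1)
    {t : ℝ} {n : ℤ} (h : t - n ∈ Set.Ioo l r) : em l r p q t - n ∈ Set.Ioo l r := by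
  have hfl : ⌊t - l⌋ = n := by
    have h0 : t - l - n ∈ Set.Ico (0:ℝ) 1 := ⟨by linarith [h.1], by linarith [h.2]⟩
    have : ⌊t - l - (n:ℝ)⌋ = 0 := Int.floor_eq_zero_iff.mpr (Set.mem_Ico.mpr ⟨h0.1, h0.2⟩)
    have h2 : t - l - (n:ℝ) = (t - l) + (-n : ℤ) := by push_cast; ring
    rw [h2, Int.floor_add_intCast] at this
    omega
  have hval : em l r p q t = (n:ℝ) + emCore l r p q (t - n) := by
    rw [em, hfl]
  have hmem := emCore_mem hlp hpr hlq hqr (le_of_lt h.1) h.2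
  have hne : emCore l r p q (t - n) ≠ l := by
    intro hcon
    have hst := emCore_stricton hlp hpr hlq hqr (le_refl l) h.1 (by linarith [h.2])
    rw [emCore_left hlp hpr, hcon] at hst
    exact lt_irrefl l hst
  constructor
  · rw [hval]
    have := lt_of_le_of_ne hmem.1 (Ne.symm hne)
    linarith
  · rw [hval]
    linarith [hmem.2]

lemma em_le_self (hlp : l < p) (hpr : p < r) (hlq : l < q) (hqr : q < r) (hr1 : r < l + 1)
    (hqp : q ≤ p) (t : ℝ) : em l r p q t ≤ t := by
  have hm := sub_floor_mem l t
  rw [em]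
  have := emCore_le_self hlp hpr hlq hqr hqp hm.1
  linarith

lemma em_ge_self (hlp : l < p) (hpr : p < r) (hlq : l < q) (hqr : q < r) (hr1 : r < l + 1)
    (hpq : p ≤ q) (t : ℝ) : t ≤ em l r p q t := by
  have hm := sub_floor_mem l t
  rw [em]
  have := emCore_ge_self hlp hpr hlq hqr hpq hm.1
  linarith

end Em
end TAux

namespace TAux
open Function Set

/-! ### The straight-line isotopy -/

noncomputable def fs (f : ℝ → ℝ) (s : ℝ) (x : ℝ) : ℝ := x + s * (f x - x)

section Fs

variable {f : ℝ → ℝ} (hf : IsTimedAut f)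

lemma taut_continuous (hf : IsTimedAut f) : Continuous f := by
  rw [← StrictMono.coe_orderIsoOfSurjective f hf.2.1 hf.1.2]
  exact OrderIso.continuous _

lemma fs_zero (x : ℝ) : fs f 0 x = x := by simp [fs]

lemma fs_one (x : ℝ) : fs f 1 x = f x := by simp [fs]

lemma fs_fix {s x : ℝ} (hx : f x = x) : fs f s x = x := by simp [fs, hx]

include hf in
lemma fs_add_int (s : ℝ) (x : ℝ) (n : ℤ) : fs f s (x + n) = fs f s x + n := by
  rw [fs, fs, taut_add_int hf]
  ring

include hf in
lemma fs_strictMono {s : ℝ} (h0 : 0 ≤ s) (h1 : s ≤ 1) : StrictMono (fs f s) := by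
  intro x y hxy
  rcases eq_or_lt_of_le h0 with hs | hs
  · rw [fs, fs, ← hs]; simpa using hxy
  · have hfxy : f x < f y := hf.2.1 hxy
    rw [fs, fs]
    nlinarith

include hf in
lemma fs_continuous (s : ℝ) : Continuous (fs f s) := by
  have := taut_continuous hf
  unfold fs
  fun_prop

include hf in
lemma fs_surjective {s : ℝ} (h0 : 0 ≤ s) (h1 : s ≤ 1) : Surjective (fs f s) := by
  intro y
  obtain ⟨n, hn⟩ : ∃ n : ℤ, fs f s 0 - n ≤ y ∧ y ≤ fs f s 0 + n := by
    refine ⟨⌈|y - fs f s 0|⌉, ?_, ?_⟩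
    · have hc := Int.le_ceil |y - fs f s 0|
      have e1 : fs f s 0 - y ≤ |y - fs f s 0| := by
        rw [abs_sub_comm]; exact le_abs_self _
      linarith
    · have hc := Int.le_ceil |y - fs f s 0|
      linarith [le_abs_self (y - fs f s 0)]
  have hn0 : (0:ℝ) ≤ n := by
    have h3 := hn.1; have h4 := hn.2; linarith
  have hl : fs f s ((0:ℝ) + (-n : ℤ)) = fs f s 0 - n := by
    rw [fs_add_int hf]; push_cast; ring
  have hr : fs f s ((0:ℝ) + (n : ℤ)) = fs f s 0 + n := by
    rw [fs_add_int hf]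
  have hmono : ((0:ℝ) + (-n:ℤ)) ≤ ((0:ℝ) + (n:ℤ)) := by push_cast; linarith
  have hivt := intermediate_value_Icc hmono (fs_continuous hf s).continuousOn
  have : y ∈ Set.Icc (fs f s ((0:ℝ) + (-n:ℤ))) (fs f s ((0:ℝ) + (n:ℤ))) := by
    rw [hl, hr]; exact ⟨hn.1, hn.2⟩
  obtain ⟨x, _, hx⟩ := hivt this
  exact ⟨x, hx⟩

include hf in
lemma fs_taut {s : ℝ} (h0 : 0 ≤ s) (h1 : s ≤ 1) : IsTimedAut (fs f s) :=
  ⟨⟨(fs_strictMono hf h0 h1).injective, fs_surjective hf h0 h1⟩,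
    fs_strictMono hf h0 h1,
    fun t => by
      have := fs_add_int hf s t 1
      push_cast at this
      simpa using this⟩

include hf in
lemma taut_bound (x : ℝ) : |f x - x| ≤ |f 0| + 1 := by
  have key : ∀ y ∈ Set.Ico (0:ℝ) 1, |f y - y| ≤ |f 0| + 1 := by
    intro y hy
    have h1 : f 0 ≤ f y := hf.2.1.monotone hy.1
    have h2 : f y < f 1 := hf.2.1 hy.2
    have h3 : f 1 = f 0 + 1 := by
      have := hf.2.2 0
      simpa using this
    rw [abs_le]
    constructor
    · have := neg_abs_le (f 0)
      nlinarith [hy.1, hy.2]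
    · have := le_abs_self (f 0)
      nlinarith [hy.1, hy.2]
  have hx : x = (x - ⌊x⌋) + (⌊x⌋ : ℤ) := by push_cast; ring
  have hmem : x - (⌊x⌋:ℝ) ∈ Set.Ico (0:ℝ) 1 := by
    constructor
    · linarith [Int.floor_le x]
    · linarith [Int.lt_floor_add_one x]
  have := key _ hmem
  calc |f x - x| = |f ((x - ⌊x⌋) + (⌊x⌋:ℤ)) - ((x - ⌊x⌋) + (⌊x⌋:ℤ))| := by rw [← hx]
    _ = |f (x - ⌊x⌋) - (x - ⌊x⌋)| := by rw [taut_add_int hf]; ring_nf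
    _ ≤ |f 0| + 1 := this

include hf in
lemma fs_dist (s s' x : ℝ) : |fs f s' x - fs f s x| ≤ |s' - s| * (|f 0| + 1) := by
  have h1 : fs f s' x - fs f s x = (s' - s) * (f x - x) := by rw [fs, fs]; ring
  rw [h1, abs_mul]
  exact mul_le_mul_of_nonneg_left (taut_bound hf x) (abs_nonneg _)

lemma fs_nonneg {s x : ℝ} (h0 : 0 ≤ s) (h1 : s ≤ 1) (hx : 0 ≤ x) (hfx : 0 ≤ f x) :
    0 ≤ fs f s x := by
  rw [fs]; nlinarith

end Fs
end TAux

namespace TAux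
open Function Set

/-! ### Products of elementary moves -/

noncomputable def V (ε : ℝ) (pa : ℝ → ℝ) : List ℝ → ℝ → ℝ
  | [], x => x
  | a :: t, x => em (a - ε) (a + ε) (pa a) a (V ε pa t x)

noncomputable def Vinv (ε : ℝ) (pa : ℝ → ℝ) : List ℝ → ℝ → ℝ
  | [], x => x
  | a :: t, x => Vinv ε pa t (em (a - ε) (a + ε) a (pa a) x)

/-- `x` is at distance at least `ε` from the class of `a`. -/
def Far (ε a x : ℝ) : Prop := ∀ n : ℤ, ε ≤ |x - (a + n)|

/-- Two classes are `3ε`-separated. -/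
def Sep (ε a b : ℝ) : Prop := ∀ k : ℤ, 3 * ε ≤ |a - b + k|

section VV

variable {ε : ℝ} {pa : ℝ → ℝ}

lemma good_em (hε : 0 < ε) (hε4 : ε ≤ 1/4) {a : ℝ} (hg : |pa a - a| < ε) :
    a - ε < pa a ∧ pa a < a + ε ∧ a - ε < a ∧ a < a + ε ∧ a + ε < (a - ε) + 1 := by
  have h1 := abs_lt.mp hg
  refine ⟨by linarith [h1.1], by linarith [h1.2], by linarith, by linarith, by linarith⟩

lemma far_of_sep {a b x : ℝ} (hsep : Sep ε a b) (hε : 0 < ε) {n : ℤ}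
    (hx : |x - (b + n)| ≤ ε) : Far ε a x := by
  intro m
  have h := hsep (m - n)
  push_cast at h
  have h2 : a - b + ((m:ℝ) - (n:ℝ)) = (x - (b + n)) + -(x - (a + m)) := by ring
  rw [h2] at h
  have h3 := abs_add_le (x - (b + (n:ℝ))) (-(x - (a + (m:ℝ))))
  rw [abs_neg] at h3
  linarith

lemma sep_symm {a b : ℝ} (h : Sep ε a b) : Sep ε b a := by
  intro k
  have := h (-k)
  have h2 : |b - a + k| = |a - b + (-k : ℤ)| := by
    push_cast
    rw [show (a - b + -(k:ℝ)) = -(b - a + k) by ring, abs_neg]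
  rw [h2]
  exact this

lemma V_taut (hε : 0 < ε) (hε4 : ε ≤ 1/4) (la : List ℝ) (hg : ∀ a ∈ la, |pa a - a| < ε) :
    IsTimedAut (V ε pa la) := by
  induction la with
  | nil =>
      exact ⟨Function.bijective_id, strictMono_id, fun t => rfl⟩
  | cons b t ih =>
      have hgb := good_em hε hε4 (hg b (by simp))
      have h1 := em_taut hgb.1 hgb.2.1 hgb.2.2.1 hgb.2.2.2.1 hgb.2.2.2.2
      have h2 := ih (fun a ha => hg a (by simp [ha]))
      exact taut_comp h1 h2

lemma Vinv_taut (hε : 0 < ε) (hε4 : ε ≤ 1/4) (la : List ℝ) (hg : ∀ a ∈ la, |pa a - a| < ε) :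
    IsTimedAut (Vinv ε pa la) := by
  induction la with
  | nil => exact ⟨Function.bijective_id, strictMono_id, fun t => rfl⟩
  | cons b t ih =>
      have hgb := good_em hε hε4 (hg b (by simp))
      have h1 := em_taut hgb.2.2.1 hgb.2.2.2.1 hgb.1 hgb.2.1 hgb.2.2.2.2
      have h2 := ih (fun a ha => hg a (by simp [ha]))
      exact taut_comp h2 h1

lemma em_fix_far (hε : 0 < ε) (hε4 : ε ≤ 1/4) {a x : ℝ} (hg : |pa a - a| < ε) (hfar : Far ε a x) :
    em (a - ε) (a + ε) (pa a) a x = x := by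
  have hgb := good_em hε hε4 hg
  apply em_fix hgb.1 hgb.2.1 hgb.2.2.1 hgb.2.2.2.1 hgb.2.2.2.2
  intro n hmem
  have h1 := hfar n
  have h2 : |x - (a + n)| < ε := by
    rw [abs_lt]
    constructor
    · have := hmem.1; push_cast at this ⊢; linarith
    · have := hmem.2; push_cast at this ⊢; linarith
  linarith

lemma em_fix_far' (hε : 0 < ε) (hε4 : ε ≤ 1/4) {a x : ℝ} (hg : |pa a - a| < ε) (hfar : Far ε a x) :
    em (a - ε) (a + ε) a (pa a) x = x := by
  have hgb := good_em hε hε4 hg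
  apply em_fix hgb.2.2.1 hgb.2.2.2.1 hgb.1 hgb.2.1 hgb.2.2.2.2
  intro n hmem
  have h1 := hfar n
  have h2 : |x - (a + n)| < ε := by
    rw [abs_lt]
    constructor
    · have := hmem.1; push_cast at this ⊢; linarith
    · have := hmem.2; push_cast at this ⊢; linarith
  linarith

lemma V_fix_far (hε : 0 < ε) (hε4 : ε ≤ 1/4) (la : List ℝ) (hg : ∀ a ∈ la, |pa a - a| < ε)
    (hfar : ∀ a ∈ la, Far ε a x) : V ε pa la x = x := by
  induction la with
  | nil => rfl
  | cons b t ih =>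
      rw [V, ih (fun a ha => hg a (by simp [ha])) (fun a ha => hfar a (by simp [ha]))]
      exact em_fix_far hε hε4 (hg b (by simp)) (hfar b (by simp))

lemma Vinv_fix_far (hε : 0 < ε) (hε4 : ε ≤ 1/4) (la : List ℝ) (hg : ∀ a ∈ la, |pa a - a| < ε)
    (hfar : ∀ a ∈ la, Far ε a x) : Vinv ε pa la x = x := by
  induction la with
  | nil => rfl
  | cons b t ih =>
      rw [Vinv, em_fix_far' hε hε4 (hg b (by simp)) (hfar b (by simp))]
      exact ih (fun a ha => hg a (by simp [ha])) (fun a ha => hfar a (by simp [ha]))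

lemma Vinv_V (hε : 0 < ε) (hε4 : ε ≤ 1/4) (la : List ℝ) (hg : ∀ a ∈ la, |pa a - a| < ε) (x : ℝ) :
    Vinv ε pa la (V ε pa la x) = x := by
  induction la with
  | nil => rfl
  | cons b t ih =>
      have hgb := good_em hε hε4 (hg b (by simp))
      rw [V, Vinv, em_left_inv hgb.1 hgb.2.1 hgb.2.2.1 hgb.2.2.2.1 hgb.2.2.2.2]
      exact ih (fun a ha => hg a (by simp [ha])) 

end VV
end TAux

namespace TAux
open Function Set

section VW

variable {ε : ℝ} {pa : ℝ → ℝ}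

lemma V_map (hε : 0 < ε) (hε4 : ε ≤ 1/4) (la : List ℝ)
    (hg : ∀ a ∈ la, |pa a - a| < ε) (hsep : la.Pairwise (Sep ε))
    {a : ℝ} (ha : a ∈ la) (n : ℤ) : V ε pa la (pa a + n) = a + n := by
  induction la with
  | nil => simp at ha
  | cons b t ih =>
      have hgb := good_em hε hε4 (hg b (by simp))
      rcases List.mem_cons.mp ha with rfl | hat
      · rw [V, V_fix_far hε hε4 t (fun a' ha' => hg a' (by simp [ha'])) ?_]
        · exact em_map hgb.1 hgb.2.1 hgb.2.2.1 hgb.2.2.2.1 hgb.2.2.2.2 n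
        · intro a' ha'
          have hsep' : Sep ε a' a := sep_symm ((List.pairwise_cons.mp hsep).1 a' ha')
          exact far_of_sep hsep' hε (n := n) (by
            have : pa a + (n:ℝ) - (a + n) = pa a - a := by ring
            rw [this]; exact (hg a (by simp)).le)
      · rw [V, ih (fun a' ha' => hg a' (by simp [ha'])) (List.pairwise_cons.mp hsep).2 hat]
        apply em_fix_far hε hε4 (hg b (by simp))
        have hsep' : Sep ε b a := (List.pairwise_cons.mp hsep).1 a hat
        exact far_of_sep hsep' hε (n := n) (by
          have : a + (n:ℝ) - (a + n) = 0 := by ring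
          rw [this, abs_zero]; exact hε.le)

lemma Vinv_map (hε : 0 < ε) (hε4 : ε ≤ 1/4) (la : List ℝ)
    (hg : ∀ a ∈ la, |pa a - a| < ε) (hsep : la.Pairwise (Sep ε))
    {a : ℝ} (ha : a ∈ la) (n : ℤ) : Vinv ε pa la (a + n) = pa a + n := by
  induction la with
  | nil => simp at ha
  | cons b t ih =>
      have hgb := good_em hε hε4 (hg b (by simp))
      rcases List.mem_cons.mp ha with rfl | hat
      · rw [Vinv, em_map hgb.2.2.1 hgb.2.2.2.1 hgb.1 hgb.2.1 hgb.2.2.2.2 n]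
        apply Vinv_fix_far hε hε4 t (fun a' ha' => hg a' (by simp [ha']))
        intro a' ha'
        have hsep' : Sep ε a' a := sep_symm ((List.pairwise_cons.mp hsep).1 a' ha')
        exact far_of_sep hsep' hε (n := n) (by
          have : pa a + (n:ℝ) - (a + n) = pa a - a := by ring
          rw [this]; exact (hg a (by simp)).le)
      · rw [Vinv, em_fix_far' hε hε4 (hg b (by simp)) ?_]
        · exact ih (fun a' ha' => hg a' (by simp [ha'])) (List.pairwise_cons.mp hsep).2 hat
        · have hsep' : Sep ε b a := (List.pairwise_cons.mp hsep).1 a hat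
          exact far_of_sep hsep' hε (n := n) (by
            have : a + (n:ℝ) - (a + n) = 0 := by ring
            rw [this, abs_zero]; exact hε.le)

lemma V_cases (hε : 0 < ε) (hε4 : ε ≤ 1/4) (la : List ℝ)
    (hg : ∀ a ∈ la, |pa a - a| < ε) (hsep : la.Pairwise (Sep ε)) (x : ℝ) :
    V ε pa la x = x ∨
      ∃ a ∈ la, ∃ n : ℤ, x - n ∈ Set.Ioo (a - ε) (a + ε) ∧
        V ε pa la x = em (a - ε) (a + ε) (pa a) a x := by
  induction la with
  | nil => left; rfl
  | cons b t ih =>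
      have hgb := good_em hε hε4 (hg b (by simp))
      by_cases hnear : ∃ n : ℤ, |x - (b + n)| < ε
      · obtain ⟨n, hn⟩ := hnear
        have hVt : V ε pa t x = x := by
          apply V_fix_far hε hε4 t (fun a' ha' => hg a' (by simp [ha']))
          intro a' ha'
          have hsep' : Sep ε a' b := sep_symm ((List.pairwise_cons.mp hsep).1 a' ha')
          exact far_of_sep hsep' hε hn.le
        right
        refine ⟨b, by simp, n, ?_, ?_⟩
        · rcases abs_lt.mp hn with ⟨h1, h2⟩
          exact ⟨by linarith, by linarith⟩
        · rw [V, hVt]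
      · push_neg at hnear
        have hfarb : Far ε b x := fun n => hnear n
        rcases ih (fun a' ha' => hg a' (by simp [ha'])) (List.pairwise_cons.mp hsep).2 with h | h
        · left
          rw [V, h]
          exact em_fix_far hε hε4 (hg b (by simp)) hfarb
        · obtain ⟨a, hat, n, hmem, heq⟩ := h
          right
          refine ⟨a, by simp [hat], n, hmem, ?_⟩
          rw [V, heq]
          have hga := good_em hε hε4 (hg a (by simp [hat]))
          have hmem2 : em (a - ε) (a + ε) (pa a) a x - n ∈ Set.Ioo (a - ε) (a + ε) :=
            em_mem_Ioo hga.1 hga.2.1 hga.2.2.1 hga.2.2.2.1 hga.2.2.2.2 hmem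
          apply em_fix_far hε hε4 (hg b (by simp))
          have hsep' : Sep ε b a := (List.pairwise_cons.mp hsep).1 a hat
          refine far_of_sep hsep' hε (n := n) ?_
          have h1 : |em (a - ε) (a + ε) (pa a) a x - (a + n)| < ε := by
            rw [abs_lt]
            exact ⟨by linarith [hmem2.1], by linarith [hmem2.2]⟩
          exact h1.le

end VW
end TAux


namespace TAux
open Function Set

lemma exists_eps (P : Set ℝ) (hP : P.Finite) (hP1 : P ⊆ Set.Ico (0:ℝ) 1) :
    ∃ ε : ℝ, 0 < ε ∧ ε ≤ 1/4 ∧ ∀ x ∈ P, ∀ y ∈ P, x ≠ y → Sep ε x y := by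
  classical
  set F : Finset ℝ := hP.toFinset with hF
  set S : Finset ℝ :=
    (((F ×ˢ F).image fun pr => |pr.1 - pr.2|) ∪
     ((F ×ˢ F).image fun pr => |pr.1 - pr.2 + 1|) ∪ {1}).filter (fun d => 0 < d) with hS
  have h1S : (1:ℝ) ∈ S := Finset.mem_filter.mpr ⟨by simp, by norm_num⟩
  have hSne : S.Nonempty := ⟨1, h1S⟩
  set δ : ℝ := S.min' hSne with hδ
  have hδpos : 0 < δ := by
    have h := S.min'_mem hSne
    exact (Finset.mem_filter.mp h).2
  have hδ1 : δ ≤ 1 := Finset.min'_le S 1 h1S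
  refine ⟨δ/4, by linarith, by linarith, ?_⟩
  intro x hx y hy hxy k
  have hxF : x ∈ F := by rw [hF, Set.Finite.mem_toFinset]; exact hx
  have hyF : y ∈ F := by rw [hF, Set.Finite.mem_toFinset]; exact hy
  have hx01 := hP1 hx
  have hy01 := hP1 hy
  have hd1 : |x - y| < 1 := by
    rw [abs_lt]; constructor <;> [linarith [hx01.1, hy01.2]; linarith [hx01.2, hy01.1]]
  have hmin : ∀ d ∈ S, δ ≤ d := fun d hd => Finset.min'_le S d hd
  have hk : k = 0 ∨ k = 1 ∨ k = -1 ∨ 2 ≤ k ∨ k ≤ -2 := by omega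
  rcases hk with rfl | rfl | rfl | hk2 | hk2
  · have hmem : |x - y| ∈ S := by
      rw [hS, Finset.mem_filter]
      constructor
      · apply Finset.mem_union_left
        apply Finset.mem_union_left
        exact Finset.mem_image.mpr ⟨(x, y), Finset.mem_product.mpr ⟨hxF, hyF⟩, rfl⟩
      · exact abs_pos.mpr (sub_ne_zero.mpr hxy)
    have := hmin _ hmem
    push_cast
    simp only [add_zero]
    linarith
  · have hne : x - y + 1 ≠ 0 := by
      intro hcon
      have : y = x + 1 := by linarith
      rw [this] at hy01
      have := hy01.2
      linarith [hx01.1]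
    have hmem : |x - y + 1| ∈ S := by
      refine Finset.mem_filter.mpr ⟨?_, ?_⟩
      · apply Finset.mem_union_left
        apply Finset.mem_union_right
        exact Finset.mem_image.mpr ⟨(x, y), Finset.mem_product.mpr ⟨hxF, hyF⟩, rfl⟩
      · exact abs_pos.mpr hne
    have := hmin _ hmem
    push_cast
    linarith
  · have hne : y - x + 1 ≠ 0 := by
      intro hcon
      have : x = y + 1 := by linarith
      rw [this] at hx01
      linarith [hx01.2, hy01.1]
    have hmem : |y - x + 1| ∈ S := by
      refine Finset.mem_filter.mpr ⟨?_, ?_⟩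
      · apply Finset.mem_union_left
        apply Finset.mem_union_right
        exact Finset.mem_image.mpr ⟨(y, x), Finset.mem_product.mpr ⟨hyF, hxF⟩, rfl⟩
      · exact abs_pos.mpr hne
    have := hmin _ hmem
    have habs : |x - y + (-1:ℤ)| = |y - x + 1| := by
      push_cast
      rw [show x - y + (-1:ℝ) = -(y - x + 1) by ring, abs_neg]
    rw [habs]
    linarith
  · have : (2:ℝ) ≤ k := by exact_mod_cast hk2
    have : 1 ≤ x - y + k := by
      rcases abs_lt.mp hd1 with ⟨h1, h2⟩
      linarith
    have h3 : |x - y + (k:ℝ)| = x - y + k := abs_of_pos (by linarith)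
    rw [h3]
    linarith
  · have : (k:ℝ) ≤ -2 := by exact_mod_cast hk2
    have h2 : x - y + (k:ℝ) ≤ -1 := by
      rcases abs_lt.mp hd1 with ⟨ha, hb⟩
      linarith
    have h3 : |x - y + (k:ℝ)| = -(x - y + k) := abs_of_neg (by linarith)
    rw [h3]
    linarith

lemma actWord_comp {Γ : Type*} (h1 h2 : ℝ → ℝ) (w : List (Γ × ℝ)) :
    actWord h1 (actWord h2 w) = actWord (fun x => h1 (h2 x)) w := by
  simp [actWord, List.map_map, Function.comp_def]

lemma actWord_congr {Γ : Type*} {h1 h2 : ℝ → ℝ} (h : ∀ x, h1 x = h2 x) (w : List (Γ × ℝ)) :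
    actWord h1 w = actWord h2 w := by
  have : h1 = h2 := funext h
  rw [this]

lemma actWord_id {Γ : Type*} {h : ℝ → ℝ} (hid : ∀ x, h x = x) (w : List (Γ × ℝ)) :
    actWord h w = w := by
  have : h = id := funext hid
  rw [actWord, this]
  simp

lemma actWord_timed {Γ : Type*} {h : ℝ → ℝ} {w : List (Γ × ℝ)} (hw : IsTimedWord w)
    (hmono : Monotone h) (h0 : ∀ p ∈ w, 0 ≤ h p.2) : IsTimedWord (actWord h w) := by
  constructor
  · intro p hp
    obtain ⟨q, hq, rfl⟩ := List.mem_map.mp hp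
    exact h0 q hq
  · show List.Chain' (fun p q : Γ × ℝ => p.2 ≤ q.2) (w.map (fun p => (p.1, h p.2)))
    refine List.isChain_map_of_isChain (S := fun p q : Γ × ℝ => p.2 ≤ q.2)
      (fun p => (p.1, h p.2)) (fun a b hab => ?_) hw.2
    exact hmono hab

/-- transfer invariance to the set of fractional parts -/
lemma fract_transfer {Γ : Type*} {L : Set (List (Γ × ℝ))} {S : Set ℝ}
    (h : SInvariant S L) : SInvariant (Int.fract '' S) L := by
  intro f hf hfix w hw hfw
  apply h f hf _ w hw hfw
  intro t ht
  have hfr : f (Int.fract t) = Int.fract t := hfix _ (Set.mem_image_of_mem _ ht)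
  have := taut_fix_int hf hfr ⌊t⌋
  rwa [Int.fract, sub_add_cancel] at this

end TAux

namespace TAux
open Function Set

lemma inter_invariant {Γ : Type*} (L : Set (List (Γ × ℝ))) (A B : Set ℝ)
    (hA : A.Finite) (hB : B.Finite) (hA1 : A ⊆ Set.Ico (0:ℝ) 1) (hB1 : B ⊆ Set.Ico (0:ℝ) 1)
    (hSA : SInvariant A L) (hSB : SInvariant B L) : SInvariant (A ∩ B) L := by
  classical
  intro f hf hfix w hw hfw
  -- the reference finite set of classes
  have hPfin : (A ∪ B ∪ {(0:ℝ)}).Finite := (hA.union hB).union (Set.finite_singleton 0)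
  have hP1 : (A ∪ B ∪ {(0:ℝ)}) ⊆ Set.Ico (0:ℝ) 1 := by
    intro x hx
    rcases hx with hx | hx
    · rcases hx with hx | hx
      · exact hA1 hx
      · exact hB1 hx
    · rw [Set.mem_singleton_iff] at hx
      subst hx
      exact ⟨le_rfl, by norm_num⟩
  obtain ⟨ε, hε, hε4, hsepP⟩ := exists_eps _ hPfin hP1
  have h0P : (0:ℝ) ∈ A ∪ B ∪ {(0:ℝ)} := Set.mem_union_right _ rfl
  -- constants
  set M : ℝ := |f 0| + 1 with hM
  have hMpos : 0 < M := by positivity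
  set N : ℕ := ⌈M / ε⌉₊ + 1 with hN
  have hNpos : 0 < (N:ℝ) := by positivity
  have hMN : M / N < ε := by
    have h1 : M / ε ≤ (⌈M/ε⌉₊ : ℝ) := Nat.le_ceil _
    have h2 : M ≤ (⌈M/ε⌉₊:ℝ) * ε := by
      rw [div_le_iff₀ hε] at h1
      linarith
    have hNr : (N:ℝ) = (⌈M/ε⌉₊:ℝ) + 1 := by rw [hN]; push_cast; ring
    rw [div_lt_iff₀ hNpos, hNr]
    nlinarith
  -- the list of moving classes
  have hABfin : (A \ B).Finite := hA.subset Set.diff_subset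
  set la : List ℝ := hABfin.toFinset.toList with hla
  have hmemla : ∀ a, a ∈ la ↔ a ∈ A \ B := by
    intro a
    rw [hla, Finset.mem_toList, Set.Finite.mem_toFinset]
  have hlaP : ∀ a ∈ la, a ∈ A ∪ B ∪ {(0:ℝ)} :=
    fun a ha => Set.mem_union_left _ (Set.mem_union_left _ ((hmemla a).mp ha).1)
  have hsep : la.Pairwise (Sep ε) := by
    have hnd : la.Nodup := Finset.nodup_toList _
    exact List.Pairwise.imp_of_mem
      (fun {a b} ha hb hab => hsepP a (hlaP a ha) b (hlaP b hb) hab) hnd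
  have hfw2 : ∀ p ∈ w, 0 ≤ f p.2 := by
    intro p hp
    exact hfw.1 (p.1, f p.2) (List.mem_map_of_mem (f := fun p : Γ × ℝ => (p.1, f p.2)) hp)
  -- main induction on steps
  have main : ∀ k : ℕ, k ≤ N → (w ∈ L ↔ actWord (fs f ((k:ℝ)/N)) w ∈ L) := by
    intro k
    induction k with
    | zero =>
        intro _
        rw [actWord_id (fun x => by simp [fs])]
    | succ k ih =>
        intro hk1
        have hkN : k ≤ N := Nat.le_of_succ_le hk1
        have base := ih hkN
        set σ : ℝ := (k:ℝ)/N with hσdef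
        set σ' : ℝ := ((k:ℝ)+1)/N with hσ'def
        have hσ0 : 0 ≤ σ := by positivity
        have hσ1 : σ ≤ 1 := by
          rw [hσdef, div_le_one hNpos]
          exact_mod_cast hkN
        have hσ'0 : 0 ≤ σ' := by positivity
        have hσ'1 : σ' ≤ 1 := by
          rw [hσ'def, div_le_one hNpos]
          push_cast
          exact_mod_cast hk1
        have hTσ : IsTimedAut (fs f σ) := fs_taut hf hσ0 hσ1
        have hTσ' : IsTimedAut (fs f σ') := fs_taut hf hσ'0 hσ'1
        have hinjσ : Function.Injective (fs f σ) := hTσ.1.1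
        have hsurjσ : Function.Surjective (fs f σ) := hTσ.1.2
        have hinjσ' : Function.Injective (fs f σ') := hTσ'.1.1
        have hsurjσ' : Function.Surjective (fs f σ') := hTσ'.1.2
        set pa : ℝ → ℝ := fun a => fs f σ (Function.invFun (fs f σ') a) with hpadef
        have hpa : ∀ a, |pa a - a| < ε := by
          intro a
          have h1 : fs f σ' (Function.invFun (fs f σ') a) = a :=
            Function.rightInverse_invFun hsurjσ' a
          have h2 := fs_dist hf σ' σ (Function.invFun (fs f σ') a)
          have h3 : σ - σ' = -(1/N) := by
            rw [hσdef, hσ'def]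
            field_simp
            ring
          have h4 : |σ - σ'| = 1/N := by
            rw [h3, abs_neg, abs_of_pos (by positivity)]
          rw [h4] at h2
          have h5 : (1/(N:ℝ)) * M = M / N := by ring
          calc |pa a - a| = |fs f σ (Function.invFun (fs f σ') a)
                - fs f σ' (Function.invFun (fs f σ') a)| := by rw [h1]
            _ ≤ (1/N) * M := h2
            _ = M / N := h5
            _ < ε := hMN
        have hpa' : ∀ a ∈ la, |pa a - a| < ε := fun a _ => hpa a
        set vg : ℝ → ℝ := V ε pa la with hvgdef
        set u : ℝ → ℝ := (fs f σ') ∘ (Function.invFun (fs f σ)) ∘ (Vinv ε pa la) with hudef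
        have hVtaut : IsTimedAut vg := V_taut hε hε4 la hpa'
        have hUtaut : IsTimedAut u :=
          taut_comp hTσ' (taut_comp (taut_invFun hTσ) (Vinv_taut hε hε4 la hpa'))
        -- vg fixes B
        have hVfixB : ∀ t ∈ B, vg t = t := by
          intro b hb
          apply V_fix_far hε hε4 la hpa'
          intro a ha
          have hab : a ≠ b := fun h => ((hmemla a).mp ha).2 (h ▸ hb)
          have hs : Sep ε a b :=
            hsepP a (hlaP a ha) b (Set.mem_union_left _ (Set.mem_union_right _ hb)) hab
          refine far_of_sep hs hε (n := 0) ?_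
          simp [hε.le]
        -- u fixes A
        have hUfixA : ∀ t ∈ A, u t = t := by
          intro a ha
          by_cases hab : a ∈ B
          · have hfa : f a = a := hfix a ⟨ha, hab⟩
            have h1 : Vinv ε pa la a = a := by
              apply Vinv_fix_far hε hε4 la hpa'
              intro a' ha'
              have hne : a' ≠ a := fun h => ((hmemla a').mp ha').2 (h ▸ hab)
              have hs : Sep ε a' a :=
                hsepP a' (hlaP a' ha') a (Set.mem_union_left _ (Set.mem_union_left _ ha)) hne
              refine far_of_sep hs hε (n := 0) ?_
              simp [hε.le]
            have h2 : fs f σ a = a := fs_fix hfa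
            have h3 : Function.invFun (fs f σ) a = a := by
              apply hinjσ
              rw [Function.rightInverse_invFun hsurjσ, h2]
            show fs f σ' (Function.invFun (fs f σ) (Vinv ε pa la a)) = a
            rw [h1, h3, fs_fix hfa]
          · have hala : a ∈ la := (hmemla a).mpr ⟨ha, hab⟩
            have h1 : Vinv ε pa la a = pa a := by
              have := Vinv_map hε hε4 la hpa' hsep hala 0
              simpa using this
            have h2 : Function.invFun (fs f σ) (pa a) = Function.invFun (fs f σ') a :=
              Function.leftInverse_invFun hinjσ _
            show fs f σ' (Function.invFun (fs f σ) (Vinv ε pa la a)) = a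
            rw [h1, h2, Function.rightInverse_invFun hsurjσ']
        -- u ∘ vg = transition map
        have hcomp : ∀ x, u (vg x) = fs f σ' (Function.invFun (fs f σ) x) := by
          intro x
          show fs f σ' (Function.invFun (fs f σ) (Vinv ε pa la (V ε pa la x)))
              = fs f σ' (Function.invFun (fs f σ) x)
          rw [Vinv_V hε hε4 la hpa' x]
        have hgid : ∀ x, fs f σ' (Function.invFun (fs f σ) (fs f σ x)) = fs f σ' x := by
          intro x
          rw [Function.leftInverse_invFun hinjσ]
        -- nonnegativity of the v-intermediate times
        have hvpos : ∀ t : ℝ, 0 ≤ t → 0 ≤ f t → 0 ≤ vg (fs f σ t) := by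
          intro t ht hft
          have hx0 : 0 ≤ fs f σ t := fs_nonneg hσ0 hσ1 ht hft
          rcases V_cases hε hε4 la hpa' hsep (fs f σ t) with h | ⟨a, hala, n, hmem, heq⟩
          · rw [hvgdef, h]
            exact hx0
          · rw [hvgdef, heq]
            have hga := good_em hε hε4 (hpa a)
            have hmemo := em_mem_Ioo hga.1 hga.2.1 hga.2.2.1 hga.2.2.2.1 hga.2.2.2.2 hmem
            have haA : a ∈ A \ B := (hmemla a).mp hala
            have ha01 : a ∈ Set.Ico (0:ℝ) 1 := hA1 haA.1
            have hcase : 1 ≤ n ∨ n ≤ -1 ∨ n = 0 := by omega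
            rcases hcase with hn | hn | hn
            · have hc : (1:ℝ) ≤ (n:ℝ) := by exact_mod_cast hn
              have := hmemo.1
              linarith [ha01.1]
            · exfalso
              have hc : (n:ℝ) ≤ -1 := by exact_mod_cast hn
              by_cases ha0 : a = 0
              · subst ha0
                have := hmem.2
                linarith
              · have hsep0 : Sep ε a 0 :=
                  hsepP a (hlaP a hala) 0 h0P ha0
                have h3 := hsep0 (-1)
                have habs : |a - 0 + ((-1:ℤ):ℝ)| = 1 - a := by
                  push_cast
                  rw [show a - 0 + (-1:ℝ) = -(1 - a) by ring, abs_neg,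
                    abs_of_pos (by linarith [ha01.2])]
                rw [habs] at h3
                have := hmem.2
                linarith
            · subst hn
              by_cases ha0 : a = 0
              · subst ha0
                rcases le_or_gt (pa 0) 0 with hp | hp
                · have := em_ge_self hga.1 hga.2.1 hga.2.2.1 hga.2.2.2.1 hga.2.2.2.2 hp
                    (fs f σ t)
                  linarith
                · rcases le_or_gt (pa 0) (fs f σ t) with hpx | hpx
                  · have hmono := (em_strictMono hga.1 hga.2.1 hga.2.2.1 hga.2.2.2.1
                      hga.2.2.2.2).monotone hpx
                    have h2 : em (0 - ε) (0 + ε) (pa 0) 0 (pa 0 + ((0:ℤ):ℝ)) = 0 + ((0:ℤ):ℝ) :=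
                      em_map hga.1 hga.2.1 hga.2.2.1 hga.2.2.2.1 hga.2.2.2.2 0
                    simp only [Int.cast_zero, add_zero] at h2
                    linarith
                  · exfalso
                    have hyy : fs f σ' (Function.invFun (fs f σ') 0) = 0 :=
                      Function.rightInverse_invFun hsurjσ' 0
                    have h1 : t < Function.invFun (fs f σ') 0 := by
                      by_contra hcon
                      push_neg at hcon
                      have h5 := (fs_strictMono hf hσ0 hσ1).monotone hcon
                      exact absurd h5 (not_le.mpr hpx)
                    have h2 : fs f σ' t < 0 := by
                      have h6 := fs_strictMono hf hσ'0 hσ'1 h1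
                      rwa [hyy] at h6
                    have := fs_nonneg hσ'0 hσ'1 ht hft
                    linarith
              · have hsep0 : Sep ε a 0 := hsepP a (hlaP a hala) 0 h0P ha0
                have h3 := hsep0 0
                have habs : |a - 0 + ((0:ℤ):ℝ)| = a := by
                  push_cast
                  rw [show a - 0 + (0:ℝ) = a by ring, abs_of_nonneg ha01.1]
                rw [habs] at h3
                have := hmemo.1
                push_cast at this
                linarith
        -- the three timed words
        have hwk : IsTimedWord (actWord (fs f σ) w) :=
          actWord_timed hw (fs_strictMono hf hσ0 hσ1).monotone
            (fun p hp => fs_nonneg hσ0 hσ1 (hw.1 p hp) (hfw2 p hp))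
        have hwk' : IsTimedWord (actWord (fs f σ') w) :=
          actWord_timed hw (fs_strictMono hf hσ'0 hσ'1).monotone
            (fun p hp => fs_nonneg hσ'0 hσ'1 (hw.1 p hp) (hfw2 p hp))
        have hwv : IsTimedWord (actWord (fun x => vg (fs f σ x)) w) :=
          actWord_timed hw (hVtaut.2.1.comp (fs_strictMono hf hσ0 hσ1)).monotone
            (fun p hp => hvpos p.2 (hw.1 p hp) (hfw2 p hp))
        have hav : actWord vg (actWord (fs f σ) w) = actWord (fun x => vg (fs f σ x)) w :=
          actWord_comp _ _ _
        have hau : actWord u (actWord vg (actWord (fs f σ) w)) = actWord (fs f σ') w := by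
          rw [hav, actWord_comp]
          apply actWord_congr
          intro x
          rw [hcomp (fs f σ x), hgid x]
        have step1 := hSB vg hVtaut hVfixB (actWord (fs f σ) w) hwk (by rw [hav]; exact hwv)
        have step2 := hSA u hUtaut hUfixA (actWord vg (actWord (fs f σ) w))
          (by rw [hav]; exact hwv) (by rw [hau]; exact hwk')
        rw [base, step1, step2, hau]
        have hcast : ((k:ℝ)+1)/N = (((k+1 : ℕ)):ℝ)/N := by push_cast; ring
        rw [hσ'def] at *
        rw [hcast]
  have hfin := main N le_rfl
  rw [div_self (ne_of_gt hNpos)] at hfin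
  rwa [actWord_congr (fs_one) w] at hfin

end TAux

/-- the family `{ fract S : S finite ⊆ ℝ≥0, L S-invariant }`,
if nonempty, has a least element with respect to inclusion. -/
theorem exists_least_fract_support {Γ : Type*} [Fintype Γ]
    (L : Set (List (Γ × ℝ))) (hL : ∀ w ∈ L, IsTimedWord w)
    (hne : (FractSupports L).Nonempty) :
    ∃ T ∈ FractSupports L, ∀ T' ∈ FractSupports L, T ⊆ T' := by
  classical
  have hfacts : ∀ T ∈ FractSupports L, T.Finite ∧ T ⊆ Set.Ico (0:ℝ) 1 ∧ SInvariant T L := by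
    rintro T ⟨S, hSfin, hS0, hSinv, rfl⟩
    refine ⟨hSfin.image _, ?_, TAux.fract_transfer hSinv⟩
    rintro x ⟨t, ht, rfl⟩
    exact ⟨Int.fract_nonneg t, Int.fract_lt_one t⟩
  have hmem : ∀ T : Set ℝ, T.Finite → T ⊆ Set.Ico (0:ℝ) 1 → SInvariant T L →
      T ∈ FractSupports L := by
    intro T hfin hsub hinv
    refine ⟨T, hfin, fun t ht => (hsub ht).1, hinv, ?_⟩
    rw [Set.image_congr (fun x hx => Int.fract_eq_self.mpr ⟨(hsub hx).1, (hsub hx).2⟩)]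
    simp
  set c : Set ℕ := Set.ncard '' (FractSupports L) with hc
  have hcne : c.Nonempty := hne.image _
  have hsInf := Nat.sInf_mem hcne
  obtain ⟨T0, hT0mem, hT0card⟩ := hsInf
  refine ⟨T0, hT0mem, ?_⟩
  intro T' hT'
  obtain ⟨hf0, hsub0, hinv0⟩ := hfacts T0 hT0mem
  obtain ⟨hf', hsub', hinv'⟩ := hfacts T' hT'
  have hint : (T0 ∩ T') ∈ FractSupports L :=
    hmem _ (hf0.subset Set.inter_subset_left)
      (fun x hx => hsub0 hx.1)
      (TAux.inter_invariant L T0 T' hf0 hf' hsub0 hsub' hinv0 hinv')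
  have h1 : sInf c ≤ (T0 ∩ T').ncard := Nat.sInf_le ⟨_, hint, rfl⟩
  have heq : T0 ∩ T' = T0 := by
    apply Set.eq_of_subset_of_ncard_le Set.inter_subset_left _ hf0
    rw [hT0card]
    exact h1
  intro x hx
  rw [← heq] at hx
  exact hx.2
end

section
/- Let F, F' ⊆ [0,1) be finite sets. Every (F ∩ F')-timed automorphism π decomposes into π = πₙ ∘ ⋯ ∘ π₁, where each πᵢ is either an F-timed automorphism or an F'-timed automorphism. Equivalently, Π_{F ∩ F'} is contained in the subgroup of the group Π of timed automorphisms generated by Π_F ∪ Π_{F'}. -/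
/-- A permutation of `ℝ` is a timed automorphism if it is strictly monotone
and preserves integer differences: `π (t + 1) = π t + 1`. -/
def IsTimedAutPerm (π : Equiv.Perm ℝ) : Prop :=
  StrictMono π ∧ ∀ t : ℝ, π (t + 1) = π t + 1

/-- `Π_S`: the set of `S`-timed automorphisms (as permutations of `ℝ`). -/
def TimedAutFixing (S : Set ℝ) : Set (Equiv.Perm ℝ) :=
  {π | IsTimedAutPerm π ∧ ∀ t ∈ S, π t = t}


noncomputable def pf (A B C y : ℝ) : ℝ :=
  if y ≤ A then y * (B / A) else if y ≤ C then C - (C - y) * ((C - B) / (C - A)) else y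

variable {A B C y y₁ y₂ : ℝ}

lemma pf_zero (hA : 0 < A) : pf A B C 0 = 0 := by
  simp [pf, hA.le]

lemma pf_apex (hA : 0 < A) (hAC : A < C) : pf A B C A = B := by
  simp only [pf, le_refl, if_true]
  field_simp

lemma pf_left_le (hA : 0 < A) (hB : 0 < B) (hy : y ≤ A) : pf A B C y ≤ B := by
  rw [pf, if_pos hy]
  calc y * (B / A) ≤ A * (B / A) := by
        apply mul_le_mul_of_nonneg_right hy (by positivity)
    _ = B := by field_simp

lemma pf_mid_gt (hA : 0 < A) (hBC : B < C) (hAC : A < C) (h1 : A < y) (h2 : y ≤ C) :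
    B < pf A B C y := by
  rw [pf, if_neg (not_le.2 h1), if_pos h2]
  have hk : 0 < (C - B) / (C - A) := div_pos (by linarith) (by linarith)
  have h3 : (C - y) * ((C - B) / (C - A)) < (C - A) * ((C - B) / (C - A)) := by
    apply mul_lt_mul_of_pos_right (by linarith) hk
  have h4 : (C - A) * ((C - B) / (C - A)) = C - B := by
    rw [mul_comm, div_mul_cancel₀]; linarith
  linarith

lemma pf_mid_le (hBC : B < C) (hAC : A < C) (h1 : A < y) (h2 : y ≤ C) :
    pf A B C y ≤ C := by
  rw [pf, if_neg (not_le.2 h1), if_pos h2]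
  have hk : 0 ≤ (C - y) * ((C - B) / (C - A)) := by
    apply mul_nonneg (by linarith) (le_of_lt (div_pos (by linarith) (by linarith)))
  linarith

lemma pf_fix (hAC : A < C) (hy : C ≤ y) : pf A B C y = y := by
  rw [pf, if_neg (by linarith)]
  rcases eq_or_lt_of_le hy with h | h
  · rw [if_pos h.ge, ← h]; ring
  · rw [if_neg (not_le.2 h)]

lemma pf_nonneg (hA : 0 < A) (hB : 0 < B) (hBC : B < C) (hAC : A < C) (hy : 0 ≤ y) :
    0 ≤ pf A B C y := by
  rcases le_or_gt y A with h | h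
  · rw [pf, if_pos h]; positivity
  · rcases le_or_gt y C with h2 | h2
    · have := pf_mid_gt hA hBC hAC h h2; linarith
    · rw [pf_fix hAC h2.le]; linarith

lemma pf_lt_one (hA : 0 < A) (hB : 0 < B) (hBC : B < C) (hAC : A < C) (hC1 : C ≤ 1)
    (hy : y < 1) : pf A B C y < 1 := by
  rcases le_or_gt y A with h | h
  · have := pf_left_le (C := C) hA hB h; linarith
  · rcases le_or_gt y C with h2 | h2
    · rw [pf, if_neg (not_le.2 h), if_pos h2]
      have hk : 0 < (C - B) / (C - A) := div_pos (by linarith) (by linarith)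
      have h5 : 0 ≤ (C - y) * ((C - B) / (C - A)) := mul_nonneg (by linarith) hk.le
      have h3 : 0 < (C - y) * ((C - B) / (C - A)) ∨ C < 1 := by
        rcases lt_or_ge y C with hyC | hyC
        · exact Or.inl (mul_pos (by linarith) hk)
        · right; linarith
      rcases h3 with h3 | h3 <;> linarith
    · rw [pf_fix hAC h2.le]; exact hy

lemma pf_strictMono (hA : 0 < A) (hB : 0 < B) (hBC : B < C) (hAC : A < C)
    (h12 : y₁ < y₂) : pf A B C y₁ < pf A B C y₂ := by
  rcases le_or_gt y₁ A with c1 | c1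
  · rcases le_or_gt y₂ A with c2 | c2
    · rw [pf, if_pos c1, pf, if_pos c2]
      exact mul_lt_mul_of_pos_right h12 (by positivity)
    · rcases le_or_gt y₂ C with c3 | c3
      · exact lt_of_le_of_lt (pf_left_le (C := C) hA hB c1) (pf_mid_gt hA hBC hAC c2 c3)
      · have := pf_left_le (C := C) hA hB c1
        rw [pf_fix hAC c3.le]; linarith
  · rcases le_or_gt y₁ C with c2 | c2
    · have c1' : A < y₂ := lt_trans c1 h12
      rcases le_or_gt y₂ C with c3 | c3
      · rw [pf, if_neg (not_le.2 c1), if_pos c2, pf, if_neg (not_le.2 c1'), if_pos c3]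
        have hk : 0 < (C - B) / (C - A) := div_pos (by linarith) (by linarith)
        have : (C - y₂) * ((C - B) / (C - A)) < (C - y₁) * ((C - B) / (C - A)) :=
          mul_lt_mul_of_pos_right (by linarith) hk
        linarith
      · have := pf_mid_le hBC hAC c1 c2
        rw [pf_fix hAC c3.le]; linarith
    · rw [pf_fix hAC c2.le, pf_fix hAC (by linarith)]; exact h12

lemma pf_inv (hA : 0 < A) (hB : 0 < B) (hBC : B < C) (hAC : A < C) (hy : 0 ≤ y) :
    pf B A C (pf A B C y) = y := by
  rcases le_or_gt y A with c1 | c1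
  · have hin : pf A B C y = y * (B / A) := by rw [pf, if_pos c1]
    have h1 : y * (B / A) ≤ B := by
      calc y * (B / A) ≤ A * (B / A) := mul_le_mul_of_nonneg_right c1 (by positivity)
        _ = B := by field_simp
    rw [hin, pf, if_pos h1]
    field_simp
  · rcases le_or_gt y C with c2 | c2
    · have hgt := pf_mid_gt hA hBC hAC c1 c2
      have hle := pf_mid_le hBC hAC c1 c2
      have hin : pf A B C y = C - (C - y) * ((C - B) / (C - A)) := by
        rw [pf, if_neg (not_le.2 c1), if_pos c2]
      rw [hin] at hgt hle
      rw [hin, pf, if_neg (not_le.2 hgt), if_pos hle]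
      have hCA : C - A ≠ 0 := by linarith
      have hCB : C - B ≠ 0 := by linarith
      field_simp
      ring
    · rw [pf_fix hAC c2.le, pf_fix (by linarith : B < C) c2.le]


noncomputable def pwF (u v p r : ℝ) (s : ℝ) : ℝ :=
  (⌊s - u⌋ : ℝ) + u + pf (p - u) (r - u) (v - u) (Int.fract (s - u))

section pw
variable {u v p r s s₁ s₂ : ℝ}
variable (hup : u < p) (hpv : p < v) (hur : u < r) (hrv : r < v) (hv1 : v ≤ u + 1)

include hup hpv hur hrv hv1

lemma pf_bound (hθ1 : 0 ≤ s) (hθ2 : s < 1) :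
    0 ≤ pf (p - u) (r - u) (v - u) s ∧ pf (p - u) (r - u) (v - u) s < 1 :=
  ⟨pf_nonneg (by linarith) (by linarith) (by linarith) (by linarith) hθ1,
   pf_lt_one (by linarith) (by linarith) (by linarith) (by linarith) (by linarith) hθ2⟩

lemma pwF_floor_fract :
    ⌊pwF u v p r s - u⌋ = ⌊s - u⌋ ∧
      Int.fract (pwF u v p r s - u) = pf (p - u) (r - u) (v - u) (Int.fract (s - u)) := by
  have hb := pf_bound hup hpv hur hrv hv1 (Int.fract_nonneg (s - u)) (Int.fract_lt_one (s - u))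
  have h1 : pwF u v p r s - u = (⌊s - u⌋ : ℝ) + pf (p - u) (r - u) (v - u) (Int.fract (s - u)) := by
    rw [pwF]; ring
  constructor
  · rw [h1, Int.floor_intCast_add]
    have h0 : ⌊pf (p - u) (r - u) (v - u) (Int.fract (s - u))⌋ = 0 :=
      Int.floor_eq_zero_iff.2 ⟨hb.1, hb.2⟩
    rw [h0]; omega
  · rw [h1, Int.fract_intCast_add, Int.fract_eq_self.2 ⟨hb.1, hb.2⟩]

lemma pwF_inv : pwF u v r p (pwF u v p r s) = s := by
  obtain ⟨hf, hfr⟩ := pwF_floor_fract hup hpv hur hrv hv1 (s := s)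
  rw [pwF, hf, hfr, pf_inv (by linarith) (by linarith) (by linarith) (by linarith)
    (Int.fract_nonneg (s - u))]
  have := Int.floor_add_fract (s - u)
  linarith [Int.floor_add_fract (s - u)]

lemma pwF_strictMono (h12 : s₁ < s₂) : pwF u v p r s₁ < pwF u v p r s₂ := by
  have hb1 := pf_bound hup hpv hur hrv hv1 (Int.fract_nonneg (s₁ - u)) (Int.fract_lt_one (s₁ - u))
  have hb2 := pf_bound hup hpv hur hrv hv1 (Int.fract_nonneg (s₂ - u)) (Int.fract_lt_one (s₂ - u))
  rcases lt_trichotomy (⌊s₁ - u⌋) (⌊s₂ - u⌋) with h | h | h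
  · have : (⌊s₁ - u⌋ : ℝ) + 1 ≤ (⌊s₂ - u⌋ : ℝ) := by exact_mod_cast h
    rw [pwF, pwF]; linarith
  · have hfr : Int.fract (s₁ - u) < Int.fract (s₂ - u) := by
      have h1 := Int.floor_add_fract (s₁ - u)
      have h2 := Int.floor_add_fract (s₂ - u)
      rw [h] at h1; linarith
    rw [pwF, pwF, h]
    have := pf_strictMono (A := p - u) (B := r - u) (C := v - u)
      (by linarith) (by linarith) (by linarith) (by linarith) hfr
    linarith
  · exfalso
    have : s₂ - u < s₁ - u := by
      calc s₂ - u < ⌊s₂ - u⌋ + 1 := Int.lt_floor_add_one _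
        _ ≤ ⌊s₁ - u⌋ := by exact_mod_cast h
        _ ≤ s₁ - u := Int.floor_le _
    linarith

lemma pwF_period : pwF u v p r (s + 1) = pwF u v p r s + 1 := by
  have h1 : s + 1 - u = (s - u) + 1 := by ring
  rw [pwF, pwF, h1, Int.floor_add_one, Int.fract_add_one]
  push_cast; ring

lemma pwF_p : pwF u v p r p = r := by
  have h1 : Int.fract (p - u) = p - u := Int.fract_eq_self.2 ⟨by linarith, by linarith⟩
  have h2 : ⌊p - u⌋ = 0 := Int.floor_eq_zero_iff.2 ⟨by linarith, by linarith⟩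
  rw [pwF, h1, h2, pf_apex (by linarith) (by linarith)]
  push_cast; ring

lemma pwF_fix (hs : Int.fract (s - u) = 0 ∨ v - u ≤ Int.fract (s - u)) :
    pwF u v p r s = s := by
  have hsf := Int.floor_add_fract (s - u)
  rcases hs with h | h
  · rw [pwF, h, pf_zero (by linarith)]; linarith
  · rw [pwF, pf_fix (by linarith) h]; linarith

lemma pw_perm : ∃ τ : Equiv.Perm ℝ, ∀ s, τ s = pwF u v p r s := by
  refine ⟨⟨pwF u v p r, pwF u v r p, fun s => ?_, fun s => ?_⟩, fun s => rfl⟩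
  · exact pwF_inv hup hpv hur hrv hv1
  · exact pwF_inv hur hrv hup hpv hv1

end pw

/-- The ℤ-periodization of a set. -/
def TZ (T : Set ℝ) : Set ℝ := {s : ℝ | ∃ t ∈ T, ∃ n : ℤ, s = t + n}

lemma one_mem_timedAutFixing (T : Set ℝ) : (1 : Equiv.Perm ℝ) ∈ TimedAutFixing T :=
  ⟨⟨fun a b h => by simpa using h, fun t => by simp⟩, fun t _ => by simp⟩

lemma exists_uv (T : Set ℝ) (hT : T.Finite) (hTne : T.Nonempty) (m M : ℝ) (hmM : m ≤ M)
    (hfree : ∀ t ∈ T, ∀ n : ℤ, t + (n : ℝ) ∉ Set.Icc m M) :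
    ∃ u v : ℝ, u < m ∧ M < v ∧ v ≤ u + 1 ∧
      ∀ t ∈ T, ∀ n : ℤ, t + (n : ℝ) ∉ Set.Ioo u v := by
  have hTfne : hT.toFinset.Nonempty := by rwa [Set.Finite.toFinset_nonempty]
  obtain ⟨t₀, ht₀, hu⟩ := Finset.exists_mem_eq_sup' hTfne (fun t => t + (⌊m - t⌋ : ℝ))
  obtain ⟨t₁, ht₁, hv⟩ := Finset.exists_mem_eq_inf' hTfne (fun t => t + (⌈M - t⌉ : ℝ))
  rw [Set.Finite.mem_toFinset] at ht₀ ht₁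
  have husup : ∀ t ∈ T, t + (⌊m - t⌋ : ℝ) ≤ t₀ + (⌊m - t₀⌋ : ℝ) := by
    intro t ht
    rw [← hu]
    exact Finset.le_sup' (fun t => t + (⌊m - t⌋ : ℝ)) ((Set.Finite.mem_toFinset hT).2 ht)
  have hvinf : ∀ t ∈ T, t₁ + (⌈M - t₁⌉ : ℝ) ≤ t + (⌈M - t⌉ : ℝ) := by
    intro t ht
    rw [← hv]
    exact Finset.inf'_le (fun t => t + (⌈M - t⌉ : ℝ)) ((Set.Finite.mem_toFinset hT).2 ht)
  refine ⟨t₀ + (⌊m - t₀⌋ : ℝ), t₁ + (⌈M - t₁⌉ : ℝ), ?_, ?_, ?_, ?_⟩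
  · -- u < m
    have h1 : t₀ + (⌊m - t₀⌋ : ℝ) ≤ m := by linarith [Int.floor_le (m - t₀)]
    rcases eq_or_lt_of_le h1 with h2 | h2
    · exfalso
      exact hfree t₀ ht₀ ⌊m - t₀⌋ (by rw [h2]; exact ⟨le_refl m, hmM⟩)
    · exact h2
  · -- M < v
    have h1 : M ≤ t₁ + (⌈M - t₁⌉ : ℝ) := by linarith [Int.le_ceil (M - t₁)]
    rcases eq_or_lt_of_le h1 with h2 | h2
    · exfalso
      exact hfree t₁ ht₁ ⌈M - t₁⌉ (by rw [← h2]; exact ⟨hmM, le_refl M⟩)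
    · exact h2
  · -- v ≤ u + 1
    have humm : m < t₀ + (⌊m - t₀⌋ : ℝ) + 1 := by linarith [Int.lt_floor_add_one (m - t₀)]
    have hMu : M < t₀ + (⌊m - t₀⌋ : ℝ) + 1 := by
      by_contra hc
      push_neg at hc
      apply hfree t₀ ht₀ (⌊m - t₀⌋ + 1)
      constructor
      · push_cast; linarith
      · push_cast; linarith
    have h2 : (⌈M - t₀⌉ : ℝ) ≤ (⌊m - t₀⌋ : ℝ) + 1 := by
      have : (⌈M - t₀⌉ : ℤ) ≤ ⌊m - t₀⌋ + 1 := by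
        rw [Int.ceil_le]; push_cast; linarith
      exact_mod_cast this
    have h3 := hvinf t₀ ht₀
    linarith
  · -- no points of T + ℤ in (u, v)
    intro t ht n hc
    have hf := hfree t ht n
    rw [Set.mem_Icc, not_and_or, not_le, not_le] at hf
    rcases hf with hf | hf
    · have h2 : (n : ℝ) < (⌊m - t⌋ : ℝ) + 1 := by linarith [Int.lt_floor_add_one (m - t)]
      have h3 : n < ⌊m - t⌋ + 1 := by exact_mod_cast h2
      have h4 : (n : ℝ) ≤ (⌊m - t⌋ : ℝ) := by exact_mod_cast Int.lt_add_one_iff.1 h3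
      have h5 := husup t ht
      exact absurd hc.1 (by linarith)
    · have h1 : ⌈M - t⌉ ≤ n := by rw [Int.ceil_le]; linarith
      have h4 : ((⌈M - t⌉ : ℤ) : ℝ) ≤ (n : ℝ) := by exact_mod_cast h1
      have h5 := hvinf t ht
      exact absurd hc.2 (by linarith)

lemma exists_timed_move (T : Set ℝ) (hT : T.Finite) (p r : ℝ)
    (hfree : ∀ t ∈ T, ∀ n : ℤ, t + (n : ℝ) ∉ Set.Icc (min p r) (max p r)) :
    ∃ τ ∈ TimedAutFixing T, τ p = r := by
  rcases eq_or_ne p r with rfl | hpr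
  · exact ⟨1, one_mem_timedAutFixing T, by simp⟩
  rcases T.eq_empty_or_nonempty with rfl | hTne
  · refine ⟨Equiv.addRight (r - p), ⟨⟨fun a b h => by simpa using h, fun t => by
      simp; ring⟩, fun t ht => absurd ht (Set.notMem_empty t)⟩, by simp⟩
  · obtain ⟨u, v, hum, hMv, hv1, hIoo⟩ :=
      exists_uv T hT hTne (min p r) (max p r) min_le_max hfree
    have hup : u < p := lt_of_lt_of_le hum (min_le_left p r)
    have hur : u < r := lt_of_lt_of_le hum (min_le_right p r)
    have hpv : p < v := lt_of_le_of_lt (le_max_left p r) hMv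
    have hrv : r < v := lt_of_le_of_lt (le_max_right p r) hMv
    obtain ⟨τ, hτ⟩ := pw_perm hup hpv hur hrv hv1
    refine ⟨τ, ⟨⟨fun a b h => by rw [hτ, hτ]; exact pwF_strictMono hup hpv hur hrv hv1 h,
      fun t => by rw [hτ, hτ]; exact pwF_period hup hpv hur hrv hv1⟩, ?_⟩, ?_⟩
    · intro t ht
      rw [hτ]
      apply pwF_fix hup hpv hur hrv hv1
      have hsf := Int.floor_add_fract (t - u)
      have hw0 : 0 ≤ Int.fract (t - u) := Int.fract_nonneg _
      have h6 := hIoo t ht (-⌊t - u⌋)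
      rw [Set.mem_Ioo, not_and_or, not_lt, not_lt] at h6
      rcases h6 with h | h
      · left; push_cast at h; linarith
      · right; push_cast at h; linarith
    · rw [hτ]; exact pwF_p hup hpv hur hrv hv1


lemma TZ_fin_Icc {T : Set ℝ} (hT : T.Finite) (a b : ℝ) : (TZ T ∩ Set.Icc a b).Finite := by
  apply Set.Finite.subset
    (hT.biUnion (fun t _ => (Set.finite_Icc (⌈a - t⌉ : ℤ) ⌊b - t⌋).image (fun n : ℤ => t + n)))
  rintro y ⟨⟨t, ht, n, rfl⟩, hy⟩
  refine Set.mem_biUnion ht ⟨n, ?_, rfl⟩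
  rw [Set.mem_Icc] at hy ⊢
  constructor
  · rw [Int.ceil_le]; linarith [hy.1]
  · rw [Int.le_floor]; linarith [hy.2]

lemma TZ2_fin {T T' : Set ℝ} (hT : T.Finite) (hT' : T'.Finite) (a b : ℝ) :
    ((TZ T ∪ TZ T') ∩ Set.Icc a b).Finite := by
  rw [Set.union_inter_distrib_right]
  exact (TZ_fin_Icc hT a b).union (TZ_fin_Icc hT' a b)

lemma not_mem_TZ {T : Set ℝ} (hT : T ⊆ Set.Ico (0:ℝ) 1) {x : ℝ}
    (hx : x ∈ Set.Ico (0:ℝ) 1) (hxT : x ∉ T) : x ∉ TZ T := by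
  rintro ⟨t, ht, n, rfl⟩
  have ht' := hT ht
  rw [Set.mem_Ico] at ht' hx
  have h1 : -1 < (n : ℝ) := by linarith
  have h2 : (n : ℝ) < 1 := by linarith
  have h3 : n = 0 := by
    have b1 : (-1 : ℤ) < n := by exact_mod_cast h1
    have b2 : n < 1 := by exact_mod_cast h2
    omega
  rw [h3] at hxT
  push_cast at hxT
  simp only [add_zero] at hxT
  exact hxT ht

lemma TZ_inter_sub {T T' : Set ℝ} (hT : T ⊆ Set.Ico (0:ℝ) 1) (hT' : T' ⊆ Set.Ico (0:ℝ) 1) :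
    TZ T ∩ TZ T' ⊆ TZ (T ∩ T') := by
  rintro y ⟨⟨t, ht, n, rfl⟩, ⟨t', ht', n', he⟩⟩
  have hb := hT ht
  have hb' := hT' ht'
  rw [Set.mem_Ico] at hb hb'
  have h1 : t - t' = (n' : ℝ) - n := by linarith [he]
  have h2 : (-1 : ℝ) < (n' : ℝ) - n := by linarith
  have h3 : ((n' : ℝ) - n) < 1 := by linarith
  have h4 : n' = n := by
    have b1 : (-1 : ℤ) < n' - n := by exact_mod_cast (by push_cast; linarith : (-1:ℝ) < ((n' - n : ℤ) : ℝ))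
    have b2 : (n' - n : ℤ) < 1 := by exact_mod_cast (by push_cast; linarith : ((n' - n : ℤ) : ℝ) < 1)
    omega
  have h5 : t = t' := by rw [h4] at h1; linarith
  exact ⟨t, ⟨ht, h5 ▸ ht'⟩, n, rfl⟩

lemma walk_term (F' : Set ℝ) (hF'f : F'.Finite) (q x : ℝ)
    (hterm : TZ F' ∩ Set.Icc (min q x) (max q x) = ∅) :
    ∃ τ ∈ TimedAutFixing F', τ q = x := by
  apply exists_timed_move F' hF'f q x
  intro t ht n hc
  have hmem : t + (n : ℝ) ∈ TZ F' ∩ Set.Icc (min q x) (max q x) := ⟨⟨t, ht, n, rfl⟩, hc⟩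
  rw [hterm] at hmem
  exact hmem


open Classical in
lemma walk_lt (S F' : Set ℝ) (hS : S.Finite) (hF'f : F'.Finite)
    (hSsub : S ⊆ Set.Ico (0:ℝ) 1) (hF'sub : F' ⊆ Set.Ico (0:ℝ) 1)
    (hSF' : S ⊆ F') (x : ℝ) (hx : x ∈ Set.Ico (0:ℝ) 1) (hxF' : x ∉ F') :
    ∀ N : ℕ, ∀ q : ℝ, q < x →
      TZ S ∩ Set.Icc q x = ∅ →
      2 * (((TZ (S ∪ {x}) ∪ TZ F') ∩ Set.Icc q x) \ {q}).ncard
        + (if q ∈ TZ (S ∪ {x}) ∪ TZ F' then 1 else 0) ≤ N →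
      ∃ l : List (Equiv.Perm ℝ),
        (∀ σ ∈ l, σ ∈ TimedAutFixing (S ∪ {x}) ∪ TimedAutFixing F') ∧ l.prod q = x := by
  have hxA : x ∈ TZ (S ∪ {x}) := ⟨x, Or.inr rfl, 0, by simp⟩
  have hxB : x ∉ TZ F' := not_mem_TZ hF'sub hx hxF'
  have hSxfin : (S ∪ {x}).Finite := hS.union (Set.finite_singleton x)
  have hSxsub : S ∪ {x} ⊆ Set.Ico (0:ℝ) 1 :=
    Set.union_subset hSsub (Set.singleton_subset_iff.2 hx)
  have hSx : (S ∪ {x}) ∩ F' = S := by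
    ext z
    constructor
    · rintro ⟨hz1 | hz2, hzF⟩
      · exact hz1
      · rw [Set.mem_singleton_iff] at hz2
        subst hz2
        exact absurd hzF hxF'
    · exact fun hz => ⟨Or.inl hz, hSF' hz⟩
  intro N
  induction N with
  | zero =>
    intro q hlt hinv hμ
    -- measure 0 forces the terminal situation
    have hterm : TZ F' ∩ Set.Icc q x = ∅ := by
      by_contra hc
      obtain ⟨y, hyB, hyI⟩ := Set.nonempty_iff_ne_empty.2 hc
      rcases eq_or_ne y q with rfl | hyq
      · rw [if_pos (Set.mem_union_right _ hyB)] at hμ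
        omega
      · have hymem : y ∈ ((TZ (S ∪ {x}) ∪ TZ F') ∩ Set.Icc q x) \ {q} :=
          ⟨⟨Or.inr hyB, hyI⟩, hyq⟩
        have hfin : (((TZ (S ∪ {x}) ∪ TZ F') ∩ Set.Icc q x) \ {q}).Finite :=
          (TZ2_fin hSxfin hF'f q x).subset Set.diff_subset
        have hpos : 0 < (((TZ (S ∪ {x}) ∪ TZ F') ∩ Set.Icc q x) \ {q}).ncard :=
          (Set.ncard_pos hfin).2 ⟨y, hymem⟩
        omega
    obtain ⟨τ, hτmem, hτq⟩ := walk_term F' hF'f q x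
      (by rwa [min_eq_left hlt.le, max_eq_right hlt.le])
    exact ⟨[τ], fun σ hσ => by rw [List.mem_singleton.1 hσ]; exact Or.inr hτmem,
      by rwa [List.prod_singleton]⟩
  | succ N ih =>
    intro q hlt hinv hμ
    have hdisj : ∀ y ∈ Set.Icc q x, y ∈ TZ (S ∪ {x}) → y ∈ TZ F' → False := by
      intro y hy h1 h2
      have h3 : y ∈ TZ ((S ∪ {x}) ∩ F') := TZ_inter_sub hSxsub hF'sub ⟨h1, h2⟩
      rw [hSx] at h3
      have h4 : y ∈ TZ S ∩ Set.Icc q x := ⟨h3, hy⟩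
      rw [hinv] at h4
      exact h4
    by_cases hterm : TZ F' ∩ Set.Icc q x = ∅
    · obtain ⟨τ, hτmem, hτq⟩ := walk_term F' hF'f q x
        (by rwa [min_eq_left hlt.le, max_eq_right hlt.le])
      exact ⟨[τ], fun σ hσ => by rw [List.mem_singleton.1 hσ]; exact Or.inr hτmem,
        by rwa [List.prod_singleton]⟩
    -- non-terminal: there is an F'-obstacle in [q, x]
    have hfin_old : (((TZ (S ∪ {x}) ∪ TZ F') ∩ Set.Icc q x) \ {q}).Finite :=
      (TZ2_fin hSxfin hF'f q x).subset Set.diff_subset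
    have cont : ∀ q' : ℝ, q < q' → q' < x → q' ∉ TZ (S ∪ {x}) ∪ TZ F' →
        2 * (((TZ (S ∪ {x}) ∪ TZ F') ∩ Set.Icc q' x) \ {q'}).ncard ≤ N →
        ∀ τ : Equiv.Perm ℝ, τ ∈ TimedAutFixing (S ∪ {x}) ∪ TimedAutFixing F' → τ q = q' →
        ∃ l : List (Equiv.Perm ℝ),
          (∀ σ ∈ l, σ ∈ TimedAutFixing (S ∪ {x}) ∪ TimedAutFixing F') ∧ l.prod q = x := by
      intro q' h1 h2 h3 h4 τ hτmem hτq
      have hinv' : TZ S ∩ Set.Icc q' x = ∅ := by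
        apply Set.eq_empty_of_subset_empty
        rw [← hinv]
        exact Set.inter_subset_inter_right _ (Set.Icc_subset_Icc_left h1.le)
      obtain ⟨l, hl, hlq⟩ := ih q' h2 hinv' (by rw [if_neg h3]; omega)
      refine ⟨l ++ [τ], ?_, ?_⟩
      · intro σ hσ
        rcases List.mem_append.1 hσ with h | h
        · exact hl σ h
        · rw [List.mem_singleton.1 h]; exact hτmem
      · rw [List.prod_append, List.prod_singleton, Equiv.Perm.mul_apply, hτq, hlq]
    obtain ⟨b, hbB, hbI⟩ := Set.nonempty_iff_ne_empty.2 hterm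
    have hbx : b < x := lt_of_le_of_ne hbI.2 (fun h => hxB (h ▸ hbB))
    -- the first obstacle strictly right of `q`
    have hfinIoc : ((TZ (S ∪ {x}) ∪ TZ F') ∩ Set.Ioc q x).Finite :=
      (TZ2_fin hSxfin hF'f q x).subset (fun y hy => ⟨hy.1, Set.Ioc_subset_Icc_self hy.2⟩)
    have hneIoc : ((TZ (S ∪ {x}) ∪ TZ F') ∩ Set.Ioc q x).Nonempty :=
      ⟨x, Or.inl hxA, hlt, le_refl x⟩
    obtain ⟨o₁, ho₁mem, ho₁min'⟩ := Set.exists_min_image _ id hfinIoc hneIoc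
    simp only [id_eq] at ho₁min'
    have ho₁q : q < o₁ := ho₁mem.2.1
    have ho₁x : o₁ ≤ x := ho₁mem.2.2
    by_cases hqO : q ∈ TZ (S ∪ {x}) ∪ TZ F'
    · -- Case A : q is itself an obstacle; slide it off into (q, o₁)
      have hq'1 : q < (q + o₁)/2 := by linarith
      have hq'2 : (q + o₁)/2 < o₁ := by linarith
      have hq'x : (q + o₁)/2 < x := lt_of_lt_of_le hq'2 ho₁x
      have hq'O : (q + o₁)/2 ∉ TZ (S ∪ {x}) ∪ TZ F' :=
        fun hc => absurd (ho₁min' _ ⟨hc, hq'1, hq'x.le⟩) (not_le.2 hq'2)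
      have hmeas : 2 * (((TZ (S ∪ {x}) ∪ TZ F') ∩ Set.Icc ((q + o₁)/2) x) \ {(q + o₁)/2}).ncard ≤ N := by
        rw [if_pos hqO] at hμ
        have hsub : ((TZ (S ∪ {x}) ∪ TZ F') ∩ Set.Icc ((q + o₁)/2) x) \ {(q + o₁)/2} ⊆
            ((TZ (S ∪ {x}) ∪ TZ F') ∩ Set.Icc q x) \ {q} := by
          rintro y ⟨⟨hy1, hy2⟩, _⟩
          exact ⟨⟨hy1, le_trans hq'1.le hy2.1, hy2.2⟩, fun hc => by
            rw [Set.mem_singleton_iff] at hc; rw [hc] at hy2; linarith [hy2.1]⟩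
        have := Set.ncard_le_ncard hsub hfin_old
        omega
      rcases hqO with hqA | hqB
      · -- q ∈ TZ (S ∪ {x}) : move with an F'-fixing automorphism
        have hqnB : q ∉ TZ F' := fun hc => hdisj q ⟨le_refl q, hlt.le⟩ hqA hc
        obtain ⟨τ, hτmem, hτq⟩ := exists_timed_move F' hF'f q ((q + o₁)/2) (by
          intro t ht n hc
          rw [min_eq_left hq'1.le, max_eq_right hq'1.le] at hc
          rcases eq_or_lt_of_le hc.1 with he | hgt
          · exact hqnB ⟨t, ht, n, he⟩
          · exact absurd (ho₁min' _ ⟨Or.inr ⟨t, ht, n, rfl⟩, hgt, by linarith [hc.2]⟩)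
              (by linarith [hc.2]))
        exact cont _ hq'1 hq'x hq'O hmeas τ (Or.inr hτmem) hτq
      · -- q ∈ TZ F' : move with an (S ∪ {x})-fixing automorphism
        have hqnA : q ∉ TZ (S ∪ {x}) := fun hc => hdisj q ⟨le_refl q, hlt.le⟩ hc hqB
        obtain ⟨τ, hτmem, hτq⟩ := exists_timed_move (S ∪ {x}) hSxfin q ((q + o₁)/2) (by
          intro t ht n hc
          rw [min_eq_left hq'1.le, max_eq_right hq'1.le] at hc
          rcases eq_or_lt_of_le hc.1 with he | hgt
          · exact hqnA ⟨t, ht, n, he⟩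
          · exact absurd (ho₁min' _ ⟨Or.inl ⟨t, ht, n, rfl⟩, hgt, by linarith [hc.2]⟩)
              (by linarith [hc.2]))
        exact cont _ hq'1 hq'x hq'O hmeas τ (Or.inl hτmem) hτq
    · -- Case B : q is free; jump just past the first obstacle o₁
      have hbq : q < b := by
        rcases eq_or_lt_of_le hbI.1 with he | h
        · exact absurd (Or.inr (he ▸ hbB)) hqO
        · exact h
      have ho₁b : o₁ ≤ b := ho₁min' _ ⟨Or.inr hbB, hbq, hbI.2⟩
      have ho₁x' : o₁ < x := lt_of_le_of_lt ho₁b hbx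
      -- second obstacle
      have hfinIoc2 : ((TZ (S ∪ {x}) ∪ TZ F') ∩ Set.Ioc o₁ x).Finite :=
        (TZ2_fin hSxfin hF'f o₁ x).subset (fun y hy => ⟨hy.1, Set.Ioc_subset_Icc_self hy.2⟩)
      have hneIoc2 : ((TZ (S ∪ {x}) ∪ TZ F') ∩ Set.Ioc o₁ x).Nonempty :=
        ⟨x, Or.inl hxA, ho₁x', le_refl x⟩
      obtain ⟨o₂, ho₂mem, ho₂min'⟩ := Set.exists_min_image _ id hfinIoc2 hneIoc2
      simp only [id_eq] at ho₂min'
      have ho₂o₁ : o₁ < o₂ := ho₂mem.2.1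
      have ho₂x : o₂ ≤ x := ho₂mem.2.2
      have hq'1 : o₁ < (o₁ + o₂)/2 := by linarith
      have hq'2 : (o₁ + o₂)/2 < o₂ := by linarith
      have hq'q : q < (o₁ + o₂)/2 := by linarith
      have hq'x : (o₁ + o₂)/2 < x := lt_of_lt_of_le hq'2 ho₂x
      have hq'O : (o₁ + o₂)/2 ∉ TZ (S ∪ {x}) ∪ TZ F' :=
        fun hc => absurd (ho₂min' _ ⟨hc, hq'1, hq'x.le⟩) (not_le.2 hq'2)
      have hmeas : 2 * (((TZ (S ∪ {x}) ∪ TZ F') ∩ Set.Icc ((o₁ + o₂)/2) x) \ {(o₁ + o₂)/2}).ncard ≤ N := by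
        rw [if_neg hqO] at hμ
        have hssub : ((TZ (S ∪ {x}) ∪ TZ F') ∩ Set.Icc ((o₁ + o₂)/2) x) \ {(o₁ + o₂)/2} ⊂
            ((TZ (S ∪ {x}) ∪ TZ F') ∩ Set.Icc q x) \ {q} := by
          constructor
          · rintro y ⟨⟨hy1, hy2⟩, _⟩
            exact ⟨⟨hy1, le_trans hq'q.le hy2.1, hy2.2⟩, fun hc => by
              rw [Set.mem_singleton_iff] at hc; rw [hc] at hy2; linarith [hy2.1]⟩
          · intro hcsub
            have ho₁old : o₁ ∈ ((TZ (S ∪ {x}) ∪ TZ F') ∩ Set.Icc q x) \ {q} :=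
              ⟨⟨ho₁mem.1, ho₁q.le, ho₁x⟩, fun hc => by
                rw [Set.mem_singleton_iff] at hc; linarith [hc ▸ ho₁q]⟩
            have := hcsub ho₁old
            rcases this with ⟨⟨_, hI⟩, _⟩
            linarith [hI.1]
        have := Set.ncard_lt_ncard hssub hfin_old
        omega
      -- which kind of obstacle is o₁?
      have ho₁Icc : o₁ ∈ Set.Icc q x := ⟨ho₁q.le, ho₁x⟩
      rcases ho₁mem.1 with ho₁A | ho₁B
      · -- o₁ is an (S∪{x})-obstacle: cross it with an F'-fixing automorphism
        have hqnB : q ∉ TZ F' := fun hc => absurd (Or.inr hc) hqO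
        have ho₁nB : o₁ ∉ TZ F' := fun hc => hdisj o₁ ho₁Icc ho₁A hc
        obtain ⟨τ, hτmem, hτq⟩ := exists_timed_move F' hF'f q ((o₁ + o₂)/2) (by
          intro t ht n hc
          rw [min_eq_left hq'q.le, max_eq_right hq'q.le] at hc
          rcases eq_or_lt_of_le hc.1 with he | hgt
          · exact hqnB ⟨t, ht, n, he⟩
          · have hmem1 : t + (n:ℝ) ∈ (TZ (S ∪ {x}) ∪ TZ F') ∩ Set.Ioc q x :=
              ⟨Or.inr ⟨t, ht, n, rfl⟩, hgt, by linarith [hc.2]⟩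
            have h5 : o₁ ≤ t + (n:ℝ) := ho₁min' _ hmem1
            rcases eq_or_lt_of_le h5 with he2 | hgt2
            · exact ho₁nB ⟨t, ht, n, he2⟩
            · exact absurd (ho₂min' _ ⟨Or.inr ⟨t, ht, n, rfl⟩, hgt2, by linarith [hc.2]⟩)
                (by linarith [hc.2]))
        exact cont _ hq'q hq'x hq'O hmeas τ (Or.inr hτmem) hτq
      · -- o₁ is an F'-obstacle: cross it with an (S∪{x})-fixing automorphism
        have hqnA : q ∉ TZ (S ∪ {x}) := fun hc => absurd (Or.inl hc) hqO
        have ho₁nA : o₁ ∉ TZ (S ∪ {x}) := fun hc => hdisj o₁ ho₁Icc hc ho₁B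
        obtain ⟨τ, hτmem, hτq⟩ := exists_timed_move (S ∪ {x}) hSxfin q ((o₁ + o₂)/2) (by
          intro t ht n hc
          rw [min_eq_left hq'q.le, max_eq_right hq'q.le] at hc
          rcases eq_or_lt_of_le hc.1 with he | hgt
          · exact hqnA ⟨t, ht, n, he⟩
          · have hmem1 : t + (n:ℝ) ∈ (TZ (S ∪ {x}) ∪ TZ F') ∩ Set.Ioc q x :=
              ⟨Or.inl ⟨t, ht, n, rfl⟩, hgt, by linarith [hc.2]⟩
            have h5 : o₁ ≤ t + (n:ℝ) := ho₁min' _ hmem1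
            rcases eq_or_lt_of_le h5 with he2 | hgt2
            · exact ho₁nA ⟨t, ht, n, he2⟩
            · exact absurd (ho₂min' _ ⟨Or.inl ⟨t, ht, n, rfl⟩, hgt2, by linarith [hc.2]⟩)
                (by linarith [hc.2]))
        exact cont _ hq'q hq'x hq'O hmeas τ (Or.inl hτmem) hτq


open Classical in
lemma walk_gt (S F' : Set ℝ) (hS : S.Finite) (hF'f : F'.Finite)
    (hSsub : S ⊆ Set.Ico (0:ℝ) 1) (hF'sub : F' ⊆ Set.Ico (0:ℝ) 1)
    (hSF' : S ⊆ F') (x : ℝ) (hx : x ∈ Set.Ico (0:ℝ) 1) (hxF' : x ∉ F') :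
    ∀ N : ℕ, ∀ q : ℝ, x < q →
      TZ S ∩ Set.Icc x q = ∅ →
      2 * (((TZ (S ∪ {x}) ∪ TZ F') ∩ Set.Icc x q) \ {q}).ncard
        + (if q ∈ TZ (S ∪ {x}) ∪ TZ F' then 1 else 0) ≤ N →
      ∃ l : List (Equiv.Perm ℝ),
        (∀ σ ∈ l, σ ∈ TimedAutFixing (S ∪ {x}) ∪ TimedAutFixing F') ∧ l.prod q = x := by
  have hxA : x ∈ TZ (S ∪ {x}) := ⟨x, Or.inr rfl, 0, by simp⟩
  have hxB : x ∉ TZ F' := not_mem_TZ hF'sub hx hxF'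
  have hSxfin : (S ∪ {x}).Finite := hS.union (Set.finite_singleton x)
  have hSxsub : S ∪ {x} ⊆ Set.Ico (0:ℝ) 1 :=
    Set.union_subset hSsub (Set.singleton_subset_iff.2 hx)
  have hSx : (S ∪ {x}) ∩ F' = S := by
    ext z
    constructor
    · rintro ⟨hz1 | hz2, hzF⟩
      · exact hz1
      · rw [Set.mem_singleton_iff] at hz2
        subst hz2
        exact absurd hzF hxF'
    · exact fun hz => ⟨Or.inl hz, hSF' hz⟩
  intro N
  induction N with
  | zero =>
    intro q hlt hinv hμ
    have hterm : TZ F' ∩ Set.Icc x q = ∅ := by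
      by_contra hc
      obtain ⟨y, hyB, hyI⟩ := Set.nonempty_iff_ne_empty.2 hc
      rcases eq_or_ne y q with rfl | hyq
      · rw [if_pos (Set.mem_union_right _ hyB)] at hμ
        omega
      · have hymem : y ∈ ((TZ (S ∪ {x}) ∪ TZ F') ∩ Set.Icc x q) \ {q} :=
          ⟨⟨Or.inr hyB, hyI⟩, hyq⟩
        have hfin : (((TZ (S ∪ {x}) ∪ TZ F') ∩ Set.Icc x q) \ {q}).Finite :=
          (TZ2_fin hSxfin hF'f x q).subset Set.diff_subset
        have hpos : 0 < (((TZ (S ∪ {x}) ∪ TZ F') ∩ Set.Icc x q) \ {q}).ncard :=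
          (Set.ncard_pos hfin).2 ⟨y, hymem⟩
        omega
    obtain ⟨τ, hτmem, hτq⟩ := walk_term F' hF'f q x
      (by rwa [min_eq_right hlt.le, max_eq_left hlt.le])
    exact ⟨[τ], fun σ hσ => by rw [List.mem_singleton.1 hσ]; exact Or.inr hτmem,
      by rwa [List.prod_singleton]⟩
  | succ N ih =>
    intro q hlt hinv hμ
    have hdisj : ∀ y ∈ Set.Icc x q, y ∈ TZ (S ∪ {x}) → y ∈ TZ F' → False := by
      intro y hy h1 h2
      have h3 : y ∈ TZ ((S ∪ {x}) ∩ F') := TZ_inter_sub hSxsub hF'sub ⟨h1, h2⟩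
      rw [hSx] at h3
      have h4 : y ∈ TZ S ∩ Set.Icc x q := ⟨h3, hy⟩
      rw [hinv] at h4
      exact h4
    by_cases hterm : TZ F' ∩ Set.Icc x q = ∅
    · obtain ⟨τ, hτmem, hτq⟩ := walk_term F' hF'f q x
        (by rwa [min_eq_right hlt.le, max_eq_left hlt.le])
      exact ⟨[τ], fun σ hσ => by rw [List.mem_singleton.1 hσ]; exact Or.inr hτmem,
        by rwa [List.prod_singleton]⟩
    have hfin_old : (((TZ (S ∪ {x}) ∪ TZ F') ∩ Set.Icc x q) \ {q}).Finite :=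
      (TZ2_fin hSxfin hF'f x q).subset Set.diff_subset
    have cont : ∀ q' : ℝ, q' < q → x < q' → q' ∉ TZ (S ∪ {x}) ∪ TZ F' →
        2 * (((TZ (S ∪ {x}) ∪ TZ F') ∩ Set.Icc x q') \ {q'}).ncard ≤ N →
        ∀ τ : Equiv.Perm ℝ, τ ∈ TimedAutFixing (S ∪ {x}) ∪ TimedAutFixing F' → τ q = q' →
        ∃ l : List (Equiv.Perm ℝ),
          (∀ σ ∈ l, σ ∈ TimedAutFixing (S ∪ {x}) ∪ TimedAutFixing F') ∧ l.prod q = x := by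
      intro q' h1 h2 h3 h4 τ hτmem hτq
      have hinv' : TZ S ∩ Set.Icc x q' = ∅ := by
        apply Set.eq_empty_of_subset_empty
        rw [← hinv]
        exact Set.inter_subset_inter_right _ (Set.Icc_subset_Icc_right h1.le)
      obtain ⟨l, hl, hlq⟩ := ih q' h2 hinv' (by rw [if_neg h3]; omega)
      refine ⟨l ++ [τ], ?_, ?_⟩
      · intro σ hσ
        rcases List.mem_append.1 hσ with h | h
        · exact hl σ h
        · rw [List.mem_singleton.1 h]; exact hτmem
      · rw [List.prod_append, List.prod_singleton, Equiv.Perm.mul_apply, hτq, hlq]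
    obtain ⟨b, hbB, hbI⟩ := Set.nonempty_iff_ne_empty.2 hterm
    have hbx : x < b := lt_of_le_of_ne hbI.1 (fun h => hxB (h ▸ hbB))
    -- the first obstacle strictly left of `q`
    have hfinIco : ((TZ (S ∪ {x}) ∪ TZ F') ∩ Set.Ico x q).Finite :=
      (TZ2_fin hSxfin hF'f x q).subset (fun y hy => ⟨hy.1, Set.Ico_subset_Icc_self hy.2⟩)
    have hneIco : ((TZ (S ∪ {x}) ∪ TZ F') ∩ Set.Ico x q).Nonempty :=
      ⟨x, Or.inl hxA, le_refl x, hlt⟩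
    obtain ⟨o₁, ho₁mem, ho₁max'⟩ := Set.exists_max_image _ id hfinIco hneIco
    simp only [id_eq] at ho₁max'
    have ho₁q : o₁ < q := ho₁mem.2.2
    have ho₁x : x ≤ o₁ := ho₁mem.2.1
    by_cases hqO : q ∈ TZ (S ∪ {x}) ∪ TZ F'
    · -- Case A : q is itself an obstacle; slide it off into (o₁, q)
      have hq'1 : (o₁ + q)/2 < q := by linarith
      have hq'2 : o₁ < (o₁ + q)/2 := by linarith
      have hq'x : x < (o₁ + q)/2 := lt_of_le_of_lt ho₁x hq'2
      have hq'O : (o₁ + q)/2 ∉ TZ (S ∪ {x}) ∪ TZ F' :=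
        fun hc => absurd (ho₁max' _ ⟨hc, hq'x.le, hq'1⟩) (not_le.2 hq'2)
      have hmeas : 2 * (((TZ (S ∪ {x}) ∪ TZ F') ∩ Set.Icc x ((o₁ + q)/2)) \ {(o₁ + q)/2}).ncard ≤ N := by
        rw [if_pos hqO] at hμ
        have hsub : ((TZ (S ∪ {x}) ∪ TZ F') ∩ Set.Icc x ((o₁ + q)/2)) \ {(o₁ + q)/2} ⊆
            ((TZ (S ∪ {x}) ∪ TZ F') ∩ Set.Icc x q) \ {q} := by
          rintro y ⟨⟨hy1, hy2⟩, _⟩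
          exact ⟨⟨hy1, hy2.1, le_trans hy2.2 hq'1.le⟩, fun hc => by
            rw [Set.mem_singleton_iff] at hc; rw [hc] at hy2; linarith [hy2.2]⟩
        have := Set.ncard_le_ncard hsub hfin_old
        omega
      rcases hqO with hqA | hqB
      · have hqnB : q ∉ TZ F' := fun hc => hdisj q ⟨hlt.le, le_refl q⟩ hqA hc
        obtain ⟨τ, hτmem, hτq⟩ := exists_timed_move F' hF'f q ((o₁ + q)/2) (by
          intro t ht n hc
          rw [min_eq_right hq'1.le, max_eq_left hq'1.le] at hc
          rcases eq_or_lt_of_le hc.2 with he | hgt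
          · exact hqnB ⟨t, ht, n, he.symm⟩
          · exact absurd (ho₁max' _ ⟨Or.inr ⟨t, ht, n, rfl⟩, by linarith [hc.1], hgt⟩)
              (by linarith [hc.1]))
        exact cont _ hq'1 hq'x hq'O hmeas τ (Or.inr hτmem) hτq
      · have hqnA : q ∉ TZ (S ∪ {x}) := fun hc => hdisj q ⟨hlt.le, le_refl q⟩ hc hqB
        obtain ⟨τ, hτmem, hτq⟩ := exists_timed_move (S ∪ {x}) hSxfin q ((o₁ + q)/2) (by
          intro t ht n hc
          rw [min_eq_right hq'1.le, max_eq_left hq'1.le] at hc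
          rcases eq_or_lt_of_le hc.2 with he | hgt
          · exact hqnA ⟨t, ht, n, he.symm⟩
          · exact absurd (ho₁max' _ ⟨Or.inl ⟨t, ht, n, rfl⟩, by linarith [hc.1], hgt⟩)
              (by linarith [hc.1]))
        exact cont _ hq'1 hq'x hq'O hmeas τ (Or.inl hτmem) hτq
    · -- Case B : q is free; jump just past the last obstacle o₁ (leftwards)
      have hbq : b < q := by
        rcases eq_or_lt_of_le hbI.2 with he | h
        · exact absurd (Set.mem_union_right _ (he ▸ hbB)) hqO
        · exact h
      have ho₁b : b ≤ o₁ := ho₁max' _ ⟨Or.inr hbB, hbx.le, hbq⟩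
      have ho₁x' : x < o₁ := lt_of_lt_of_le hbx ho₁b
      have hfinIco2 : ((TZ (S ∪ {x}) ∪ TZ F') ∩ Set.Ico x o₁).Finite :=
        (TZ2_fin hSxfin hF'f x o₁).subset (fun y hy => ⟨hy.1, Set.Ico_subset_Icc_self hy.2⟩)
      have hneIco2 : ((TZ (S ∪ {x}) ∪ TZ F') ∩ Set.Ico x o₁).Nonempty :=
        ⟨x, Or.inl hxA, le_refl x, ho₁x'⟩
      obtain ⟨o₂, ho₂mem, ho₂max'⟩ := Set.exists_max_image _ id hfinIco2 hneIco2
      simp only [id_eq] at ho₂max'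
      have ho₂o₁ : o₂ < o₁ := ho₂mem.2.2
      have ho₂x : x ≤ o₂ := ho₂mem.2.1
      have hq'1 : (o₂ + o₁)/2 < o₁ := by linarith
      have hq'2 : o₂ < (o₂ + o₁)/2 := by linarith
      have hq'q : (o₂ + o₁)/2 < q := by linarith
      have hq'x : x < (o₂ + o₁)/2 := lt_of_le_of_lt ho₂x hq'2
      have hq'O : (o₂ + o₁)/2 ∉ TZ (S ∪ {x}) ∪ TZ F' :=
        fun hc => absurd (ho₂max' _ ⟨hc, hq'x.le, hq'1⟩) (not_le.2 hq'2)
      have hmeas : 2 * (((TZ (S ∪ {x}) ∪ TZ F') ∩ Set.Icc x ((o₂ + o₁)/2)) \ {(o₂ + o₁)/2}).ncard ≤ N := by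
        rw [if_neg hqO] at hμ
        have hssub : ((TZ (S ∪ {x}) ∪ TZ F') ∩ Set.Icc x ((o₂ + o₁)/2)) \ {(o₂ + o₁)/2} ⊂
            ((TZ (S ∪ {x}) ∪ TZ F') ∩ Set.Icc x q) \ {q} := by
          constructor
          · rintro y ⟨⟨hy1, hy2⟩, _⟩
            exact ⟨⟨hy1, hy2.1, le_trans hy2.2 hq'q.le⟩, fun hc => by
              rw [Set.mem_singleton_iff] at hc; rw [hc] at hy2; linarith [hy2.2]⟩
          · intro hcsub
            have ho₁old : o₁ ∈ ((TZ (S ∪ {x}) ∪ TZ F') ∩ Set.Icc x q) \ {q} :=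
              ⟨⟨ho₁mem.1, ho₁x'.le, ho₁q.le⟩, fun hc => by
                rw [Set.mem_singleton_iff] at hc; linarith [hc ▸ ho₁q]⟩
            have := hcsub ho₁old
            rcases this with ⟨⟨_, hI⟩, _⟩
            linarith [hI.2]
        have := Set.ncard_lt_ncard hssub hfin_old
        omega
      have ho₁Icc : o₁ ∈ Set.Icc x q := ⟨ho₁x'.le, ho₁q.le⟩
      rcases ho₁mem.1 with ho₁A | ho₁B
      · have hqnB : q ∉ TZ F' := fun hc => absurd (Set.mem_union_right _ hc) hqO
        have ho₁nB : o₁ ∉ TZ F' := fun hc => hdisj o₁ ho₁Icc ho₁A hc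
        obtain ⟨τ, hτmem, hτq⟩ := exists_timed_move F' hF'f q ((o₂ + o₁)/2) (by
          intro t ht n hc
          rw [min_eq_right hq'q.le, max_eq_left hq'q.le] at hc
          rcases eq_or_lt_of_le hc.2 with he | hgt
          · exact hqnB ⟨t, ht, n, he.symm⟩
          · have hmem1 : t + (n:ℝ) ∈ (TZ (S ∪ {x}) ∪ TZ F') ∩ Set.Ico x q :=
              ⟨Or.inr ⟨t, ht, n, rfl⟩, by linarith [hc.1], hgt⟩
            have h5 : t + (n:ℝ) ≤ o₁ := ho₁max' _ hmem1
            rcases eq_or_lt_of_le h5 with he2 | hgt2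
            · exact ho₁nB ⟨t, ht, n, he2.symm⟩
            · exact absurd (ho₂max' _ ⟨Or.inr ⟨t, ht, n, rfl⟩, by linarith [hc.1], hgt2⟩)
                (by linarith [hc.1]))
        exact cont _ hq'q hq'x hq'O hmeas τ (Or.inr hτmem) hτq
      · have hqnA : q ∉ TZ (S ∪ {x}) := fun hc => absurd (Set.mem_union_left _ hc) hqO
        have ho₁nA : o₁ ∉ TZ (S ∪ {x}) := fun hc => hdisj o₁ ho₁Icc hc ho₁B
        obtain ⟨τ, hτmem, hτq⟩ := exists_timed_move (S ∪ {x}) hSxfin q ((o₂ + o₁)/2) (by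
          intro t ht n hc
          rw [min_eq_right hq'q.le, max_eq_left hq'q.le] at hc
          rcases eq_or_lt_of_le hc.2 with he | hgt
          · exact hqnA ⟨t, ht, n, he.symm⟩
          · have hmem1 : t + (n:ℝ) ∈ (TZ (S ∪ {x}) ∪ TZ F') ∩ Set.Ico x q :=
              ⟨Or.inl ⟨t, ht, n, rfl⟩, by linarith [hc.1], hgt⟩
            have h5 : t + (n:ℝ) ≤ o₁ := ho₁max' _ hmem1
            rcases eq_or_lt_of_le h5 with he2 | hgt2
            · exact ho₁nA ⟨t, ht, n, he2.symm⟩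
            · exact absurd (ho₂max' _ ⟨Or.inl ⟨t, ht, n, rfl⟩, by linarith [hc.1], hgt2⟩)
                (by linarith [hc.1]))
        exact cont _ hq'q hq'x hq'O hmeas τ (Or.inl hτmem) hτq

open Classical in
lemma walk_all (S F' : Set ℝ) (hS : S.Finite) (hF'f : F'.Finite)
    (hSsub : S ⊆ Set.Ico (0:ℝ) 1) (hF'sub : F' ⊆ Set.Ico (0:ℝ) 1)
    (hSF' : S ⊆ F') (x : ℝ) (hx : x ∈ Set.Ico (0:ℝ) 1) (hxF' : x ∉ F')
    (q : ℝ) (hinv : TZ S ∩ Set.Icc (min q x) (max q x) = ∅) :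
    ∃ l : List (Equiv.Perm ℝ),
      (∀ σ ∈ l, σ ∈ TimedAutFixing (S ∪ {x}) ∪ TimedAutFixing F') ∧ l.prod q = x := by
  rcases lt_trichotomy q x with h | h | h
  · rw [min_eq_left h.le, max_eq_right h.le] at hinv
    exact walk_lt S F' hS hF'f hSsub hF'sub hSF' x hx hxF' _ q h hinv (le_refl _)
  · exact ⟨[], by simp, by rw [List.prod_nil, h]; simp⟩
  · rw [min_eq_right h.le, max_eq_left h.le] at hinv
    exact walk_gt S F' hS hF'f hSsub hF'sub hSF' x hx hxF' _ q h hinv (le_refl _)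


lemma timed_mul {a b : Equiv.Perm ℝ} (ha : IsTimedAutPerm a) (hb : IsTimedAutPerm b) :
    IsTimedAutPerm (a * b) := by
  constructor
  · intro s t h
    have := hb.1 h
    exact ha.1 this
  · intro t
    rw [Equiv.Perm.mul_apply, Equiv.Perm.mul_apply, hb.2, ha.2]

lemma timed_inv {a : Equiv.Perm ℝ} (ha : IsTimedAutPerm a) : IsTimedAutPerm a⁻¹ := by
  constructor
  · intro s t h
    by_contra hc
    push_neg at hc
    have h2 : a (a⁻¹ t) ≤ a (a⁻¹ s) := ha.1.monotone hc
    rw [Equiv.Perm.coe_inv, Equiv.apply_symm_apply, Equiv.apply_symm_apply] at h2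
    linarith
  · intro t
    apply ha.1.injective
    rw [Equiv.Perm.coe_inv, Equiv.apply_symm_apply, ha.2, Equiv.apply_symm_apply]

lemma timed_prod (l : List (Equiv.Perm ℝ)) (h : ∀ σ ∈ l, IsTimedAutPerm σ) :
    IsTimedAutPerm l.prod := by
  induction l with
  | nil =>
    rw [List.prod_nil]
    exact (one_mem_timedAutFixing ∅).1
  | cons a t iht =>
    rw [List.prod_cons]
    exact timed_mul (h a (List.mem_cons_self)) (iht (fun σ hσ => h σ (List.mem_cons_of_mem a hσ)))

lemma prod_fix_point (l : List (Equiv.Perm ℝ)) (s : ℝ) (h : ∀ σ ∈ l, σ s = s) :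
    l.prod s = s := by
  induction l with
  | nil => simp
  | cons a t iht =>
    rw [List.prod_cons, Equiv.Perm.mul_apply,
      iht (fun σ hσ => h σ (List.mem_cons_of_mem a hσ)), h a (List.mem_cons_self)]

lemma timed_int {π : Equiv.Perm ℝ} (hπ : IsTimedAutPerm π) (t : ℝ) (n : ℤ) :
    π (t + n) = π t + n := by
  induction n using Int.induction_on with
  | zero => simp
  | succ k ihk =>
    have h1 : t + ((k : ℤ) + 1 : ℤ) = (t + (k : ℤ)) + 1 := by push_cast; ring
    rw [h1, hπ.2, ihk]
    push_cast; ring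
  | pred k ihk =>
    have h1 : t + (-(k : ℤ) - 1 : ℤ) + 1 = t + (-(k : ℤ) : ℤ) := by push_cast; ring
    have h2 := hπ.2 (t + (-(k : ℤ) - 1 : ℤ))
    rw [h1, ihk] at h2
    have h3 : π (t + (-(k : ℤ) - 1 : ℤ)) = π t + (-(k : ℤ) : ℤ) - 1 := by linarith
    rw [h3]; push_cast; ring

theorem timedAutFixing_inter_subset_closure'
    (F : Set ℝ) (hF : F.Finite) (hFsub : F ⊆ Set.Ico (0 : ℝ) 1) :
    ∀ n : ℕ, ∀ F' : Set ℝ, F'.Finite → F' ⊆ Set.Ico (0 : ℝ) 1 → (F \ F').ncard ≤ n →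
      ∀ π : Equiv.Perm ℝ, π ∈ TimedAutFixing (F ∩ F') →
      ∃ l : List (Equiv.Perm ℝ),
        (∀ σ ∈ l, σ ∈ TimedAutFixing F ∪ TimedAutFixing F') ∧ π = l.prod := by
  intro n
  induction n with
  | zero =>
    intro F' hF'f hF'sub hcard π hπ
    have hFF' : F \ F' = ∅ := by
      rw [← Set.ncard_eq_zero (hF.subset Set.diff_subset)]
      omega
    have hsub : F ⊆ F' := Set.diff_eq_empty.1 hFF'
    have hFcap : F ∩ F' = F := Set.inter_eq_left.2 hsub
    exact ⟨[π], fun σ hσ => by rw [List.mem_singleton.1 hσ]; exact Or.inl (hFcap ▸ hπ),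
      by rw [List.prod_singleton]⟩
  | succ n ih =>
    intro F' hF'f hF'sub hcard π hπ
    by_cases hFF' : F ⊆ F'
    · have hFcap : F ∩ F' = F := Set.inter_eq_left.2 hFF'
      exact ⟨[π], fun σ hσ => by rw [List.mem_singleton.1 hσ]; exact Or.inl (hFcap ▸ hπ),
        by rw [List.prod_singleton]⟩
    obtain ⟨x, hxF, hxF'⟩ := Set.not_subset.1 hFF'
    have hx : x ∈ Set.Ico (0:ℝ) 1 := hFsub hxF
    have hF''f : (insert x F').Finite := hF'f.insert x
    have hF''sub : insert x F' ⊆ Set.Ico (0:ℝ) 1 := Set.insert_subset hx hF'sub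
    have hcard'' : (F \ insert x F').ncard ≤ n := by
      have h1 : F \ insert x F' = (F \ F') \ {x} := by
        ext z
        simp only [Set.mem_diff, Set.mem_insert_iff, Set.mem_singleton_iff]
        tauto
      have h2 : ((F \ F') \ {x}).ncard < (F \ F').ncard :=
        Set.ncard_diff_singleton_lt_of_mem ⟨hxF, hxF'⟩ (hF.subset Set.diff_subset)
      rw [h1]; omega
    have hFinter : F ∩ insert x F' = insert x (F ∩ F') := by
      ext z
      simp only [Set.mem_inter_iff, Set.mem_insert_iff]
      constructor
      · rintro ⟨hzF, rfl | hzF'⟩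
        · exact Or.inl rfl
        · exact Or.inr ⟨hzF, hzF'⟩
      · rintro (rfl | ⟨hzF, hzF'⟩)
        · exact ⟨hxF, Or.inl rfl⟩
        · exact ⟨hzF, Or.inr hzF'⟩
    have hupg : ∀ σ : Equiv.Perm ℝ,
        σ ∈ TimedAutFixing F ∪ TimedAutFixing (insert x F') →
        σ ∈ TimedAutFixing F ∪ TimedAutFixing F' := by
      rintro σ (h | h)
      · exact Or.inl h
      · exact Or.inr ⟨h.1, fun t ht => h.2 t (Set.mem_insert_of_mem x ht)⟩
    by_cases hq : π.symm x = x
    · have hπx : π x = x := by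
        conv_lhs => rw [← hq]
        exact Equiv.apply_symm_apply π x
      have hπ'' : π ∈ TimedAutFixing (F ∩ insert x F') := by
        refine ⟨hπ.1, ?_⟩
        rw [hFinter]
        rintro t (rfl | ht)
        · exact hπx
        · exact hπ.2 t ht
      obtain ⟨l, hl, hlp⟩ := ih (insert x F') hF''f hF''sub hcard'' π hπ''
      exact ⟨l, fun σ hσ => hupg σ (hl σ hσ), hlp⟩
    · have hπq : π (π.symm x) = x := Equiv.apply_symm_apply π x
      have hxB : x ∉ TZ F' := not_mem_TZ hF'sub hx hxF'
      have hinv : TZ (F ∩ F') ∩ Set.Icc (min (π.symm x) x) (max (π.symm x) x) = ∅ := by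
        apply Set.eq_empty_iff_forall_notMem.2
        rintro y ⟨⟨s, hs, k, rfl⟩, hyI⟩
        have hfix : π (s + (k:ℝ)) = s + (k:ℝ) := by
          rw [timed_int hπ.1 s k, hπ.2 s hs]
        have hyx : s + (k:ℝ) = x := by
          rcases le_total (π.symm x) x with h1 | h1
          · rw [min_eq_left h1, max_eq_right h1] at hyI
            have h2 : π (π.symm x) ≤ π (s + (k:ℝ)) := hπ.1.1.monotone hyI.1
            rw [hπq, hfix] at h2
            linarith [hyI.2]
          · rw [min_eq_right h1, max_eq_left h1] at hyI
            have h2 : π (s + (k:ℝ)) ≤ π (π.symm x) := hπ.1.1.monotone hyI.2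
            rw [hπq, hfix] at h2
            linarith [hyI.1]
        exact hxB (hyx ▸ ⟨s, Set.inter_subset_right hs, k, rfl⟩)
      obtain ⟨w, hw, hwq⟩ := walk_all (F ∩ F') F' (hF.inter_of_left F') hF'f
        (fun z hz => hFsub hz.1) hF'sub Set.inter_subset_right x hx hxF' (π.symm x) hinv
      -- every element of `w` is a timed automorphism fixing F ∩ F'
      have hwt : ∀ σ ∈ w, IsTimedAutPerm σ := by
        intro σ hσ
        rcases hw σ hσ with h | h
        · exact h.1
        · exact h.1
      have hwfix : ∀ s ∈ F ∩ F', w.prod s = s := by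
        intro s hs
        apply prod_fix_point
        intro σ hσ
        rcases hw σ hσ with h | h
        · exact h.2 s (Set.mem_union_left _ hs)
        · exact h.2 s (Set.inter_subset_right hs)
      have hwinvq : (w.prod)⁻¹ x = π.symm x := by
        have h0 : (w.prod)⁻¹ (w.prod (π.symm x)) = π.symm x := Equiv.symm_apply_apply w.prod (π.symm x)
        rwa [hwq] at h0
      have hσmem : (π * (w.prod)⁻¹) ∈ TimedAutFixing (F ∩ insert x F') := by
        refine ⟨timed_mul hπ.1 (timed_inv (timed_prod w hwt)), ?_⟩
        rw [hFinter]
        rintro t (rfl | ht)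
        · rw [Equiv.Perm.mul_apply, hwinvq, hπq]
        · have h1 : (w.prod)⁻¹ t = t := by
            conv_lhs => rw [← hwfix t ht]
            rw [Equiv.Perm.coe_inv, Equiv.symm_apply_apply]
          rw [Equiv.Perm.mul_apply, h1, hπ.2 t ht]
      obtain ⟨u, hu, hup⟩ := ih (insert x F') hF''f hF''sub hcard'' (π * (w.prod)⁻¹) hσmem
      -- upgrade w into a list over Π_F ∪ Π_{F'}
      have hwupg : ∀ wl : List (Equiv.Perm ℝ),
          (∀ σ ∈ wl, σ ∈ TimedAutFixing ((F ∩ F') ∪ {x}) ∪ TimedAutFixing F') →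
          ∃ w' : List (Equiv.Perm ℝ),
            (∀ σ ∈ w', σ ∈ TimedAutFixing F ∪ TimedAutFixing F') ∧ w'.prod = wl.prod := by
        intro wl
        induction wl with
        | nil => exact fun _ => ⟨[], by simp, rfl⟩
        | cons a t iht =>
          intro hmem
          obtain ⟨w', hw', hw'p⟩ := iht (fun σ hσ => hmem σ (List.mem_cons_of_mem a hσ))
          rcases hmem a (List.mem_cons_self) with ha | ha
          · have ha' : a ∈ TimedAutFixing (F ∩ insert x F') := by
              rw [hFinter, ← Set.union_singleton]
              exact ha
            obtain ⟨la, hla, hlap⟩ := ih (insert x F') hF''f hF''sub hcard'' a ha'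
            refine ⟨la ++ w', ?_, ?_⟩
            · intro σ hσ
              rcases List.mem_append.1 hσ with h | h
              · exact hupg σ (hla σ h)
              · exact hw' σ h
            · rw [List.prod_append, hw'p, ← hlap, List.prod_cons]
          · exact ⟨a :: w', by
              intro σ hσ
              rcases List.mem_cons.1 hσ with rfl | h
              · exact Or.inr ha
              · exact hw' σ h,
              by rw [List.prod_cons, List.prod_cons, hw'p]⟩
      obtain ⟨w', hw', hw'p⟩ := hwupg w (by
        intro σ hσ
        have := hw σ hσ
        rwa [Set.union_singleton] at this ⊢)
      refine ⟨u ++ w', ?_, ?_⟩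
      · intro σ hσ
        rcases List.mem_append.1 hσ with h | h
        · exact hupg σ (hu σ h)
        · exact hw' σ h
      · rw [List.prod_append, ← hup, hw'p, inv_mul_cancel_right]


/-- for finite `F, F' ⊆ [0,1)`, every `(F ∩ F')`-timed
automorphism `π` decomposes into a composition `πₙ ∘ ⋯ ∘ π₁` where each `πᵢ`
is either an `F`- or an `F'`-timed automorphism; i.e. `Π_{F ∩ F'}` is
contained in the subgroup generated by `Π_F ∪ Π_{F'}`. -/
theorem timedAutFixing_inter_subset_closure
    (F F' : Set ℝ) (hF : F.Finite) (hF' : F'.Finite)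
    (hFsub : F ⊆ Set.Ico (0 : ℝ) 1) (hF'sub : F' ⊆ Set.Ico (0 : ℝ) 1)
    (π : Equiv.Perm ℝ) (hπ : π ∈ TimedAutFixing (F ∩ F')) :
    ∃ l : List (Equiv.Perm ℝ),
      (∀ σ ∈ l, σ ∈ TimedAutFixing F ∪ TimedAutFixing F') ∧ π = l.prod := by
  exact timedAutFixing_inter_subset_closure' F hF hFsub (F \ F').ncard F' hF' hF'sub
    (le_refl _) π hπ
end

section
/- Let F, F' ⊆ [0,1) be finite sets such that F ∖ F' = {t} and F' ∖ F = {t'}. Then for every (F ∩ F')-timed automorphism π there exist timed automorphisms π₁, …, πₙ, each of which is either an F-timed automorphism or an F'-timed automorphism, such that π(t) = (πₙ ∘ ⋯ ∘ π₁)(t). -/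
open Filter

noncomputable def psi (T : Finset ℝ) (u : ℝ) : ℝ := ∏ s ∈ T, Real.sin (Real.pi * (u - s)) ^ 2

lemma psi_contDiff (T : Finset ℝ) : ContDiff ℝ 1 (psi T) := by
  apply contDiff_prod
  intro i _
  exact ((Real.contDiff_sin.comp ((contDiff_id.sub contDiff_const).const_smul Real.pi)).pow 2)

lemma psi_nonneg (T : Finset ℝ) (u : ℝ) : 0 ≤ psi T u :=
  Finset.prod_nonneg fun i _ => sq_nonneg _

lemma psi_le_one (T : Finset ℝ) (u : ℝ) : psi T u ≤ 1 :=
  Finset.prod_le_one (fun i _ => sq_nonneg _) (fun i _ => Real.sin_sq_le_one _)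

lemma psi_periodic (T : Finset ℝ) : Function.Periodic (psi T) 1 := by
  intro u
  unfold psi
  congr 1
  ext s
  rw [show Real.pi * (u + 1 - s) = Real.pi * (u - s) + Real.pi by ring, Real.sin_add_pi]
  ring

lemma psi_eq_zero (T : Finset ℝ) {s : ℝ} (hs : s ∈ T) : psi T s = 0 := by
  apply Finset.prod_eq_zero hs
  simp [Real.sin_eq_zero_iff]

lemma psi_pos (T : Finset ℝ) {u : ℝ} (h : ∀ s ∈ T, ∀ k : ℤ, u ≠ s + k) : 0 < psi T u := by
  apply Finset.prod_pos
  intro s hs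
  apply pow_two_pos_of_ne_zero
  intro hzero
  rw [Real.sin_eq_zero_iff] at hzero
  obtain ⟨n, hn⟩ := hzero
  exact h s hs n (by have := hn; nlinarith [Real.pi_pos])

lemma psi_deriv_periodic (T : Finset ℝ) : Function.Periodic (deriv (psi T)) 1 := by
  intro u
  have : (fun x => psi T (x + 1)) = psi T := funext fun x => psi_periodic T x
  calc deriv (psi T) (u + 1) = deriv (fun x => psi T (x + 1)) u := (deriv_comp_add_const _ _ _).symm
  _ = deriv (psi T) u := by rw [this]

lemma psi_deriv_bound (T : Finset ℝ) : ∃ M : ℝ, 0 < M ∧ ∀ u : ℝ, |deriv (psi T) u| ≤ M := by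
  obtain ⟨C, hC⟩ := (isCompact_Icc (a := (0:ℝ)) (b := 1)).exists_bound_of_continuousOn
    ((psi_contDiff T).continuous_deriv le_rfl).continuousOn
  refine ⟨max C 1, lt_of_lt_of_le one_pos (le_max_right _ _), fun u => ?_⟩
  have h1 : deriv (psi T) u = deriv (psi T) (Int.fract u) := by
    have := (psi_deriv_periodic T).sub_int_mul_eq (x := u) (n := ⌊u⌋)
    rw [mul_one] at this
    rw [← this]; rfl
  rw [h1]
  exact le_trans (hC _ ⟨(Int.fract_nonneg u), (Int.fract_lt_one u).le⟩) (le_max_left _ _)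

lemma exists_perm_step (T : Finset ℝ) (M : ℝ) (hMpos : 0 < M)
    (hM : ∀ w, |deriv (psi T) w| ≤ M) (u v : ℝ)
    (h : |v - u| * M < psi T u) :
    ∃ σ : Equiv.Perm ℝ, σ ∈ TimedAutFixing ↑T ∧ σ u = v := by
  have hpos : 0 < psi T u := lt_of_le_of_lt (mul_nonneg (abs_nonneg _) hMpos.le) h
  set c := (v - u) / psi T u with hc
  have hcM : |c| * M < 1 := by
    rw [hc, abs_div, abs_of_pos hpos, div_mul_eq_mul_div]
    rw [div_lt_one hpos]
    exact h
  set f := fun w : ℝ => w + c * psi T w with hf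
  have hdiff : Differentiable ℝ (psi T) := (psi_contDiff T).differentiable one_ne_zero
  have hder : ∀ w, HasDerivAt f (1 + c * deriv (psi T) w) w := fun w =>
    (hasDerivAt_id w).add ((hdiff w).hasDerivAt.const_mul c)
  have hmono : StrictMono f := by
    apply strictMono_of_deriv_pos
    intro w
    rw [(hder w).deriv]
    have : |c * deriv (psi T) w| < 1 := by
      rw [abs_mul]
      calc |c| * |deriv (psi T) w| ≤ |c| * M := by
            exact mul_le_mul_of_nonneg_left (hM w) (abs_nonneg _)
        _ < 1 := hcM
    linarith [neg_abs_le (c * deriv (psi T) w)]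
  have hbnd : ∀ w, |c * psi T w| ≤ |c| := fun w => by
    rw [abs_mul]
    calc |c| * |psi T w| ≤ |c| * 1 := by
          apply mul_le_mul_of_nonneg_left _ (abs_nonneg _)
          rw [abs_of_nonneg (psi_nonneg T w)]; exact psi_le_one T w
      _ = |c| := mul_one _
  have hcont : Continuous f := continuous_id.add (continuous_const.mul (psi_contDiff T).continuous)
  have hsurj : Function.Surjective f := by
    apply hcont.surjective
    · exact tendsto_atTop_mono
        (f := fun w : ℝ => w + -|c|) (g := f)
        (fun w => by have := hbnd w; have := neg_abs_le (c * psi T w); simp only [hf]; linarith)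
        (tendsto_atTop_add_const_right _ _ tendsto_id)
    · exact tendsto_atBot_mono
        (f := fun w : ℝ => w + |c|) (g := f)
        (fun w => by have := hbnd w; have := le_abs_self (c * psi T w); simp only [hf]; linarith)
        (tendsto_atBot_add_const_right _ _ tendsto_id)
  refine ⟨Equiv.ofBijective f ⟨hmono.injective, hsurj⟩, ⟨⟨?_, ?_⟩, ?_⟩, ?_⟩
  · show StrictMono f
    exact hmono
  · intro w
    show f (w + 1) = f w + 1
    simp only [hf, psi_periodic T w]
    ring
  · intro s hs
    show f s = s
    simp only [hf, psi_eq_zero T (by exact_mod_cast hs), mul_zero, add_zero]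
  · show f u = v
    simp only [hf, hc]
    field_simp
    ring

lemma walk (T T' : Finset ℝ) (x y : ℝ)
    (h : ∀ u ∈ Set.uIcc x y,
      (∀ s ∈ T, ∀ k : ℤ, u ≠ s + k) ∨ (∀ s ∈ T', ∀ k : ℤ, u ≠ s + k)) :
    ∃ l : List (Equiv.Perm ℝ),
      (∀ σ ∈ l, σ ∈ TimedAutFixing ↑T ∪ TimedAutFixing ↑T') ∧ l.prod x = y := by
  obtain ⟨M₁, hM₁pos, hM₁⟩ := psi_deriv_bound T
  obtain ⟨M₂, hM₂pos, hM₂⟩ := psi_deriv_bound T'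
  set M := max M₁ M₂ with hMdef
  have hMpos : 0 < M := lt_of_lt_of_le hM₁pos (le_max_left _ _)
  have hMT : ∀ w, |deriv (psi T) w| ≤ M := fun w => (hM₁ w).trans (le_max_left _ _)
  have hMT' : ∀ w, |deriv (psi T') w| ≤ M := fun w => (hM₂ w).trans (le_max_right _ _)
  -- minimum of psi T + psi T' on uIcc x y
  have hcompact : IsCompact (Set.uIcc x y) := isCompact_uIcc
  have hcont : ContinuousOn (fun u => psi T u + psi T' u) (Set.uIcc x y) :=
    ((psi_contDiff T).continuous.add (psi_contDiff T').continuous).continuousOn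
  obtain ⟨z, hz, hzmin⟩ := hcompact.exists_isMinOn ⟨x, Set.left_mem_uIcc⟩ hcont
  set m := psi T z + psi T' z with hmdef
  have hmpos : 0 < m := by
    rcases h z hz with hz1 | hz1
    · have := psi_pos T hz1; have := psi_nonneg T' z; linarith
    · have := psi_pos T' hz1; have := psi_nonneg T z; linarith
  have hmin : ∀ u ∈ Set.uIcc x y, m ≤ psi T u + psi T' u := fun u hu => hzmin hu
  obtain ⟨N, hN⟩ := exists_nat_gt (2 * |y - x| * M / m)
  have hNpos : 0 < (N : ℝ) := by
    refine lt_of_le_of_lt ?_ hN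
    positivity
  set u : ℕ → ℝ := fun i => x + (y - x) * i / N with hu
  have humem : ∀ i : ℕ, i ≤ N → u i ∈ Set.uIcc x y := by
    intro i hi
    have hi' : (i : ℝ) ≤ (N : ℝ) := by exact_mod_cast hi
    have hi0 : (0 : ℝ) ≤ (i : ℝ) := Nat.cast_nonneg i
    have hfr : (i : ℝ) / N ≤ 1 := (div_le_one hNpos).mpr hi'
    have hfr0 : 0 ≤ (i : ℝ) / N := div_nonneg hi0 hNpos.le
    have hueq : u i = x + (y - x) * ((i : ℝ) / N) := by
      simp only [hu]; ring
    rcases le_total x y with hxy | hxy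
    · rw [Set.uIcc_of_le hxy, Set.mem_Icc, hueq]
      have h1 : 0 ≤ (y - x) * ((i : ℝ) / N) := mul_nonneg (by linarith) hfr0
      have h2 : 0 ≤ (y - x) * (1 - (i : ℝ) / N) := mul_nonneg (by linarith) (by linarith)
      constructor <;> nlinarith
    · rw [Set.uIcc_of_ge hxy, Set.mem_Icc, hueq]
      have h1 : 0 ≤ (x - y) * ((i : ℝ) / N) := mul_nonneg (by linarith) hfr0
      have h2 : 0 ≤ (x - y) * (1 - (i : ℝ) / N) := mul_nonneg (by linarith) (by linarith)
      constructor <;> nlinarith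
  have hstepsize : ∀ i : ℕ, |u (i + 1) - u i| * M < m / 2 := by
    intro i
    have : u (i + 1) - u i = (y - x) / N := by
      simp only [hu, Nat.cast_add, Nat.cast_one]
      field_simp
      ring
    rw [this, abs_div, abs_of_pos hNpos]
    rw [div_mul_eq_mul_div, div_lt_iff₀ hNpos]
    rw [div_lt_iff₀ hmpos] at hN
    have : |y - x| = |x - y| := abs_sub_comm y x
    calc |y - x| * M = |y - x| * M := rfl
      _ < m / 2 * N := by nlinarith [abs_nonneg (y - x)]
  -- induction
  have key : ∀ i : ℕ, i ≤ N → ∃ l : List (Equiv.Perm ℝ),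
      (∀ σ ∈ l, σ ∈ TimedAutFixing ↑T ∪ TimedAutFixing ↑T') ∧ l.prod x = u i := by
    intro i
    induction i with
    | zero => intro _; exact ⟨[], by simp, by simp [hu]⟩
    | succ n ih =>
      intro hn1
      obtain ⟨l, hl, hlx⟩ := ih (Nat.le_of_succ_le hn1)
      have hmem : u n ∈ Set.uIcc x y := humem n (Nat.le_of_succ_le hn1)
      have hsum : m ≤ psi T (u n) + psi T' (u n) := hmin _ hmem
      have hcase : m / 2 ≤ psi T (u n) ∨ m / 2 ≤ psi T' (u n) := by
        by_contra hc
        push_neg at hc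
        linarith [hc.1, hc.2]
      rcases hcase with hph | hph
      · obtain ⟨σ, hσ, hσu⟩ := exists_perm_step T M hMpos hMT (u n) (u (n + 1))
          (lt_of_lt_of_le (hstepsize n) hph)
        refine ⟨σ :: l, ?_, ?_⟩
        · intro τ hτ
          rcases List.mem_cons.mp hτ with rfl | hτ
          · exact Or.inl hσ
          · exact hl τ hτ
        · rw [List.prod_cons]
          simp only [Equiv.Perm.mul_apply, hlx, hσu]
      · obtain ⟨σ, hσ, hσu⟩ := exists_perm_step T' M hMpos hMT' (u n) (u (n + 1))
          (lt_of_lt_of_le (hstepsize n) hph)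
        refine ⟨σ :: l, ?_, ?_⟩
        · intro τ hτ
          rcases List.mem_cons.mp hτ with rfl | hτ
          · exact Or.inr hσ
          · exact hl τ hτ
        · rw [List.prod_cons]
          simp only [Equiv.Perm.mul_apply, hlx, hσu]
  obtain ⟨l, hl, hlx⟩ := key N le_rfl
  refine ⟨l, hl, ?_⟩
  rw [hlx]
  simp only [hu]
  field_simp
  ring

lemma timed_int_s4 (g : Equiv.Perm ℝ) (hg : ∀ t : ℝ, g (t + 1) = g t + 1)
    (t : ℝ) (k : ℤ) : g (t + k) = g t + k := by
  induction k using Int.induction_on with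
  | zero => simp
  | succ n ih =>
    push_cast at ih ⊢
    rw [show t + ((n : ℝ) + 1) = (t + n) + 1 by ring, hg, ih]
    ring
  | pred n ih =>
    push_cast at ih ⊢
    have h2 := hg (t - (n + 1))
    rw [show t - ((n : ℝ) + 1) + 1 = t + -(n : ℝ) by ring] at h2
    rw [show t + (-(n : ℝ) - 1) = t - ((n : ℝ) + 1) by ring]
    rw [ih] at h2
    linarith

/-- let `F, F' ⊆ [0,1)` be finite with `F \ F' = {t}` and
`F' \ F = {t'}`. Then for every `(F ∩ F')`-timed automorphism `π` there are
timed automorphisms `π₁, …, πₙ`, each an `F`- or an `F'`-timed automorphism,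
with `π t = (πₙ ∘ ⋯ ∘ π₁) t`. -/
theorem orbit_point_reachable_by_composition
    (F F' : Set ℝ) (hF : F.Finite) (hF' : F'.Finite)
    (hFsub : F ⊆ Set.Ico (0 : ℝ) 1) (hF'sub : F' ⊆ Set.Ico (0 : ℝ) 1)
    (t t' : ℝ) (hdiff : F \ F' = {t}) (hdiff' : F' \ F = {t'})
    (π : Equiv.Perm ℝ) (hπ : π ∈ TimedAutFixing (F ∩ F')) :
    ∃ l : List (Equiv.Perm ℝ),
      (∀ σ ∈ l, σ ∈ TimedAutFixing F ∪ TimedAutFixing F') ∧ π t = l.prod t := by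
  obtain ⟨⟨hmono, hper⟩, hfix⟩ := hπ
  have htF : t ∈ F \ F' := hdiff ▸ rfl
  have htF1 : t ∈ F := htF.1
  have htF2 : t ∉ F' := htF.2
  set y := π t with hy
  have hcond : ∀ u ∈ Set.uIcc t y,
      (∀ s ∈ hF.toFinset, ∀ k : ℤ, u ≠ s + k) ∨
      (∀ s ∈ hF'.toFinset, ∀ k : ℤ, u ≠ s + k) := by
    intro u hu
    by_contra hc
    push_neg at hc
    obtain ⟨⟨s, hs, k, hsk⟩, ⟨s', hs', k', hsk'⟩⟩ := hc
    rw [Set.Finite.mem_toFinset] at hs hs'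
    -- s = s', k = k'
    have hs01 := hFsub hs
    have hs'01 := hF'sub hs'
    have hkk' : ((k - k' : ℤ) : ℝ) = s' - s := by
      push_cast
      rw [hsk] at hsk'
      linarith
    have hz : (k - k' : ℤ) = 0 := by
      have h1 : ((k - k' : ℤ) : ℝ) < 1 := by
        rw [hkk']
        rcases hs01 with ⟨ha, hb⟩; rcases hs'01 with ⟨ha', hb'⟩
        linarith
      have h2 : (-1 : ℝ) < ((k - k' : ℤ) : ℝ) := by
        rw [hkk']
        rcases hs01 with ⟨ha, hb⟩; rcases hs'01 with ⟨ha', hb'⟩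
        linarith
      have h1' : (k - k' : ℤ) < 1 := by exact_mod_cast h1
      have h2' : (-1 : ℤ) < (k - k' : ℤ) := by exact_mod_cast h2
      omega
    have hss' : s = s' := by
      have : ((k - k' : ℤ) : ℝ) = 0 := by exact_mod_cast hz
      rw [this] at hkk'; linarith
    have hkk : k = k' := by omega
    -- so u ∈ (F ∩ F') + ℤ, hence π u = u
    have hsF : s ∈ F ∩ F' := ⟨hs, hss' ▸ hs'⟩
    have hfixu : π u = u := by
      rw [hsk]
      rw [timed_int_s4 π hper s k, hfix s hsF]
    -- t ≠ u
    have htu : t ≠ u := by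
      intro he
      rw [hsk] at he
      have ht01 := hFsub htF1
      have hk0 : ((k : ℝ)) = t - s := by linarith [he]
      have : (-1 : ℝ) < (k : ℝ) := by
        rcases hs01 with ⟨ha, hb⟩; rcases ht01 with ⟨ha', hb'⟩; linarith
      have h1 : ((k : ℝ)) < 1 := by
        rcases hs01 with ⟨ha, hb⟩; rcases ht01 with ⟨ha', hb'⟩; linarith
      have hk1 : k = 0 := by
        have : k < 1 := by exact_mod_cast h1
        have : (-1 : ℤ) < k := by exact_mod_cast ‹(-1 : ℝ) < (k : ℝ)›
        omega
      rw [hk1] at he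
      simp at he
      exact htF2 (he ▸ hsF.2)
    have hyu : y ≠ u := by
      intro he
      have : π u = π t := by rw [hfixu, ← he, hy]
      exact htu (π.injective this).symm
    -- order contradiction
    rcases Set.mem_uIcc.mp hu with ⟨h1, h2⟩ | ⟨h1, h2⟩
    · have h1' : t < u := lt_of_le_of_ne h1 htu
      have := hmono h1'
      rw [hfixu] at this
      exact absurd (lt_of_le_of_lt h2 this) (lt_irrefl _)
    · have h2' : u < t := lt_of_le_of_ne h2 (Ne.symm htu)
      have := hmono h2'
      rw [hfixu] at this
      exact absurd (lt_of_lt_of_le this h1) (lt_irrefl _)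
  obtain ⟨l, hl, hlx⟩ := walk hF.toFinset hF'.toFinset t y hcond
  rw [hF.coe_toFinset, hF'.coe_toFinset] at hl
  exact ⟨l, hl, hlx.symm⟩
end
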